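/- arXiv:1612.05057 — 3 statements merged into one kernel-verified Lean document; each statement's English description precedes it below -/
import Mathlib

section
/- Assume the set of saddle points of the Lagrangian l is nonempty, M₁ᵏ − (L/2)·Id ∈ S₊(H), M₁ᵏ ⪰ M₁^{k+1}, M₂ᵏ ∈ S₊(G), M₂ᵏ ⪰ M₂^{k+1} for all k ≥ 0, and let (xᵏ, zᵏ, yᵏ)_{k≥0} be the sequence generated by the variable-metric ADMM algorithm. Then Σ_{k≥0} ‖zᵏ − Ax^{k+1}‖² < +∞, Σ_{k≥0} ‖xᵏ − x^{k+1}‖²_{M₁ᵏ − (L/2)Id} < +∞, and Σ_{k≥0} ‖zᵏ − z^{k+1}‖²_{M₂ᵏ} < +∞. -/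
open scoped InnerProductSpace
open Filter

noncomputable section

section OpDefs

variable {E F : Type*} [NormedAddCommGroup E] [InnerProductSpace ℝ E]
  [NormedAddCommGroup F] [InnerProductSpace ℝ F]

/-- `U ∈ S₊(E)`: continuous linear, self-adjoint and positive semidefinite. -/
def IsSplusOp (U : E →L[ℝ] E) : Prop :=
  (∀ x y : E, ⟪U x, y⟫_ℝ = ⟪x, U y⟫_ℝ) ∧ ∀ x : E, 0 ≤ ⟪x, U x⟫_ℝ

/-- The squared seminorm `‖x‖²_U := ⟪x, U x⟫`. -/
def opSq (U : E →L[ℝ] E) (x : E) : ℝ := ⟪x, U x⟫_ℝ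

/-- Loewner order `U ⪰ V`. -/
def opLE (U V : E →L[ℝ] E) : Prop := ∀ x : E, ⟪x, V x⟫_ℝ ≤ ⟪x, U x⟫_ℝ

/-- `U ∈ P_α(E)`, i.e. `U ∈ S₊(E)` and `U ⪰ α·Id`. -/
def IsPalphaOp (α : ℝ) (U : E →L[ℝ] E) : Prop :=
  IsSplusOp U ∧ ∀ x : E, α * ‖x‖ ^ 2 ≤ ⟪x, U x⟫_ℝ

/-- Properness of an extended-real-valued function. -/
def ERealProper (f : E → EReal) : Prop := (∀ x, f x ≠ ⊥) ∧ ∃ x, f x ≠ ⊤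

/-- Convexity of an extended-real-valued function. -/
def ERealConvex (f : E → EReal) : Prop :=
  ∀ x y : E, ∀ a b : ℝ, 0 ≤ a → 0 ≤ b → a + b = 1 →
    f (a • x + b • y) ≤ (a : EReal) * f x + (b : EReal) * f y

/-- Weak convergence of a sequence in a Hilbert space, tested against inner products. -/
def WeakConv (u : ℕ → E) (p : E) : Prop :=
  ∀ w : E, Tendsto (fun k => ⟪u k, w⟫_ℝ) atTop (nhds ⟪p, w⟫_ℝ)

/-- The Lagrangian `l(x,z,y) = f(x) + g(z) + ⟪y, Ax - z⟫`. -/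
def Lagr (f : E → EReal) (g : F → EReal) (A : E →L[ℝ] F) (p : E) (q v : F) : EReal :=
  f p + g q + ((⟪v, A p - q⟫_ℝ : ℝ) : EReal)

/-- The Lagrangian with an additional smooth summand `h`:
`l(x,z,y) = f(x) + h(x) + g(z) + ⟪y, Ax - z⟫`. -/
def LagrH (f : E → EReal) (h : E → ℝ) (g : F → EReal) (A : E →L[ℝ] F)
    (p : E) (q v : F) : EReal :=
  f p + ((h p : ℝ) : EReal) + g q + ((⟪v, A p - q⟫_ℝ : ℝ) : EReal)

/-- `(xs, zs, ys)` is a saddle point of `l`. -/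
def IsSaddle (l : E → F → F → EReal) (xs : E) (zs ys : F) : Prop :=
  ∀ (p : E) (q v : F), l xs zs v ≤ l xs zs ys ∧ l xs zs ys ≤ l p q ys

/-- `xk1` is a minimizer of `u ↦ f u + (c/2)‖Au - zk + c⁻¹ yk‖² + (1/2)‖u - xk‖²_M`. -/
def IsXUpdate (f : E → EReal) (A : E →L[ℝ] F) (c : ℝ) (M : E →L[ℝ] E)
    (xk : E) (zk yk : F) (xk1 : E) : Prop :=
  ∀ u : E,
    f xk1 + (((c/2) * ‖A xk1 - zk + c⁻¹ • yk‖ ^ 2 + (1/2) * opSq M (xk1 - xk) : ℝ) : EReal) ≤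
    f u + (((c/2) * ‖A u - zk + c⁻¹ • yk‖ ^ 2 + (1/2) * opSq M (u - xk) : ℝ) : EReal)

/-- `xk1` is a minimizer of the `x`-subproblem with linearized smooth part:
`u ↦ f u + ⟪u - xk, ∇h(xk)⟫ + (c/2)‖Au - zk + c⁻¹ yk‖² + (1/2)‖u - xk‖²_M`. -/
def IsXUpdateGrad (f : E → EReal) (h' : E → E) (A : E →L[ℝ] F) (c : ℝ) (M : E →L[ℝ] E)
    (xk : E) (zk yk : F) (xk1 : E) : Prop :=
  ∀ u : E,
    f xk1 + ((⟪xk1 - xk, h' xk⟫_ℝ + (c/2) * ‖A xk1 - zk + c⁻¹ • yk‖ ^ 2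
        + (1/2) * opSq M (xk1 - xk) : ℝ) : EReal) ≤
    f u + ((⟪u - xk, h' xk⟫_ℝ + (c/2) * ‖A u - zk + c⁻¹ • yk‖ ^ 2
        + (1/2) * opSq M (u - xk) : ℝ) : EReal)

/-- `zk1` is a minimizer of `w ↦ g w + (c/2)‖Ax - w + c⁻¹ yk‖² + (1/2)‖w - zk‖²_M`. -/
def IsZUpdate (g : F → EReal) (c : ℝ) (M : F →L[ℝ] F)
    (Ax zk yk zk1 : F) : Prop :=
  ∀ w : F,
    g zk1 + (((c/2) * ‖Ax - zk1 + c⁻¹ • yk‖ ^ 2 + (1/2) * opSq M (zk1 - zk) : ℝ) : EReal) ≤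
    g w + (((c/2) * ‖Ax - w + c⁻¹ • yk‖ ^ 2 + (1/2) * opSq M (w - zk) : ℝ) : EReal)

end OpDefs

section AuxCalc

variable {E : Type*} [NormedAddCommGroup E] [InnerProductSpace ℝ E] [CompleteSpace E]

private lemma admm_hasDerivAt_line (h : E → ℝ) (h' : E → E)
    (hgrad : ∀ p : E, HasGradientAt h (h' p) p) (a d : E) (t : ℝ) :
    HasDerivAt (fun s : ℝ => h (a + s • d)) ⟪h' (a + t • d), d⟫_ℝ t := by
  have hline : HasDerivAt (fun s : ℝ => a + s • d) d t := by
    simpa using ((hasDerivAt_id t).smul_const d).const_add a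
  have := ((hgrad (a + t • d)).hasFDerivAt).comp_hasDerivAt t hline
  simp [Function.comp, InnerProductSpace.toDual_apply_apply] at this
  exact this

private lemma admm_grad_ineq (h : E → ℝ) (h' : E → E) (hconv : ConvexOn ℝ Set.univ h)
    (hgrad : ∀ p : E, HasGradientAt h (h' p) p) (a b : E) :
    ⟪h' a, b - a⟫_ℝ ≤ h b - h a := by
  have hD : HasDerivAt (fun s : ℝ => h (a + s • (b - a))) ⟪h' a, b - a⟫_ℝ 0 := by
    simpa using admm_hasDerivAt_line h h' hgrad a (b - a) 0
  have hslope := hasDerivAt_iff_tendsto_slope.1 hD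
  have hmono : Tendsto (slope (fun s : ℝ => h (a + s • (b - a))) 0)
      (nhdsWithin 0 (Set.Ioi 0)) (nhds ⟪h' a, b - a⟫_ℝ) :=
    hslope.mono_left (nhdsWithin_mono _ (fun x hx => ne_of_gt hx))
  refine le_of_tendsto hmono ?_
  filter_upwards [Ioo_mem_nhdsGT_of_mem (by norm_num : (0:ℝ) ∈ Set.Ico 0 1)] with t ht
  have ht0 : 0 < t := ht.1
  have hcomb : a + t • (b - a) = (1 - t) • a + t • b := by
    rw [smul_sub, sub_smul, one_smul]; abel
  have hcv := hconv.2 (Set.mem_univ a) (Set.mem_univ b)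
    (by linarith [ht.2] : (0:ℝ) ≤ 1 - t) (le_of_lt ht0) (by ring)
  rw [slope_def_field, hcomb]
  simp only [smul_eq_mul] at hcv
  have hnum : h ((1 - t) • a + t • b) - h (a + (0:ℝ) • (b - a)) ≤ (h b - h a) * t := by
    simp only [zero_smul, add_zero]
    nlinarith [hcv]
  rw [sub_zero, div_le_iff₀ ht0]
  exact hnum

private lemma admm_descent (h : E → ℝ) (h' : E → E) (L : ℝ) (hL : 0 < L)
    (hgrad : ∀ p : E, HasGradientAt h (h' p) p)
    (hlip : LipschitzWith (Real.toNNReal L) h')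
    (a b : E) : h b ≤ h a + ⟪h' a, b - a⟫_ℝ + L / 2 * ‖b - a‖ ^ 2 := by
  set d := b - a with hd
  set ψ : ℝ → ℝ := fun t => h (a + t • d) - t * ⟪h' a, d⟫_ℝ - t ^ 2 * (L / 2 * ‖d‖ ^ 2)
    with hψdef
  have hψ : ∀ t : ℝ, HasDerivAt ψ
      (⟪h' (a + t • d), d⟫_ℝ - ⟪h' a, d⟫_ℝ - 2 * t * (L / 2 * ‖d‖ ^ 2)) t := by
    intro t
    have h1 := admm_hasDerivAt_line h h' hgrad a d t
    have h2 : HasDerivAt (fun s : ℝ => s * ⟪h' a, d⟫_ℝ) ⟪h' a, d⟫_ℝ t := by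
      simpa using (hasDerivAt_id t).mul_const ⟪h' a, d⟫_ℝ
    have h3 : HasDerivAt (fun s : ℝ => s ^ 2 * (L / 2 * ‖d‖ ^ 2))
        (2 * t * (L / 2 * ‖d‖ ^ 2)) t := by
      simpa using ((hasDerivAt_pow 2 t).mul_const (L / 2 * ‖d‖ ^ 2))
    exact (h1.sub h2).sub h3
  have hlipd : ∀ u v : E, ‖h' u - h' v‖ ≤ L * ‖u - v‖ := by
    intro u v
    have := hlip.dist_le_mul u v
    rwa [dist_eq_norm, dist_eq_norm, Real.coe_toNNReal L hL.le] at this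
  have hanti : AntitoneOn ψ (Set.Icc 0 1) := by
    apply antitoneOn_of_deriv_nonpos (convex_Icc 0 1)
    · exact fun t _ => ((hψ t).continuousAt).continuousWithinAt
    · intro t _
      exact ((hψ t).differentiableAt).differentiableWithinAt
    · intro t ht
      rw [interior_Icc] at ht
      rw [(hψ t).deriv]
      have hb1 : ⟪h' (a + t • d), d⟫_ℝ - ⟪h' a, d⟫_ℝ ≤ L * t * ‖d‖ ^ 2 := by
        have e1 : ⟪h' (a + t • d), d⟫_ℝ - ⟪h' a, d⟫_ℝ = ⟪h' (a + t • d) - h' a, d⟫_ℝ := by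
          rw [inner_sub_left]
        rw [e1]
        calc ⟪h' (a + t • d) - h' a, d⟫_ℝ ≤ ‖h' (a + t • d) - h' a‖ * ‖d‖ :=
              real_inner_le_norm _ _
          _ ≤ (L * ‖a + t • d - a‖) * ‖d‖ := by
              apply mul_le_mul_of_nonneg_right _ (norm_nonneg d)
              exact hlipd _ _
          _ = L * t * ‖d‖ ^ 2 := by
              rw [add_sub_cancel_left, norm_smul]
              simp [abs_of_pos ht.1]
              ring
      nlinarith [ht.1, ht.2]
  have h01 := hanti (Set.mem_Icc.2 ⟨le_refl 0, zero_le_one⟩)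
    (Set.mem_Icc.2 ⟨zero_le_one, le_refl 1⟩) zero_le_one
  have e0 : ψ 0 = h a := by simp [hψdef]
  have e1 : ψ 1 = h (a + d) - ⟪h' a, d⟫_ℝ - L / 2 * ‖d‖ ^ 2 := by
    simp [hψdef]
  have e2 : a + d = b := by rw [hd]; abel
  rw [e0, e1, e2] at h01
  linarith

private lemma admm_lower_bound (h : E → ℝ) (h' : E → E) (L : ℝ) (hL : 0 < L)
    (hconv : ConvexOn ℝ Set.univ h)
    (hgrad : ∀ p : E, HasGradientAt h (h' p) p)
    (hlip : LipschitzWith (Real.toNNReal L) h')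
    (a b : E) :
    h a + ⟪h' a, b - a⟫_ℝ + 1 / (2 * L) * ‖h' b - h' a‖ ^ 2 ≤ h b := by
  set φ : E → ℝ := fun z => h z - ⟪h' a, z⟫_ℝ with hφdef
  set φ' : E → E := fun z => h' z - h' a with hφ'def
  have hφgrad : ∀ p : E, HasGradientAt φ (φ' p) p := by
    intro p
    rw [hasGradientAt_iff_hasFDerivAt]
    have h1 := (hgrad p).hasFDerivAt
    have h2 : HasFDerivAt (fun z : E => ⟪h' a, z⟫_ℝ) (InnerProductSpace.toDual ℝ E (h' a)) p := by
      have := (InnerProductSpace.toDual ℝ E (h' a)).hasFDerivAt (x := p)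
      convert this using 1
      ext z
      simp [InnerProductSpace.toDual_apply_apply]
    have h3 := h1.sub h2
    have e : InnerProductSpace.toDual ℝ E (φ' p)
        = InnerProductSpace.toDual ℝ E (h' p) - InnerProductSpace.toDual ℝ E (h' a) := by
      rw [hφ'def]; exact map_sub _ _ _
    rw [e]
    exact h3
  have hφconv : ConvexOn ℝ Set.univ φ := by
    constructor
    · exact convex_univ
    · intro u hu v hv s t hs ht hst
      have h1 := hconv.2 hu hv hs ht hst
      have e : ⟪h' a, s • u + t • v⟫_ℝ = s * ⟪h' a, u⟫_ℝ + t * ⟪h' a, v⟫_ℝ := by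
        rw [inner_add_right, real_inner_smul_right, real_inner_smul_right]
      simp only [hφdef, smul_eq_mul] at *
      rw [e]; linarith
  have hφlip : LipschitzWith (Real.toNNReal L) φ' := by
    apply LipschitzWith.of_dist_le_mul
    intro u v
    simp only [hφ'def]
    rw [dist_sub_right]
    exact hlip.dist_le_mul u v
  have hmin : ∀ w : E, φ a ≤ φ w := by
    intro w
    have := admm_grad_ineq φ φ' hφconv hφgrad a w
    have e : φ' a = 0 := by simp [hφ'def]
    rw [e] at this
    simp only [inner_zero_left] at this
    linarith
  have hdesc := admm_descent φ φ' L hL hφgrad hφlip b (b + (-L⁻¹) • (φ' b))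
  have hstep := hmin (b + (-L⁻¹) • (φ' b))
  have e3 : b + (-L⁻¹) • (φ' b) - b = (-L⁻¹) • (φ' b) := by abel
  rw [e3] at hdesc
  have e4 : ⟪φ' b, (-L⁻¹) • (φ' b)⟫_ℝ = -L⁻¹ * ‖φ' b‖ ^ 2 := by
    rw [real_inner_smul_right, real_inner_self_eq_norm_sq]
  have e5 : ‖(-L⁻¹) • (φ' b)‖ ^ 2 = L⁻¹ ^ 2 * ‖φ' b‖ ^ 2 := by
    rw [norm_smul]
    rw [norm_neg, Real.norm_eq_abs, abs_of_pos (inv_pos.2 hL)]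
    ring
  rw [e4, e5] at hdesc
  have hfinal : φ a ≤ φ b - 1 / (2 * L) * ‖φ' b‖ ^ 2 := by
    have h6 := le_trans hstep hdesc
    have e6 : φ b + -L⁻¹ * ‖φ' b‖ ^ 2 + L / 2 * (L⁻¹ ^ 2 * ‖φ' b‖ ^ 2)
        = φ b - 1 / (2 * L) * ‖φ' b‖ ^ 2 := by
      field_simp
      ring
    rw [e6] at h6
    exact h6
  simp only [hφdef, hφ'def] at hfinal
  have e8 : ⟪h' a, b⟫_ℝ - ⟪h' a, a⟫_ℝ = ⟪h' a, b - a⟫_ℝ := (inner_sub_right _ _ _).symm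
  linarith [hfinal, e8.le, e8.ge]

private lemma admm_coco (h : E → ℝ) (h' : E → E) (L : ℝ) (hL : 0 < L)
    (hconv : ConvexOn ℝ Set.univ h)
    (hgrad : ∀ p : E, HasGradientAt h (h' p) p)
    (hlip : LipschitzWith (Real.toNNReal L) h')
    (a b : E) :
    1 / L * ‖h' a - h' b‖ ^ 2 ≤ ⟪h' a - h' b, a - b⟫_ℝ := by
  have h1 := admm_lower_bound h h' L hL hconv hgrad hlip a b
  have h2 := admm_lower_bound h h' L hL hconv hgrad hlip b a
  have e1 : ⟪h' a, b - a⟫_ℝ = ⟪h' a, b⟫_ℝ - ⟪h' a, a⟫_ℝ := inner_sub_right _ _ _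
  have e2 : ⟪h' b, a - b⟫_ℝ = ⟪h' b, a⟫_ℝ - ⟪h' b, b⟫_ℝ := inner_sub_right _ _ _
  have e3 : ⟪h' a - h' b, a - b⟫_ℝ
      = ⟪h' a, a⟫_ℝ - ⟪h' a, b⟫_ℝ - ⟪h' b, a⟫_ℝ + ⟪h' b, b⟫_ℝ := by
    rw [inner_sub_left, inner_sub_right, inner_sub_right]; ring
  have e4 : ‖h' b - h' a‖ = ‖h' a - h' b‖ := norm_sub_rev _ _
  rw [e4] at h1
  have e6 : 1 / L * ‖h' a - h' b‖ ^ 2 = 2 * (1 / (2 * L) * ‖h' a - h' b‖ ^ 2) := by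
    field_simp
  rw [e6, e3]
  linarith [h1, h2, e1, e2]

/-- Key cocoercivity consequence: `⟪∇h(a) - ∇h(s), P - s⟫ ≥ -(L/4)‖P - a‖²`. -/
private lemma admm_key (h : E → ℝ) (h' : E → E) (L : ℝ) (hL : 0 < L)
    (hconv : ConvexOn ℝ Set.univ h)
    (hgrad : ∀ p : E, HasGradientAt h (h' p) p)
    (hlip : LipschitzWith (Real.toNNReal L) h')
    (a s P : E) :
    -(L / 4) * ‖P - a‖ ^ 2 ≤ ⟪h' a - h' s, P - s⟫_ℝ := by
  have hc := admm_coco h h' L hL hconv hgrad hlip a s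
  have e1 : ⟪h' a - h' s, P - s⟫_ℝ = ⟪h' a - h' s, a - s⟫_ℝ + ⟪h' a - h' s, P - a⟫_ℝ := by
    rw [← inner_add_right]
    congr 1
    abel
  have e2 : -(‖h' a - h' s‖ * ‖P - a‖) ≤ ⟪h' a - h' s, P - a⟫_ℝ := by
    have := real_inner_le_norm (h' a - h' s) (a - P)
    have e3 : ⟪h' a - h' s, a - P⟫_ℝ = -⟪h' a - h' s, P - a⟫_ℝ := by
      rw [← inner_neg_right]
      congr 1
      abel
    rw [e3] at this
    have e4 : ‖a - P‖ = ‖P - a‖ := norm_sub_rev _ _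
    rw [e4] at this
    linarith
  rw [e1]
  have hL' : (0:ℝ) < 1 / L := by positivity
  have am : ‖h' a - h' s‖ * ‖P - a‖
      ≤ 1 / L * ‖h' a - h' s‖ ^ 2 + L / 4 * ‖P - a‖ ^ 2 := by
    have hsq := sq_nonneg (‖h' a - h' s‖ - L / 2 * ‖P - a‖)
    have e7 : 1 / L * ‖h' a - h' s‖ ^ 2 + L / 4 * ‖P - a‖ ^ 2
        - ‖h' a - h' s‖ * ‖P - a‖
        = 1 / L * (‖h' a - h' s‖ - L / 2 * ‖P - a‖) ^ 2 := by
      field_simp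
      ring
    nlinarith [mul_nonneg hL'.le hsq]
  linarith [hc, e2, am]

end AuxCalc

section AuxEReal

variable {E : Type*} [NormedAddCommGroup E] [InnerProductSpace ℝ E]

private lemma admm_ereal_add_cancel {X Y : EReal} (r : ℝ)
    (hle : X + (r : EReal) ≤ Y + (r : EReal)) : X ≤ Y := by
  have h2 := add_le_add_left hle ((-r : ℝ) : EReal)
  rw [add_assoc, add_assoc, ← EReal.coe_add, add_neg_cancel, EReal.coe_zero, add_zero,
    add_zero] at h2
  exact h2

private lemma admm_small_t_le {x C : ℝ} (hC : 0 ≤ C)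
    (hx : ∀ t : ℝ, 0 < t → t ≤ 1 → x ≤ t * C) : x ≤ 0 := by
  refine le_of_forall_pos_le_add ?_
  intro ε hε
  have ht0 : 0 < min 1 (ε / (C + 1)) := by
    apply lt_min one_pos
    positivity
  have h1 := hx _ ht0 (min_le_left _ _)
  have h2 : min 1 (ε / (C + 1)) * C ≤ ε / (C + 1) * C :=
    mul_le_mul_of_nonneg_right (min_le_right _ _) hC
  have h3 : ε / (C + 1) * C ≤ ε := by
    rw [div_mul_eq_mul_div, div_le_iff₀ (by linarith : (0:ℝ) < C + 1)]
    nlinarith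
  linarith

/-- Variational inequality from a minimizer of `f + Q`, `f` `EReal`-convex,
`Q` with one-sided quadratic expansion along the segment `[x0, u]`. -/
private lemma admm_vi_of_min (f : E → EReal) (hfbot : ∀ p : E, f p ≠ ⊥)
    (hconv : ERealConvex f) (x0 u : E) (hfx0 : f x0 ≠ ⊤) (hfu : f u ≠ ⊤)
    (Q : E → ℝ) (D C : ℝ) (hC : 0 ≤ C)
    (hQ : ∀ t : ℝ, 0 < t → t ≤ 1 → Q (x0 + t • (u - x0)) ≤ Q x0 + t * D + t ^ 2 * C)
    (hmin : ∀ w : E, f x0 + ((Q x0 : ℝ) : EReal) ≤ f w + ((Q w : ℝ) : EReal)) :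
    (f x0).toReal ≤ (f u).toReal + D := by
  set p := (f x0).toReal with hp
  set q := (f u).toReal with hq
  have hpc : f x0 = ((p : ℝ) : EReal) := (EReal.coe_toReal hfx0 (hfbot x0)).symm
  have hqc : f u = ((q : ℝ) : EReal) := (EReal.coe_toReal hfu (hfbot u)).symm
  have key : ∀ t : ℝ, 0 < t → t ≤ 1 → p - (q + D) ≤ t * C := by
    intro t ht0 ht1
    have hcomb : x0 + t • (u - x0) = (1 - t) • x0 + t • u := by
      rw [smul_sub, sub_smul, one_smul]; abel
    have hcv := hconv x0 u (1 - t) t (by linarith) ht0.le (by ring)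
    rw [← hcomb, hpc, hqc] at hcv
    have hcv2 : f (x0 + t • (u - x0)) ≤ (((1 - t) * p + t * q : ℝ) : EReal) := by
      rw [EReal.coe_add, EReal.coe_mul, EReal.coe_mul]
      exact hcv
    have h1 := hmin (x0 + t • (u - x0))
    have h2 : f (x0 + t • (u - x0)) + ((Q (x0 + t • (u - x0)) : ℝ) : EReal)
        ≤ (((1 - t) * p + t * q + Q (x0 + t • (u - x0)) : ℝ) : EReal) := by
      rw [EReal.coe_add]
      exact add_le_add_left hcv2 _
    have h3 : (((p + Q x0 : ℝ)) : EReal)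
        ≤ (((1 - t) * p + t * q + Q (x0 + t • (u - x0)) : ℝ) : EReal) := by
      rw [EReal.coe_add, ← hpc]
      exact le_trans h1 h2
    rw [EReal.coe_le_coe_iff] at h3
    have h4 := hQ t ht0 ht1
    have h6 : t * (p - q - D) ≤ t ^ 2 * C := by nlinarith
    have h7 : p - q - D ≤ t * C := by
      have h8 : t * (p - q - D) ≤ t * (t * C) := by nlinarith
      exact (mul_le_mul_iff_right₀ ht0).1 h8
    linarith
  have := admm_small_t_le hC key
  linarith

private lemma admm_ne_top_of_le_coe {a : EReal} {r s : ℝ}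
    (hle : a + (r : EReal) ≤ (s : EReal)) : a ≠ ⊤ := by
  intro ha
  rw [ha, EReal.top_add_of_ne_bot (EReal.coe_ne_bot r)] at hle
  exact (EReal.coe_lt_top s).not_ge (by simpa using hle)

end AuxEReal

section AuxAlg

variable {E F : Type*} [NormedAddCommGroup E] [InnerProductSpace ℝ E]
  [NormedAddCommGroup F] [InnerProductSpace ℝ F]

private lemma admm_polar2 (u v : E) : 2 * ⟪u, v⟫_ℝ = ‖u‖ ^ 2 + ‖v‖ ^ 2 - ‖u - v‖ ^ 2 := by
  have := norm_sub_sq_real u v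
  linarith

private lemma admm_opSq_neg (U : E →L[ℝ] E) (u : E) : opSq U (-u) = opSq U u := by
  simp only [opSq, map_neg, inner_neg_neg]

private lemma admm_polarM (U : E →L[ℝ] E) (hU : ∀ p q : E, ⟪U p, q⟫_ℝ = ⟪p, U q⟫_ℝ)
    (u w : E) : 2 * ⟪U u, w⟫_ℝ = opSq U u + opSq U w - opSq U (u - w) := by
  simp only [opSq]
  have e1 : ⟪u - w, U (u - w)⟫_ℝ
      = ⟪u, U u⟫_ℝ - ⟪u, U w⟫_ℝ - ⟪w, U u⟫_ℝ + ⟪w, U w⟫_ℝ := by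
    rw [map_sub, inner_sub_left, inner_sub_right, inner_sub_right]
    ring
  have e2 : ⟪u, U w⟫_ℝ = ⟪U u, w⟫_ℝ := (hU u w).symm
  have e3 : ⟪w, U u⟫_ℝ = ⟪U u, w⟫_ℝ := real_inner_comm _ _
  rw [e1, e2, e3]
  ring

/-- Exact quadratic expansion of the subproblem objective along a segment. -/
private lemma admm_quad_expand (A : E →L[ℝ] F) (M : E →L[ℝ] E)
    (hM : ∀ p q : E, ⟪M p, q⟫_ℝ = ⟪p, M q⟫_ℝ) (cc : ℝ) (b : F) (gv a P d : E) (t : ℝ) :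
    ⟪P + t • d - a, gv⟫_ℝ + cc / 2 * ‖A (P + t • d) - b‖ ^ 2
        + 1 / 2 * opSq M (P + t • d - a)
      = (⟪P - a, gv⟫_ℝ + cc / 2 * ‖A P - b‖ ^ 2 + 1 / 2 * opSq M (P - a))
        + t * (⟪d, gv⟫_ℝ + cc * ⟪A P - b, A d⟫_ℝ + ⟪M (P - a), d⟫_ℝ)
        + t ^ 2 * (cc / 2 * ‖A d‖ ^ 2 + 1 / 2 * ⟪d, M d⟫_ℝ) := by
  have e1 : P + t • d - a = (P - a) + t • d := by abel
  have T1 : ⟪P + t • d - a, gv⟫_ℝ = ⟪P - a, gv⟫_ℝ + t * ⟪d, gv⟫_ℝ := by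
    rw [e1, inner_add_left, real_inner_smul_left]
  have e2 : A (P + t • d) - b = (A P - b) + t • A d := by
    rw [map_add, map_smul]; abel
  have T2 : ‖A (P + t • d) - b‖ ^ 2
      = ‖A P - b‖ ^ 2 + 2 * t * ⟪A P - b, A d⟫_ℝ + t ^ 2 * ‖A d‖ ^ 2 := by
    rw [e2, norm_add_sq_real, real_inner_smul_right]
    have e3 : ‖t • A d‖ ^ 2 = t ^ 2 * ‖A d‖ ^ 2 := by
      rw [norm_smul, mul_pow, Real.norm_eq_abs, sq_abs]
    rw [e3]; ring
  have T3 : opSq M (P + t • d - a)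
      = opSq M (P - a) + 2 * t * ⟪M (P - a), d⟫_ℝ + t ^ 2 * ⟪d, M d⟫_ℝ := by
    simp only [opSq]
    rw [e1, map_add, map_smul, inner_add_left, inner_add_right, inner_add_right,
      real_inner_smul_left, real_inner_smul_left, real_inner_smul_right,
      real_inner_smul_right]
    have c1 : ⟪P - a, M d⟫_ℝ = ⟪M (P - a), d⟫_ℝ := (hM (P - a) d).symm
    have c2 : ⟪d, M (P - a)⟫_ℝ = ⟪M (P - a), d⟫_ℝ := real_inner_comm _ _
    rw [c1, c2]
    ring
  rw [T1, T2, T3]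
  ring

end AuxAlg

section AuxStep

variable {H G : Type*} [NormedAddCommGroup H] [InnerProductSpace ℝ H] [CompleteSpace H]
  [NormedAddCommGroup G] [InnerProductSpace ℝ G] [CompleteSpace G]

private lemma admm_step (f : H → EReal) (g : G → EReal)
    (hfp : ERealProper f) (hfc : ERealConvex f)
    (hgp : ERealProper g) (hgc : ERealConvex g)
    (h : H → ℝ) (h' : H → H) (L : ℝ) (hL : 0 < L)
    (hconv : ConvexOn ℝ Set.univ h)
    (hgrad : ∀ p : H, HasGradientAt h (h' p) p)
    (hlip : LipschitzWith (Real.toNNReal L) h')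
    (A : H →L[ℝ] G) (c : ℝ) (hc : 0 < c)
    (M₁ : ℕ → (H →L[ℝ] H)) (M₂ : ℕ → (G →L[ℝ] G))
    (hM₁ : ∀ k : ℕ, IsSplusOp (M₁ k)) (hM₂ : ∀ k : ℕ, IsSplusOp (M₂ k))
    (x : ℕ → H) (z y : ℕ → G)
    (hx : ∀ k : ℕ, IsXUpdateGrad f h' A c (M₁ k) (x k) (z k) (y k) (x (k+1)))
    (hz : ∀ k : ℕ, IsZUpdate g c (M₂ k) (A (x (k+1))) (z k) (y k) (z (k+1)))
    (hy : ∀ k : ℕ, y (k+1) = y k + c • (A (x (k+1)) - z (k+1)))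
    (xs : H) (zs ys : G) (hAxs : A xs = zs)
    (hfxs : f xs ≠ ⊤) (hgzs : g zs ≠ ⊤)
    (hminx : ∀ p : H, f xs + ((h xs + ⟪ys, A xs - zs⟫_ℝ : ℝ) : EReal)
      ≤ f p + ((h p + ⟪ys, A p - zs⟫_ℝ : ℝ) : EReal))
    (hminz : ∀ q : G, g zs + ((⟪ys, A xs - zs⟫_ℝ : ℝ) : EReal)
      ≤ g q + ((⟪ys, A xs - q⟫_ℝ : ℝ) : EReal))
    (k : ℕ) :
    ‖y (k+1) - ys‖ ^ 2 + c ^ 2 * ‖z (k+1) - zs‖ ^ 2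
        + c * opSq (M₁ k) (x (k+1) - xs) + c * opSq (M₂ k) (z (k+1) - zs)
        + c ^ 2 * ‖z k - A (x (k+1))‖ ^ 2
        + c * opSq (M₁ k - (L/2) • ContinuousLinearMap.id ℝ H) (x k - x (k+1))
        + c * opSq (M₂ k) (z k - z (k+1))
      ≤ ‖y k - ys‖ ^ 2 + c ^ 2 * ‖z k - zs‖ ^ 2
        + c * opSq (M₁ k) (x k - xs) + c * opSq (M₂ k) (z k - zs) := by
  have hcne : c ≠ 0 := ne_of_gt hc
  -- abbreviations (plain lets as defs would complicate; we use local notation via haves)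
  -- finiteness of f (x (k+1)) and g (z (k+1))
  have hfxsR : f xs = (((f xs).toReal : ℝ) : EReal) := (EReal.coe_toReal hfxs (hfp.1 xs)).symm
  have hgzsR : g zs = (((g zs).toReal : ℝ) : EReal) := (EReal.coe_toReal hgzs (hgp.1 zs)).symm
  have hfP : f (x (k+1)) ≠ ⊤ := by
    have h1 := hx k xs
    rw [hfxsR, ← EReal.coe_add] at h1
    exact admm_ne_top_of_le_coe h1
  have hgZ : g (z (k+1)) ≠ ⊤ := by
    have h1 := hz k zs
    rw [hgzsR, ← EReal.coe_add] at h1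
    exact admm_ne_top_of_le_coe h1
  -- VI for the x-update
  have vix : (f (x (k+1))).toReal ≤ (f xs).toReal
      + (⟪xs - x (k+1), h' (x k)⟫_ℝ
        + c * ⟪A (x (k+1)) - (z k - c⁻¹ • y k), A (xs - x (k+1))⟫_ℝ
        + ⟪(M₁ k) (x (k+1) - x k), xs - x (k+1)⟫_ℝ) := by
    apply admm_vi_of_min f hfp.1 hfc (x (k+1)) xs hfP hfxs
      (fun u => ⟪u - x k, h' (x k)⟫_ℝ + (c/2) * ‖A u - z k + c⁻¹ • y k‖ ^ 2
        + (1/2) * opSq (M₁ k) (u - x k))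
      _ ((c/2) * ‖A (xs - x (k+1))‖ ^ 2 + (1/2) * ⟪xs - x (k+1), (M₁ k) (xs - x (k+1))⟫_ℝ)
      (by
        have := (hM₁ k).2 (xs - x (k+1))
        positivity)
      ?_ (fun w => hx k w)
    intro t ht0 ht1
    apply le_of_eq
    have hb : ∀ u : H, A u - z k + c⁻¹ • y k = A u - (z k - c⁻¹ • y k) := by
      intro u; abel
    simp only [hb]
    have e1 : (c/2) = c/2 := rfl
    have := admm_quad_expand A (M₁ k) (hM₁ k).1 c (z k - c⁻¹ • y k) (h' (x k))
      (x k) (x (k+1)) (xs - x (k+1)) t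
    convert this using 2 <;> ring
  -- VI for the saddle x-minimization
  have vixs : (f xs).toReal ≤ (f (x (k+1))).toReal
      + (⟪h' xs, x (k+1) - xs⟫_ℝ + ⟪ys, A (x (k+1) - xs)⟫_ℝ) := by
    apply admm_vi_of_min f hfp.1 hfc xs (x (k+1)) hfxs hfP
      (fun p => h p + ⟪ys, A p - zs⟫_ℝ)
      _ (L/2 * ‖x (k+1) - xs‖ ^ 2) (by positivity) ?_ hminx
    intro t ht0 ht1
    have hdesc := admm_descent h h' L hL hgrad hlip xs (xs + t • (x (k+1) - xs))
    rw [add_sub_cancel_left, real_inner_smul_right] at hdesc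
    have e2 : ‖t • (x (k+1) - xs)‖ ^ 2 = t ^ 2 * ‖x (k+1) - xs‖ ^ 2 := by
      rw [norm_smul, mul_pow, Real.norm_eq_abs, sq_abs]
    rw [e2] at hdesc
    have e3 : ⟪ys, A (xs + t • (x (k+1) - xs)) - zs⟫_ℝ
        = ⟪ys, A xs - zs⟫_ℝ + t * ⟪ys, A (x (k+1) - xs)⟫_ℝ := by
      rw [map_add, map_smul]
      have e4 : A xs + t • A (x (k+1) - xs) - zs = (A xs - zs) + t • A (x (k+1) - xs) := by
        abel
      rw [e4, inner_add_right, real_inner_smul_right]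
    simp only [e3]
    nlinarith [hdesc]
  -- VI for the z-update
  have viz : (g (z (k+1))).toReal ≤ (g zs).toReal
      + (c * ⟪z (k+1) - (A (x (k+1)) + c⁻¹ • y k), zs - z (k+1)⟫_ℝ
        + ⟪(M₂ k) (z (k+1) - z k), zs - z (k+1)⟫_ℝ) := by
    apply admm_vi_of_min g hgp.1 hgc (z (k+1)) zs hgZ hgzs
      (fun w => (c/2) * ‖A (x (k+1)) - w + c⁻¹ • y k‖ ^ 2 + (1/2) * opSq (M₂ k) (w - z k))
      _ ((c/2) * ‖zs - z (k+1)‖ ^ 2 + (1/2) * ⟪zs - z (k+1), (M₂ k) (zs - z (k+1))⟫_ℝ)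
      (by
        have := (hM₂ k).2 (zs - z (k+1))
        positivity)
      ?_ (fun w => hz k w)
    intro t ht0 ht1
    apply le_of_eq
    have hb : ∀ ww : G, A (x (k+1)) - ww + c⁻¹ • y k
        = -(ww - (A (x (k+1)) + c⁻¹ • y k)) := by
      intro ww; abel
    simp only [hb, norm_neg]
    have := admm_quad_expand (ContinuousLinearMap.id ℝ G) (M₂ k) (hM₂ k).1 c
      (A (x (k+1)) + c⁻¹ • y k) 0 (z k) (z (k+1)) (zs - z (k+1)) t
    simp only [ContinuousLinearMap.id_apply, inner_zero_right, zero_add] at this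
    convert this using 2 <;> ring
  -- VI for the saddle z-minimization
  have vizs : (g zs).toReal ≤ (g (z (k+1))).toReal + (-⟪ys, z (k+1) - zs⟫_ℝ) := by
    apply admm_vi_of_min g hgp.1 hgc zs (z (k+1)) hgzs hgZ
      (fun q => ⟪ys, A xs - q⟫_ℝ) _ 0 le_rfl ?_ hminz
    intro t ht0 ht1
    apply le_of_eq
    show (⟪ys, A xs - (zs + t • (z (k+1) - zs))⟫_ℝ : ℝ)
      = ⟪ys, A xs - zs⟫_ℝ + t * -⟪ys, z (k+1) - zs⟫_ℝ + t ^ 2 * 0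
    have e4 : A xs - (zs + t • (z (k+1) - zs)) = (A xs - zs) - t • (z (k+1) - zs) := by
      abel
    rw [e4, inner_sub_right, real_inner_smul_right]
    ring
  have hsum1 : 0 ≤ (⟪xs - x (k+1), h' (x k)⟫_ℝ
      + c * ⟪A (x (k+1)) - (z k - c⁻¹ • y k), A (xs - x (k+1))⟫_ℝ
      + ⟪(M₁ k) (x (k+1) - x k), xs - x (k+1)⟫_ℝ)
      + (⟪h' xs, x (k+1) - xs⟫_ℝ + ⟪ys, A (x (k+1) - xs)⟫_ℝ) := by linarith
  have hsum2 : 0 ≤ (c * ⟪z (k+1) - (A (x (k+1)) + c⁻¹ • y k), zs - z (k+1)⟫_ℝ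
      + ⟪(M₂ k) (z (k+1) - z k), zs - z (k+1)⟫_ℝ) + (-⟪ys, z (k+1) - zs⟫_ℝ) := by linarith
  -- convert hsum1 into the key inequality (★x)
  have cDx : c * ⟪A (x (k+1)) - (z k - c⁻¹ • y k), A (xs - x (k+1))⟫_ℝ
      = ⟪c • (A (x (k+1)) - z k) + y k, A (xs - x (k+1))⟫_ℝ := by
    rw [← real_inner_smul_left]
    congr 1
    rw [smul_sub, smul_sub, smul_smul, mul_inv_cancel₀ hcne, one_smul, smul_sub]
    abel
  have kA : A (xs - x (k+1)) = -(A (x (k+1)) - A xs) := by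
    rw [map_sub]; abel
  have k1 : ⟪xs - x (k+1), h' (x k)⟫_ℝ
      = -⟪h' (x k) - h' xs, x (k+1) - xs⟫_ℝ - ⟪h' xs, x (k+1) - xs⟫_ℝ := by
    rw [real_inner_comm]
    have e5 : xs - x (k+1) = -(x (k+1) - xs) := by abel
    rw [e5, inner_neg_right, inner_sub_left]
    ring
  have k2 : ⟪c • (A (x (k+1)) - z k) + y k, A (xs - x (k+1))⟫_ℝ
      = -⟪c • (A (x (k+1)) - z k) + y k, A (x (k+1)) - A xs⟫_ℝ := by
    rw [kA, inner_neg_right]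
  have k3 : ⟪(M₁ k) (x (k+1) - x k), xs - x (k+1)⟫_ℝ
      = -⟪(M₁ k) (x (k+1) - x k), x (k+1) - xs⟫_ℝ := by
    have e5 : xs - x (k+1) = -(x (k+1) - xs) := by abel
    rw [e5, inner_neg_right]
  have k4 : ⟪ys, A (x (k+1) - xs)⟫_ℝ = ⟪ys, A (x (k+1)) - A xs⟫_ℝ := by rw [map_sub]
  have hkey := admm_key h h' L hL hconv hgrad hlip (x k) xs (x (k+1))
  have starx : ⟪c • (A (x (k+1)) - z k) + y k - ys, A (x (k+1)) - A xs⟫_ℝ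
      + ⟪(M₁ k) (x (k+1) - x k), x (k+1) - xs⟫_ℝ
      ≤ L/4 * ‖x (k+1) - x k‖ ^ 2 := by
    rw [inner_sub_left]
    rw [cDx, k1, k2, k3, k4] at hsum1
    linarith
  -- convert hsum2 into (★z)
  have cDz : c * ⟪z (k+1) - (A (x (k+1)) + c⁻¹ • y k), zs - z (k+1)⟫_ℝ
      = ⟪y (k+1), z (k+1) - zs⟫_ℝ := by
    rw [← real_inner_smul_left]
    have e6 : c • (z (k+1) - (A (x (k+1)) + c⁻¹ • y k)) = -(y (k+1)) := by
      rw [hy k, smul_sub, smul_add, smul_smul, mul_inv_cancel₀ hcne, one_smul, smul_sub]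
      abel
    rw [e6, inner_neg_left]
    have e7 : zs - z (k+1) = -(z (k+1) - zs) := by abel
    rw [e7, inner_neg_right]
    ring
  have k6 : ⟪(M₂ k) (z (k+1) - z k), zs - z (k+1)⟫_ℝ
      = -⟪(M₂ k) (z (k+1) - z k), z (k+1) - zs⟫_ℝ := by
    have e7 : zs - z (k+1) = -(z (k+1) - zs) := by abel
    rw [e7, inner_neg_right]
  have starz : ⟪(M₂ k) (z (k+1) - z k), z (k+1) - zs⟫_ℝ
      ≤ ⟪y (k+1) - ys, z (k+1) - zs⟫_ℝ := by
    rw [inner_sub_left]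
    rw [cDz, k6] at hsum2
    linarith
  -- the algebraic identity
  have J1 : ⟪c • (A (x (k+1)) - z k) + y k - ys, A (x (k+1)) - A xs⟫_ℝ
      = ⟪y (k+1) - ys, A (x (k+1)) - A xs⟫_ℝ
        + c * ⟪z (k+1) - z k, A (x (k+1)) - A xs⟫_ℝ := by
    have vj : c • (A (x (k+1)) - z k) + y k - ys
        = (y (k+1) - ys) + c • (z (k+1) - z k) := by
      rw [hy k, smul_sub, smul_sub, smul_sub]
      abel
    rw [vj, inner_add_left, real_inner_smul_left]
  have hAsplit : A (x (k+1)) - A xs = (z (k+1) - zs) + (A (x (k+1)) - z (k+1)) := by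
    rw [hAxs]; abel
  have J2 : ⟪y (k+1) - ys, A (x (k+1)) - A xs⟫_ℝ
      = ⟪y (k+1) - ys, z (k+1) - zs⟫_ℝ + ⟪y (k+1) - ys, A (x (k+1)) - z (k+1)⟫_ℝ := by
    rw [hAsplit, inner_add_right]
  have J2' : ⟪z (k+1) - z k, A (x (k+1)) - A xs⟫_ℝ
      = ⟪z (k+1) - z k, z (k+1) - zs⟫_ℝ + ⟪z (k+1) - z k, A (x (k+1)) - z (k+1)⟫_ℝ := by
    rw [hAsplit, inner_add_right]
  have J3 : 2 * (c * ⟪y (k+1) - ys, A (x (k+1)) - z (k+1)⟫_ℝ)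
      = ‖y (k+1) - ys‖ ^ 2 + c ^ 2 * ‖A (x (k+1)) - z (k+1)‖ ^ 2 - ‖y k - ys‖ ^ 2 := by
    have p1 := admm_polar2 (y (k+1) - ys) (c • (A (x (k+1)) - z (k+1)))
    rw [real_inner_smul_right] at p1
    have e8 : ‖c • (A (x (k+1)) - z (k+1))‖ ^ 2 = c ^ 2 * ‖A (x (k+1)) - z (k+1)‖ ^ 2 := by
      rw [norm_smul, mul_pow, Real.norm_eq_abs, sq_abs]
    have e9 : y (k+1) - ys - c • (A (x (k+1)) - z (k+1)) = y k - ys := by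
      rw [hy k]; abel
    rw [e8, e9] at p1
    linarith
  have J4 : 2 * ⟪z (k+1) - z k, z (k+1) - zs⟫_ℝ
      = ‖z (k+1) - z k‖ ^ 2 + ‖z (k+1) - zs‖ ^ 2 - ‖z k - zs‖ ^ 2 := by
    have p1 := admm_polar2 (z (k+1) - z k) (z (k+1) - zs)
    have e9 : z (k+1) - z k - (z (k+1) - zs) = -(z k - zs) := by abel
    rw [e9, norm_neg] at p1
    linarith
  have J5 : ‖A (x (k+1)) - z k‖ ^ 2
      = ‖z (k+1) - z k‖ ^ 2 + 2 * ⟪z (k+1) - z k, A (x (k+1)) - z (k+1)⟫_ℝ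
        + ‖A (x (k+1)) - z (k+1)‖ ^ 2 := by
    have e9 : A (x (k+1)) - z k = (z (k+1) - z k) + (A (x (k+1)) - z (k+1)) := by abel
    rw [e9, norm_add_sq_real]
  have J6 : 2 * ⟪(M₁ k) (x (k+1) - x k), x (k+1) - xs⟫_ℝ
      = opSq (M₁ k) (x (k+1) - x k) + opSq (M₁ k) (x (k+1) - xs)
        - opSq (M₁ k) (x k - xs) := by
    have p1 := admm_polarM (M₁ k) (hM₁ k).1 (x (k+1) - x k) (x (k+1) - xs)
    have e9 : x (k+1) - x k - (x (k+1) - xs) = -(x k - xs) := by abel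
    rw [e9, admm_opSq_neg] at p1
    linarith
  have J7 : 2 * ⟪(M₂ k) (z (k+1) - z k), z (k+1) - zs⟫_ℝ
      = opSq (M₂ k) (z (k+1) - z k) + opSq (M₂ k) (z (k+1) - zs)
        - opSq (M₂ k) (z k - zs) := by
    have p1 := admm_polarM (M₂ k) (hM₂ k).1 (z (k+1) - z k) (z (k+1) - zs)
    have e9 : z (k+1) - z k - (z (k+1) - zs) = -(z k - zs) := by abel
    rw [e9, admm_opSq_neg] at p1
    linarith
  -- rewrite the slack terms in the goal
  have J8 : ‖z k - A (x (k+1))‖ ^ 2 = ‖A (x (k+1)) - z k‖ ^ 2 := by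
    rw [norm_sub_rev]
  have J9 : opSq (M₁ k - (L/2) • ContinuousLinearMap.id ℝ H) (x k - x (k+1))
      = opSq (M₁ k) (x (k+1) - x k) - L/2 * ‖x (k+1) - x k‖ ^ 2 := by
    have e9 : x k - x (k+1) = -(x (k+1) - x k) := by abel
    rw [e9, admm_opSq_neg]
    have e10 : (M₁ k - (L/2) • ContinuousLinearMap.id ℝ H) (x (k+1) - x k)
        = (M₁ k) (x (k+1) - x k) - (L/2) • (x (k+1) - x k) := by
      rw [ContinuousLinearMap.sub_apply, ContinuousLinearMap.smul_apply,
        ContinuousLinearMap.id_apply]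
    show ⟪x (k+1) - x k, (M₁ k - (L/2) • ContinuousLinearMap.id ℝ H) (x (k+1) - x k)⟫_ℝ = _
    rw [e10, inner_sub_right, real_inner_smul_right, real_inner_self_eq_norm_sq]
    rfl
  have J10 : opSq (M₂ k) (z k - z (k+1)) = opSq (M₂ k) (z (k+1) - z k) := by
    have e9 : z k - z (k+1) = -(z (k+1) - z k) := by abel
    rw [e9, admm_opSq_neg]
  rw [J8, J9, J10]
  -- final combination
  have starx2 : 2 * c * (⟪c • (A (x (k+1)) - z k) + y k - ys, A (x (k+1)) - A xs⟫_ℝ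
      + ⟪(M₁ k) (x (k+1) - x k), x (k+1) - xs⟫_ℝ)
      ≤ 2 * c * (L/4 * ‖x (k+1) - x k‖ ^ 2) :=
    mul_le_mul_of_nonneg_left starx (by positivity)
  have starz2 : 2 * c * ⟪(M₂ k) (z (k+1) - z k), z (k+1) - zs⟫_ℝ
      ≤ 2 * c * ⟪y (k+1) - ys, z (k+1) - zs⟫_ℝ :=
    mul_le_mul_of_nonneg_left starz (by positivity)
  have J1c : 2 * c * ⟪c • (A (x (k+1)) - z k) + y k - ys, A (x (k+1)) - A xs⟫_ℝ
      = 2 * c * ⟪y (k+1) - ys, A (x (k+1)) - A xs⟫_ℝ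
        + 2 * c ^ 2 * ⟪z (k+1) - z k, A (x (k+1)) - A xs⟫_ℝ := by
    rw [J1]; ring
  have J2c : 2 * c * ⟪y (k+1) - ys, A (x (k+1)) - A xs⟫_ℝ
      = 2 * c * ⟪y (k+1) - ys, z (k+1) - zs⟫_ℝ
        + 2 * (c * ⟪y (k+1) - ys, A (x (k+1)) - z (k+1)⟫_ℝ) := by
    rw [J2]; ring
  have J2'c : 2 * c ^ 2 * ⟪z (k+1) - z k, A (x (k+1)) - A xs⟫_ℝ
      = c ^ 2 * (2 * ⟪z (k+1) - z k, z (k+1) - zs⟫_ℝ)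
        + c ^ 2 * (2 * ⟪z (k+1) - z k, A (x (k+1)) - z (k+1)⟫_ℝ) := by
    rw [J2']; ring
  have J6c : 2 * c * ⟪(M₁ k) (x (k+1) - x k), x (k+1) - xs⟫_ℝ
      = c * (opSq (M₁ k) (x (k+1) - x k) + opSq (M₁ k) (x (k+1) - xs)
        - opSq (M₁ k) (x k - xs)) := by
    rw [← J6]; ring
  have J7c : 2 * c * ⟪(M₂ k) (z (k+1) - z k), z (k+1) - zs⟫_ℝ
      = c * (opSq (M₂ k) (z (k+1) - z k) + opSq (M₂ k) (z (k+1) - zs)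
        - opSq (M₂ k) (z k - zs)) := by
    rw [← J7]; ring
  have J4c : c ^ 2 * (2 * ⟪z (k+1) - z k, z (k+1) - zs⟫_ℝ)
      = c ^ 2 * (‖z (k+1) - z k‖ ^ 2 + ‖z (k+1) - zs‖ ^ 2 - ‖z k - zs‖ ^ 2) := by
    rw [J4]
  have J5c : c ^ 2 * (2 * ⟪z (k+1) - z k, A (x (k+1)) - z (k+1)⟫_ℝ)
      = c ^ 2 * (‖A (x (k+1)) - z k‖ ^ 2 - ‖z (k+1) - z k‖ ^ 2
        - ‖A (x (k+1)) - z (k+1)‖ ^ 2) := by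
    rw [J5]; ring
  linarith [starx2, starz2, J1c, J2c, J2'c, J6c, J7c, J4c, J5c, J3]

end AuxStep

theorem stmt13 {H G : Type*}
    [NormedAddCommGroup H] [InnerProductSpace ℝ H] [CompleteSpace H]
    [NormedAddCommGroup G] [InnerProductSpace ℝ G] [CompleteSpace G]
    (f : H → EReal) (g : G → EReal)
    (hfp : ERealProper f) (hfc : ERealConvex f) (hfl : LowerSemicontinuous f)
    (hgp : ERealProper g) (hgc : ERealConvex g) (hgl : LowerSemicontinuous g)
    (h : H → ℝ) (h' : H → H) (L : ℝ) (hL : 0 < L)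
    (hconv : ConvexOn ℝ Set.univ h)
    (hgrad : ∀ p : H, HasGradientAt h (h' p) p)
    (hlip : LipschitzWith (Real.toNNReal L) h')
    (A : H →L[ℝ] G) (c : ℝ) (hc : 0 < c)
    (M₁ : ℕ → (H →L[ℝ] H)) (M₂ : ℕ → (G →L[ℝ] G))
    (hM₁ : ∀ k : ℕ, IsSplusOp (M₁ k)) (hM₂ : ∀ k : ℕ, IsSplusOp (M₂ k))
    (hM₁L : ∀ k : ℕ, IsSplusOp (M₁ k - (L/2) • ContinuousLinearMap.id ℝ H))
    (hM₁mono : ∀ k : ℕ, opLE (M₁ k) (M₁ (k+1)))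
    (hM₂mono : ∀ k : ℕ, opLE (M₂ k) (M₂ (k+1)))
    (x : ℕ → H) (z y : ℕ → G)
    (hx : ∀ k : ℕ, IsXUpdateGrad f h' A c (M₁ k) (x k) (z k) (y k) (x (k+1)))
    (hz : ∀ k : ℕ, IsZUpdate g c (M₂ k) (A (x (k+1))) (z k) (y k) (z (k+1)))
    (hy : ∀ k : ℕ, y (k+1) = y k + c • (A (x (k+1)) - z (k+1)))
    (hsaddle : ∃ (xs : H) (zs ys : G), IsSaddle (LagrH f h g A) xs zs ys) :
    Summable (fun k : ℕ => ‖z k - A (x (k+1))‖ ^ 2) ∧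
    Summable (fun k : ℕ => opSq (M₁ k - (L/2) • ContinuousLinearMap.id ℝ H) (x k - x (k+1))) ∧
    Summable (fun k : ℕ => opSq (M₂ k) (z k - z (k+1))) := by
  obtain ⟨xs, zs, ys, hsad⟩ := hsaddle
  obtain ⟨x₀, hx₀⟩ := hfp.2
  obtain ⟨z₀, hz₀⟩ := hgp.2
  have hcne : c ≠ 0 := ne_of_gt hc
  -- finiteness of f xs and g zs
  have hRne : LagrH f h g A x₀ z₀ ys ≠ ⊤ := by
    unfold LagrH
    exact (EReal.add_lt_top (EReal.add_lt_top (EReal.add_lt_top hx₀ (EReal.coe_ne_top _)).ne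
      hz₀).ne (EReal.coe_ne_top _)).ne
  have hLne : LagrH f h g A xs zs ys ≠ ⊤ :=
    ne_top_of_le_ne_top hRne (hsad x₀ z₀ ys).2
  have hfxs : f xs ≠ ⊤ := by
    intro hfx
    apply hLne
    unfold LagrH
    rw [hfx, EReal.top_add_of_ne_bot (EReal.coe_ne_bot _),
      EReal.top_add_of_ne_bot (hgp.1 zs), EReal.top_add_of_ne_bot (EReal.coe_ne_bot _)]
  have hfxsR : f xs = (((f xs).toReal : ℝ) : EReal) := (EReal.coe_toReal hfxs (hfp.1 xs)).symm
  have hgzs : g zs ≠ ⊤ := by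
    intro hgz
    apply hLne
    unfold LagrH
    rw [hgz]
    rw [EReal.add_top_of_ne_bot, EReal.top_add_of_ne_bot (EReal.coe_ne_bot _)]
    rw [ne_eq, EReal.add_eq_bot_iff]
    push_neg
    exact ⟨hfp.1 xs, EReal.coe_ne_bot _⟩
  have hgzsR : g zs = (((g zs).toReal : ℝ) : EReal) := (EReal.coe_toReal hgzs (hgp.1 zs)).symm
  -- A xs = zs
  have hAxs : A xs = zs := by
    have h1 := (hsad xs zs (ys + (A xs - zs))).1
    unfold LagrH at h1
    rw [hfxsR, hgzsR] at h1
    norm_cast at h1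
    rw [inner_add_left, real_inner_self_eq_norm_sq] at h1
    have h2 : ‖A xs - zs‖ ^ 2 ≤ 0 := by linarith
    have h3 : ‖A xs - zs‖ = 0 := by
      nlinarith [norm_nonneg (A xs - zs)]
    rw [norm_eq_zero, sub_eq_zero] at h3
    exact h3
  -- saddle minimality in x
  have hminx : ∀ p : H, f xs + ((h xs + ⟪ys, A xs - zs⟫_ℝ : ℝ) : EReal)
      ≤ f p + ((h p + ⟪ys, A p - zs⟫_ℝ : ℝ) : EReal) := by
    intro p
    have h2 := (hsad p zs ys).2
    unfold LagrH at h2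
    rw [hgzsR] at h2
    have eLs : f xs + ((h xs : ℝ) : EReal) + (((g zs).toReal : ℝ) : EReal)
          + ((⟪ys, A xs - zs⟫_ℝ : ℝ) : EReal)
        = (f xs + ((h xs + ⟪ys, A xs - zs⟫_ℝ : ℝ) : EReal)) + (((g zs).toReal : ℝ) : EReal) := by
      rw [EReal.coe_add]
      abel
    have eRs : f p + ((h p : ℝ) : EReal) + (((g zs).toReal : ℝ) : EReal)
          + ((⟪ys, A p - zs⟫_ℝ : ℝ) : EReal)
        = (f p + ((h p + ⟪ys, A p - zs⟫_ℝ : ℝ) : EReal)) + (((g zs).toReal : ℝ) : EReal) := by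
      rw [EReal.coe_add]
      abel
    rw [eLs, eRs] at h2
    exact admm_ereal_add_cancel _ h2
  -- saddle minimality in z
  have hminz : ∀ q : G, g zs + ((⟪ys, A xs - zs⟫_ℝ : ℝ) : EReal)
      ≤ g q + ((⟪ys, A xs - q⟫_ℝ : ℝ) : EReal) := by
    intro q
    have h2 := (hsad xs q ys).2
    unfold LagrH at h2
    rw [hfxsR] at h2
    have eLs : (((f xs).toReal : ℝ) : EReal) + ((h xs : ℝ) : EReal) + g zs
          + ((⟪ys, A xs - zs⟫_ℝ : ℝ) : EReal)
        = (g zs + ((⟪ys, A xs - zs⟫_ℝ : ℝ) : EReal))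
          + (((f xs).toReal + h xs : ℝ) : EReal) := by
      rw [EReal.coe_add]
      abel
    have eRs : (((f xs).toReal : ℝ) : EReal) + ((h xs : ℝ) : EReal) + g q
          + ((⟪ys, A xs - q⟫_ℝ : ℝ) : EReal)
        = (g q + ((⟪ys, A xs - q⟫_ℝ : ℝ) : EReal))
          + (((f xs).toReal + h xs : ℝ) : EReal) := by
      rw [EReal.coe_add]
      abel
    rw [eLs, eRs] at h2
    exact admm_ereal_add_cancel _ h2
  -- the per-step energy inequality
  have hstep := fun k : ℕ => admm_step f g hfp hfc hgp hgc h h' L hL hconv hgrad hlip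
    A c hc M₁ M₂ hM₁ hM₂ x z y hx hz hy xs zs ys hAxs hfxs hgzs hminx hminz k
  -- the energy
  set e : ℕ → ℝ := fun j => ‖y j - ys‖ ^ 2 + c ^ 2 * ‖z j - zs‖ ^ 2
    + c * opSq (M₁ j) (x j - xs) + c * opSq (M₂ j) (z j - zs) with he_def
  set d1 : ℕ → ℝ := fun k => c ^ 2 * ‖z k - A (x (k+1))‖ ^ 2 with hd1_def
  set d2 : ℕ → ℝ := fun k =>
    c * opSq (M₁ k - (L/2) • ContinuousLinearMap.id ℝ H) (x k - x (k+1)) with hd2_def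
  set d3 : ℕ → ℝ := fun k => c * opSq (M₂ k) (z k - z (k+1)) with hd3_def
  have hestep : ∀ k : ℕ, e (k+1) + (d1 k + d2 k + d3 k) ≤ e k := by
    intro k
    have hmono1 : c * opSq (M₁ (k+1)) (x (k+1) - xs) ≤ c * opSq (M₁ k) (x (k+1) - xs) :=
      mul_le_mul_of_nonneg_left (hM₁mono k (x (k+1) - xs)) hc.le
    have hmono2 : c * opSq (M₂ (k+1)) (z (k+1) - zs) ≤ c * opSq (M₂ k) (z (k+1) - zs) :=
      mul_le_mul_of_nonneg_left (hM₂mono k (z (k+1) - zs)) hc.le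
    have := hstep k
    simp only [he_def, hd1_def, hd2_def, hd3_def]
    linarith
  have hd1n : ∀ k, 0 ≤ d1 k := by
    intro k
    simp only [hd1_def]
    positivity
  have hd2n : ∀ k, 0 ≤ d2 k := by
    intro k
    simp only [hd2_def]
    exact mul_nonneg hc.le ((hM₁L k).2 _)
  have hd3n : ∀ k, 0 ≤ d3 k := by
    intro k
    simp only [hd3_def]
    exact mul_nonneg hc.le ((hM₂ k).2 _)
  have hen : ∀ j, 0 ≤ e j := by
    intro j
    simp only [he_def]
    have h1 := (hM₁ j).2 (x j - xs)
    have h2 := (hM₂ j).2 (z j - zs)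
    have h3 : opSq (M₁ j) (x j - xs) = ⟪x j - xs, (M₁ j) (x j - xs)⟫_ℝ := rfl
    have h4 : opSq (M₂ j) (z j - zs) = ⟪z j - zs, (M₂ j) (z j - zs)⟫_ℝ := rfl
    rw [h3, h4]
    positivity
  have hinv : ∀ n : ℕ, e n + ∑ i ∈ Finset.range n, (d1 i + d2 i + d3 i) ≤ e 0 := by
    intro n
    induction n with
    | zero => simp
    | succ n ih =>
      rw [Finset.sum_range_succ]
      have := hestep n
      linarith
  have hbound : ∀ n : ℕ, ∑ i ∈ Finset.range n, (d1 i + d2 i + d3 i) ≤ e 0 := by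
    intro n
    have := hinv n
    have := hen n
    linarith
  have hb1 : ∀ n : ℕ, ∑ i ∈ Finset.range n, d1 i ≤ e 0 := by
    intro n
    refine le_trans (Finset.sum_le_sum fun i _ => ?_) (hbound n)
    have := hd2n i
    have := hd3n i
    linarith
  have hb2 : ∀ n : ℕ, ∑ i ∈ Finset.range n, d2 i ≤ e 0 := by
    intro n
    refine le_trans (Finset.sum_le_sum fun i _ => ?_) (hbound n)
    have := hd1n i
    have := hd3n i
    linarith
  have hb3 : ∀ n : ℕ, ∑ i ∈ Finset.range n, d3 i ≤ e 0 := by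
    intro n
    refine le_trans (Finset.sum_le_sum fun i _ => ?_) (hbound n)
    have := hd1n i
    have := hd2n i
    linarith
  have hs1 : Summable d1 := summable_of_sum_range_le hd1n hb1
  have hs2 : Summable d2 := summable_of_sum_range_le hd2n hb2
  have hs3 : Summable d3 := summable_of_sum_range_le hd3n hb3
  refine ⟨?_, ?_, ?_⟩
  · have := hs1.mul_left ((c ^ 2)⁻¹)
    refine this.congr fun k => ?_
    simp only [hd1_def]
    field_simp
  · have := hs2.mul_left (c⁻¹)
    refine this.congr fun k => ?_
    simp only [hd2_def]
    field_simp
  · have := hs3.mul_left (c⁻¹)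
    refine this.congr fun k => ?_
    simp only [hd3_def]
    field_simp
end
end

section
/- Assume h = 0, the set of saddle points of the Lagrangian l is nonempty, M₁ᵏ ∈ S₊(H), M₁ᵏ ⪰ M₁^{k+1}, M₂ᵏ ∈ S₊(G) for all k ≥ 0, and additionally there exists α > 0 such that A*A ∈ P_α(H) and 2M₂^{k+1} ⪰ M₂ᵏ ⪰ M₂^{k+1} for all k ≥ 0. Then the sequence (xᵏ, zᵏ, yᵏ)_{k≥0} generated by the variable-metric ADMM algorithm converges weakly to a saddle point of l. -/
open scoped InnerProductSpace
open Filter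

noncomputable section

set_option linter.unusedSectionVars false
set_option maxHeartbeats 1000000

section AuxADMM

section S1
variable {E : Type*} [NormedAddCommGroup E] [InnerProductSpace ℝ E]

lemma opSq_expand {U : E →L[ℝ] E} (hU : IsSplusOp U) (a b : E) :
    opSq U (a + b) = opSq U a + 2 * ⟪U a, b⟫_ℝ + opSq U b := by
  have h1 : ⟪a, U b⟫_ℝ = ⟪U a, b⟫_ℝ := (hU.1 a b).symm
  have h2 : ⟪b, U a⟫_ℝ = ⟪U a, b⟫_ℝ := real_inner_comm _ _
  simp only [opSq, map_add, inner_add_left, inner_add_right]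
  linarith

lemma opSq_smul_vec {U : E →L[ℝ] E} (t : ℝ) (v : E) :
    opSq U (t • v) = t^2 * opSq U v := by
  simp only [opSq, map_smul, inner_smul_left, inner_smul_right, RCLike.star_def, conj_trivial]
  ring

lemma threept {U : E →L[ℝ] E} (hU : IsSplusOp U) (a a₀ : E) :
    2 * ⟪U (a - a₀), a⟫_ℝ = opSq U a - opSq U a₀ + opSq U (a - a₀) := by
  have he : opSq U a = opSq U (a - a₀) + 2 * ⟪U (a - a₀), a₀⟫_ℝ + opSq U a₀ := by
    have := opSq_expand hU (a - a₀) a₀; rwa [sub_add_cancel] at this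
  have h2 : ⟪U (a - a₀), a⟫_ℝ = opSq U (a - a₀) + ⟪U (a - a₀), a₀⟫_ℝ := by
    have h3 : ⟪U (a - a₀), a - a₀⟫_ℝ = opSq U (a - a₀) := real_inner_comm _ _
    have h4 : ⟪U (a - a₀), a - a₀⟫_ℝ = ⟪U (a - a₀), a⟫_ℝ - ⟪U (a - a₀), a₀⟫_ℝ := inner_sub_right _ _ _
    linarith
  linarith

lemma cs_sq {U : E →L[ℝ] E} (hU : IsSplusOp U) (u v : E) :
    ⟪U u, v⟫_ℝ ^ 2 ≤ opSq U u * opSq U v := by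
  have key : ∀ t : ℝ, 0 ≤ opSq U v * (t * t) + 2 * ⟪U u, v⟫_ℝ * t + opSq U u := by
    intro t
    have := hU.2 (u + t • v)
    have he : opSq U (u + t • v) = opSq U u + 2 * (t * ⟪U u, v⟫_ℝ) + t^2 * opSq U v := by
      rw [opSq_expand hU u (t • v), inner_smul_right, opSq_smul_vec]
    have h0 : (0:ℝ) ≤ opSq U (u + t • v) := this
    rw [he] at h0; linarith
  have hd : discrim (opSq U v) (2 * ⟪U u, v⟫_ℝ) (opSq U u) ≤ 0 := discrim_le_zero key
  rw [discrim] at hd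
  nlinarith [hd]

lemma cs_abs {U : E →L[ℝ] E} (hU : IsSplusOp U) (u v : E) :
    |⟪U u, v⟫_ℝ| ≤ Real.sqrt (opSq U u) * Real.sqrt (opSq U v) := by
  have h := cs_sq hU u v
  have : |⟪U u, v⟫_ℝ| = Real.sqrt (⟪U u, v⟫_ℝ ^ 2) := (Real.sqrt_sq_eq_abs _).symm
  rw [this]
  have h2 : Real.sqrt (opSq U u * opSq U v) = Real.sqrt (opSq U u) * Real.sqrt (opSq U v) :=
    Real.sqrt_mul (hU.2 u) _
  rw [← h2]
  exact Real.sqrt_le_sqrt h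

lemma cross2 {U : E →L[ℝ] E} (hU : IsSplusOp U) (u v : E) :
    2 * ⟪U u, v⟫_ℝ ≤ opSq U u + opSq U v := by
  have h := hU.2 (u - v)
  have he : opSq U (u - v) = opSq U u - 2 * ⟪U u, v⟫_ℝ + opSq U v := by
    have := opSq_expand hU u (-v)
    simpa [sub_eq_add_neg, inner_neg_right, opSq, map_neg, inner_neg_left, inner_neg_right] using this
  have h0 : (0:ℝ) ≤ opSq U (u - v) := h
  rw [he] at h0; linarith

lemma opSq_smul_op (t : ℝ) (U : E →L[ℝ] E) (v : E) : opSq (t • U) v = t * opSq U v := by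
  simp [opSq, ContinuousLinearMap.smul_apply, inner_smul_right]

lemma opSq_le_norm {U : E →L[ℝ] E} (v : E) : opSq U v ≤ ‖U‖ * ‖v‖^2 := by
  calc opSq U v ≤ ‖v‖ * ‖U v‖ := real_inner_le_norm _ _
  _ ≤ ‖v‖ * (‖U‖ * ‖v‖) := by
      apply mul_le_mul_of_nonneg_left (U.le_opNorm v) (norm_nonneg v)
  _ = ‖U‖ * ‖v‖^2 := by ring

end S1


section S2
variable {E F : Type*} [NormedAddCommGroup E] [InnerProductSpace ℝ E] [CompleteSpace E]
  [NormedAddCommGroup F] [InnerProductSpace ℝ F] [CompleteSpace F]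

lemma min_finite {f : E → EReal} (hfp : ERealProper f) {xp : E} {Q : E → ℝ}
    (hmin : ∀ u, f xp + ((Q xp : ℝ) : EReal) ≤ f u + ((Q u : ℝ) : EReal)) :
    ∃ r : ℝ, f xp = (r : EReal) := by
  obtain ⟨u₀, hu₀⟩ := hfp.2
  have h := hmin u₀
  have hne : f xp ≠ ⊤ := by
    intro htop
    rw [htop] at h
    have hl : (⊤ : EReal) + ((Q xp : ℝ) : EReal) = ⊤ := EReal.top_add_coe _
    rw [hl, top_le_iff] at h
    have : f u₀ + ((Q u₀ : ℝ) : EReal) < ⊤ := by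
      apply EReal.add_lt_top
      · exact Ne.lt_top hu₀ |>.ne
      · exact EReal.coe_ne_top _
    rw [h] at this; exact lt_irrefl _ this
  exact ⟨(f xp).toReal, (EReal.coe_toReal hne (hfp.1 xp)).symm⟩

lemma min_subgrad {f : E → EReal} (hfc : ERealConvex f)
    (A : E →L[ℝ] F) (c : ℝ) (hc : 0 < c) (M : E →L[ℝ] E) (hM : IsSplusOp M)
    (b : F) (s xp : E)
    (hmin : ∀ u, f xp + (((c/2) * ‖A xp - b‖^2 + (1/2) * opSq M (xp - s) : ℝ) : EReal)
      ≤ f u + (((c/2) * ‖A u - b‖^2 + (1/2) * opSq M (u - s) : ℝ) : EReal))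
    {rp : ℝ} (hrp : f xp = (rp : EReal)) {u : E} {r : ℝ} (hr : f u = (r : EReal)) :
    rp ≤ r + ⟪c • (ContinuousLinearMap.adjoint A) (A xp - b) + M (xp - s), u - xp⟫_ℝ := by
  set v := u - xp with hv
  set gv := ⟪c • (ContinuousLinearMap.adjoint A) (A xp - b) + M (xp - s), v⟫_ℝ with hgv
  set Cv := (c/2) * ‖A v‖^2 + (1/2) * opSq M v with hCv
  have hCv0 : 0 ≤ Cv := by
    have h1 : (0:ℝ) ≤ ‖A v‖^2 := sq_nonneg _
    have h2 : (0:ℝ) ≤ opSq M v := hM.2 v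
    have : (0:ℝ) < c := hc
    positivity
  have hgexp : gv = c * ⟪A xp - b, A v⟫_ℝ + ⟪M (xp - s), v⟫_ℝ := by
    rw [hgv, inner_add_left, real_inner_smul_left, ContinuousLinearMap.adjoint_inner_left]
  have key : ∀ t : ℝ, 0 < t → t ≤ 1 → rp - r - gv ≤ t * Cv := by
    intro t ht0 ht1
    set xt := xp + t • v with hxt
    -- convexity bound
    have hcomb : (1 - t) • xp + t • u = xt := by
      rw [hxt, hv]; module
    have hconv : f xt ≤ (((1-t) * rp + t * r : ℝ) : EReal) := by
      have := hfc xp u (1-t) t (by linarith) (le_of_lt ht0) (by ring)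
      rw [hcomb, hrp, hr] at this
      calc f xt ≤ ((1-t : ℝ) : EReal) * ((rp:ℝ) : EReal) + ((t:ℝ) : EReal) * ((r:ℝ):EReal) := this
      _ = (((1-t) * rp + t * r : ℝ) : EReal) := by
          rw [← EReal.coe_mul, ← EReal.coe_mul, ← EReal.coe_add]
    -- quadratic expansion
    have hAxt : A xt = (A xp) + t • (A v) := by rw [hxt]; simp [map_add, map_smul]
    have hQ1 : ‖A xt - b‖^2 = ‖A xp - b‖^2 + 2 * (t * ⟪A xp - b, A v⟫_ℝ) + t^2 * ‖A v‖^2 := by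
      have h0 : A xt - b = (A xp - b) + t • (A v) := by rw [hAxt]; abel
      rw [h0, norm_add_sq_real, inner_smul_right, norm_smul]
      simp [mul_pow, sq_abs]
    have hQ2 : opSq M (xt - s) = opSq M (xp - s) + 2 * (t * ⟪M (xp - s), v⟫_ℝ) + t^2 * opSq M v := by
      have h0 : xt - s = (xp - s) + t • v := by rw [hxt]; abel
      rw [h0, opSq_expand hM, inner_smul_right, opSq_smul_vec]
    -- minimality at xt
    have hm := hmin xt
    rw [hrp] at hm
    have hm2 : rp + ((c/2) * ‖A xp - b‖^2 + (1/2) * opSq M (xp - s))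
        ≤ ((1-t) * rp + t * r) + ((c/2) * ‖A xt - b‖^2 + (1/2) * opSq M (xt - s)) := by
      have h1 := le_trans hm (add_le_add_left hconv
        (((c/2) * ‖A xt - b‖^2 + (1/2) * opSq M (xt - s) : ℝ) : EReal))
      exact_mod_cast h1
    rw [hQ1, hQ2] at hm2
    have hexp : rp - r - gv ≤ t * Cv ↔ True := by
      constructor
      · intro _; trivial
      · intro _
        rw [hgexp, hCv]
        nlinarith [hm2, ht0]
    exact hexp.mpr trivial
  -- take t → 0
  have hseq : ∀ n : ℕ, rp - r - gv ≤ (1/((n:ℝ)+1)) * Cv := by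
    intro n
    apply key
    · positivity
    · rw [div_le_one (by positivity)]; linarith [Nat.cast_nonneg (α := ℝ) n]
  have hlim : Tendsto (fun n : ℕ => (1/((n:ℝ)+1)) * Cv) atTop (nhds 0) := by
    have h0 : Tendsto (fun n : ℕ => 1/((n:ℝ)+1)) atTop (nhds 0) :=
      tendsto_one_div_add_atTop_nhds_zero_nat
    have := h0.mul_const Cv
    simpa using this
  have : rp - r - gv ≤ 0 := ge_of_tendsto hlim (Eventually.of_forall hseq)
  linarith

end S2


section S3
variable {E : Type*} [NormedAddCommGroup E] [InnerProductSpace ℝ E] [CompleteSpace E]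

lemma weak_compact (u : ℕ → E) (B : ℝ) (hB : ∀ n, ‖u n‖ ≤ B) :
    ∃ (p : E) (φ : ℕ → ℕ), StrictMono φ ∧ WeakConv (fun j => u (φ j)) p := by
  have hB0 : 0 ≤ B := le_trans (norm_nonneg _) (hB 0)
  -- diagonal extraction against the countable family (u n)
  set X := ∀ n : ℕ, Set.Icc (-(B * ‖u n‖)) (B * ‖u n‖) with hX
  have hmem : ∀ j n : ℕ, ⟪u j, u n⟫_ℝ ∈ Set.Icc (-(B * ‖u n‖)) (B * ‖u n‖) := by
    intro j n
    have h1 : |⟪u j, u n⟫_ℝ| ≤ ‖u j‖ * ‖u n‖ := abs_real_inner_le_norm _ _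
    have h2 : ‖u j‖ * ‖u n‖ ≤ B * ‖u n‖ :=
      mul_le_mul_of_nonneg_right (hB j) (norm_nonneg _)
    rw [Set.mem_Icc]
    constructor
    · linarith [neg_abs_le ⟪u j, u n⟫_ℝ]
    · linarith [le_abs_self ⟪u j, u n⟫_ℝ]
  set V : ℕ → X := fun j n => ⟨⟪u j, u n⟫_ℝ, hmem j n⟩ with hV
  obtain ⟨a, φ, hφ, hconv⟩ := SeqCompactSpace.tendsto_subseq V
  have hcoord : ∀ n, Tendsto (fun j => ⟪u (φ j), u n⟫_ℝ) atTop (nhds (a n).1) := by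
    intro n
    have h1 : Tendsto (fun j => (V ∘ φ) j n) atTop (nhds (a n)) := tendsto_pi_nhds.mp hconv n
    exact (continuous_subtype_val.tendsto (a n)).comp h1
  -- the closed span
  set K := (Submodule.span ℝ (Set.range u)).topologicalClosure with hK
  have hKclosed : IsClosed (K : Set E) := Submodule.isClosed_topologicalClosure _
  haveI : CompleteSpace K := hKclosed.completeSpace_coe
  haveI : K.HasOrthogonalProjection := by infer_instance
  have huK : ∀ n, u n ∈ K := fun n =>
    Submodule.le_topologicalClosure _ (Submodule.subset_span (Set.mem_range_self n))
  -- convergence for span elements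
  have hspan : ∀ w ∈ Submodule.span ℝ (Set.range u),
      ∃ l, Tendsto (fun j => ⟪u (φ j), w⟫_ℝ) atTop (nhds l) := by
    intro w hw
    induction hw using Submodule.span_induction with
    | mem w hw =>
        obtain ⟨n, rfl⟩ := hw
        exact ⟨(a n).1, hcoord n⟩
    | zero => exact ⟨0, by simpa using tendsto_const_nhds⟩
    | add w₁ w₂ h₁ h₂ ih₁ ih₂ =>
        obtain ⟨l₁, hl₁⟩ := ih₁; obtain ⟨l₂, hl₂⟩ := ih₂
        exact ⟨l₁ + l₂, by simpa [inner_add_right] using hl₁.add hl₂⟩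
    | smul t w hw ih =>
        obtain ⟨l, hl⟩ := ih
        refine ⟨t * l, ?_⟩
        have := hl.const_mul t
        simpa [real_inner_smul_right] using this
  -- convergence for elements of K
  have hKconv : ∀ w ∈ K, ∃ l, Tendsto (fun j => ⟪u (φ j), w⟫_ℝ) atTop (nhds l) := by
    intro w hw
    have hcauchy : CauchySeq (fun j => ⟪u (φ j), w⟫_ℝ) := by
      rw [Metric.cauchySeq_iff]
      intro ε hε
      have hwcl : w ∈ closure ((Submodule.span ℝ (Set.range u) : Submodule ℝ E) : Set E) := by
        rw [hK] at hw
        exact hw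
      rw [Metric.mem_closure_iff] at hwcl
      obtain ⟨w', hw'span, hw'close⟩ := hwcl (ε / (4 * B + 4)) (by positivity)
      obtain ⟨l', hl'⟩ := hspan w' hw'span
      have hc' : CauchySeq (fun j => ⟪u (φ j), w'⟫_ℝ) := hl'.cauchySeq
      rw [Metric.cauchySeq_iff] at hc'
      obtain ⟨N, hN⟩ := hc' (ε / 2) (by positivity)
      refine ⟨N, fun m hm n hn => ?_⟩
      have hdiff : ∀ k, |⟪u (φ k), w⟫_ℝ - ⟪u (φ k), w'⟫_ℝ| ≤ B * (ε / (4 * B + 4)) := by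
        intro k
        have h1 : ⟪u (φ k), w⟫_ℝ - ⟪u (φ k), w'⟫_ℝ = ⟪u (φ k), w - w'⟫_ℝ := by
          rw [inner_sub_right]
        rw [h1]
        have h2 : |⟪u (φ k), w - w'⟫_ℝ| ≤ ‖u (φ k)‖ * ‖w - w'‖ := abs_real_inner_le_norm _ _
        have h3 : ‖u (φ k)‖ * ‖w - w'‖ ≤ B * ‖w - w'‖ :=
          mul_le_mul_of_nonneg_right (hB _) (norm_nonneg _)
        have h4 : ‖w - w'‖ < ε / (4 * B + 4) := by
          rw [← dist_eq_norm]; exact hw'close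
        have h5 : B * ‖w - w'‖ ≤ B * (ε / (4 * B + 4)) :=
          mul_le_mul_of_nonneg_left (le_of_lt h4) hB0
        linarith
      have hsmall : B * (ε / (4 * B + 4)) ≤ ε / 4 := by
        rw [← mul_div_assoc, div_le_div_iff₀ (by positivity) (by norm_num : (0:ℝ) < 4)]
        nlinarith [hε]
      have h6 := hN m hm n hn
      rw [Real.dist_eq] at h6 ⊢
      have d1 := hdiff m
      have d2 := hdiff n
      have : |⟪u (φ m), w⟫_ℝ - ⟪u (φ n), w⟫_ℝ| ≤
          |⟪u (φ m), w⟫_ℝ - ⟪u (φ m), w'⟫_ℝ| + |⟪u (φ m), w'⟫_ℝ - ⟪u (φ n), w'⟫_ℝ|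
            + |⟪u (φ n), w'⟫_ℝ - ⟪u (φ n), w⟫_ℝ| := by
        have := abs_sub_le (⟪u (φ m), w⟫_ℝ) (⟪u (φ m), w'⟫_ℝ) (⟪u (φ n), w⟫_ℝ)
        have := abs_sub_le (⟪u (φ m), w'⟫_ℝ) (⟪u (φ n), w'⟫_ℝ) (⟪u (φ n), w⟫_ℝ)
        linarith [abs_sub_le (⟪u (φ m), w⟫_ℝ) (⟪u (φ m), w'⟫_ℝ) (⟪u (φ n), w⟫_ℝ)]
      rw [abs_sub_comm (⟪u (φ n), w'⟫_ℝ)] at this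
      linarith
    exact cauchySeq_tendsto_of_complete hcauchy
  -- convergence for all w via orthogonal projection
  have hall : ∀ w : E, ∃ l, Tendsto (fun j => ⟪u (φ j), w⟫_ℝ) atTop (nhds l) := by
    intro w
    obtain ⟨l, hl⟩ := hKconv ((K.orthogonalProjection w : E)) (K.orthogonalProjection w).2
    refine ⟨l, ?_⟩
    have horth : ∀ j, ⟪u (φ j), w⟫_ℝ = ⟪u (φ j), (K.orthogonalProjection w : E)⟫_ℝ := by
      intro j
      have hmem' : w - (K.orthogonalProjection w : E) ∈ Kᗮ :=
        Submodule.sub_starProjection_mem_orthogonal (K := K) w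
      have h0 : ⟪u (φ j), w - (K.orthogonalProjection w : E)⟫_ℝ = 0 :=
        (Submodule.mem_orthogonal K _).mp hmem' _ (huK _)
      rw [inner_sub_right] at h0
      linarith
    simpa only [horth] using hl
  choose l hl using hall
  -- build the limit functional
  have hmap_add : ∀ w₁ w₂, l (w₁ + w₂) = l w₁ + l w₂ := by
    intro w₁ w₂
    have h1 : Tendsto (fun j => ⟪u (φ j), w₁ + w₂⟫_ℝ) atTop (nhds (l w₁ + l w₂)) := by
      simpa [inner_add_right] using (hl w₁).add (hl w₂)
    exact tendsto_nhds_unique (hl _) h1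
  have hmap_smul : ∀ (t : ℝ) w, l (t • w) = t * l w := by
    intro t w
    have h1 : Tendsto (fun j => ⟪u (φ j), t • w⟫_ℝ) atTop (nhds (t * l w)) := by
      simpa [real_inner_smul_right] using (hl w).const_mul t
    exact tendsto_nhds_unique (hl _) h1
  have hbound : ∀ w, ‖l w‖ ≤ B * ‖w‖ := by
    intro w
    rw [Real.norm_eq_abs, abs_le]
    constructor
    · apply ge_of_tendsto (hl w)
      apply Eventually.of_forall
      intro j
      have := abs_real_inner_le_norm (u (φ j)) w
      have h2 : ‖u (φ j)‖ * ‖w‖ ≤ B * ‖w‖ := mul_le_mul_of_nonneg_right (hB _) (norm_nonneg _)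
      rw [abs_le] at this
      linarith [this.1]
    · apply le_of_tendsto (hl w)
      apply Eventually.of_forall
      intro j
      have := abs_real_inner_le_norm (u (φ j)) w
      have h2 : ‖u (φ j)‖ * ‖w‖ ≤ B * ‖w‖ := mul_le_mul_of_nonneg_right (hB _) (norm_nonneg _)
      rw [abs_le] at this
      linarith [this.2]
  set Flin : E →ₗ[ℝ] ℝ :=
    { toFun := l, map_add' := hmap_add, map_smul' := fun t w => by simpa using hmap_smul t w }
    with hFlin
  set Fc : E →L[ℝ] ℝ := Flin.mkContinuous B hbound with hFc
  set p : E := (InnerProductSpace.toDual ℝ E).symm Fc with hp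
  refine ⟨p, φ, hφ, fun w => ?_⟩
  have hpw : ⟪p, w⟫_ℝ = l w := by
    have h1 : (InnerProductSpace.toDual ℝ E) p = Fc := by
      rw [hp]; exact (InnerProductSpace.toDual ℝ E).apply_symm_apply Fc
    have h2 : ((InnerProductSpace.toDual ℝ E) p) w = ⟪p, w⟫_ℝ := InnerProductSpace.toDual_apply_apply
    rw [h1] at h2
    exact h2.symm
  rw [hpw]
  exact hl w

end S3


section S4
variable {E : Type*} [NormedAddCommGroup E] [InnerProductSpace ℝ E] [CompleteSpace E]

lemma ereal_finite_of_le_coe {f : E → EReal} (hbot : ∀ x, f x ≠ ⊥) {x : E} {t : ℝ}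
    (h : f x ≤ (t : EReal)) : ∃ r : ℝ, f x = (r : EReal) ∧ r ≤ t := by
  have hne : f x ≠ ⊤ := (lt_of_le_of_lt h (EReal.coe_lt_top t)).ne
  refine ⟨(f x).toReal, (EReal.coe_toReal hne (hbot x)).symm, ?_⟩
  have := EReal.coe_toReal hne (hbot x)
  rw [← this] at h
  exact_mod_cast h

lemma weak_lsc (f : E → EReal) (hfp : ERealProper f) (hfc : ERealConvex f)
    (hfl : LowerSemicontinuous f) (u : ℕ → E) (p : E) (hu : WeakConv u p)
    (r : ℕ → ℝ) (ρ : ℝ) (hr : Tendsto r atTop (nhds ρ)) (hle : ∀ n, f (u n) ≤ ((r n : ℝ) : EReal)) :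
    f p ≤ ((ρ : ℝ) : EReal) := by
  by_contra hcon
  push_neg at hcon
  set C : Set (E × ℝ) := {q | f q.1 ≤ ((q.2 : ℝ) : EReal)} with hC
  -- C is closed
  have hclosed : IsClosed C := by
    rw [← isOpen_compl_iff, isOpen_iff_mem_nhds]
    rintro ⟨x, t⟩ hxt
    have hlt : ((t : ℝ) : EReal) < f x := by
      simp only [hC, Set.mem_compl_iff, Set.mem_setOf_eq, not_le] at hxt
      exact hxt
    obtain ⟨m, hm1, hm2⟩ := EReal.exists_between_coe_real hlt
    have hev : ∀ᶠ x' in nhds x, ((m : ℝ) : EReal) < f x' := hfl x _ hm2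
    rw [nhds_prod_eq]
    apply Filter.mem_of_superset (Filter.prod_mem_prod hev (Iio_mem_nhds (by exact_mod_cast hm1)))
    rintro ⟨x', t'⟩ ⟨h1, h2⟩
    simp only [hC, Set.mem_compl_iff, Set.mem_setOf_eq, not_le]
    calc ((t' : ℝ) : EReal) < ((m : ℝ) : EReal) := by exact_mod_cast h2
    _ < f x' := h1
  -- C is convex
  have hconv : Convex ℝ C := by
    rintro q₁ hq₁ q₂ hq₂ a b ha hb hab
    obtain ⟨r₁, hr₁, hr₁le⟩ := ereal_finite_of_le_coe hfp.1 hq₁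
    obtain ⟨r₂, hr₂, hr₂le⟩ := ereal_finite_of_le_coe hfp.1 hq₂
    have hfst : (a • q₁ + b • q₂).1 = a • q₁.1 + b • q₂.1 := rfl
    have hsnd : (a • q₁ + b • q₂).2 = a * q₁.2 + b * q₂.2 := rfl
    simp only [hC, Set.mem_setOf_eq, hfst, hsnd]
    calc f (a • q₁.1 + b • q₂.1) ≤ (a : EReal) * f q₁.1 + (b : EReal) * f q₂.1 :=
          hfc _ _ a b ha hb hab
    _ = ((a * r₁ + b * r₂ : ℝ) : EReal) := by
        rw [hr₁, hr₂, ← EReal.coe_mul, ← EReal.coe_mul, ← EReal.coe_add]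
    _ ≤ ((a * q₁.2 + b * q₂.2 : ℝ) : EReal) := by
        apply EReal.coe_le_coe_iff.mpr
        have := mul_le_mul_of_nonneg_left hr₁le ha
        have := mul_le_mul_of_nonneg_left hr₂le hb
        linarith
  -- (p, ρ) ∉ C
  have hnotin : (p, ρ) ∉ C := by
    simp only [hC, Set.mem_setOf_eq, not_le]
    exact hcon
  obtain ⟨Φ, s, hΦC, hΦp⟩ := geometric_hahn_banach_closed_point hconv hclosed hnotin
  set w : E := (InnerProductSpace.toDual ℝ E).symm (Φ.comp (ContinuousLinearMap.inl ℝ E ℝ)) with hw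
  set cst : ℝ := Φ (0, 1) with hcst
  have hdecomp : ∀ q : E × ℝ, Φ q = ⟪w, q.1⟫_ℝ + q.2 * cst := by
    rintro ⟨q1, q2⟩
    have h1 : (q1, q2) = ((q1, 0) : E × ℝ) + (0, q2) := by simp
    have h2 : ((0 : E), q2) = q2 • ((0 : E), (1:ℝ)) := by simp
    have h3 : Φ (q1, 0) = ⟪w, q1⟫_ℝ := by
      have h4 : (InnerProductSpace.toDual ℝ E) w = Φ.comp (ContinuousLinearMap.inl ℝ E ℝ) := by
        rw [hw]; exact (InnerProductSpace.toDual ℝ E).apply_symm_apply _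
      have h5 : ((InnerProductSpace.toDual ℝ E) w) q1 = ⟪w, q1⟫_ℝ := InnerProductSpace.toDual_apply_apply
      rw [h4] at h5
      exact h5
    rw [h1, map_add, h3, h2, map_smul]
    simp [hcst, smul_eq_mul]
  have hlim : Tendsto (fun n => Φ (u n, r n)) atTop (nhds (Φ (p, ρ))) := by
    rw [hdecomp (p, ρ)]
    have h1 : Tendsto (fun n => ⟪w, u n⟫_ℝ) atTop (nhds ⟪w, p⟫_ℝ) := by
      have := hu w
      simp_rw [real_inner_comm] at this ⊢
      exact this
    have h2 : Tendsto (fun n => r n * cst) atTop (nhds (ρ * cst)) := hr.mul_const cst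
    have := h1.add h2
    simp_rw [hdecomp]
    exact this
  have hlt : ∀ n, Φ (u n, r n) < s := fun n => hΦC _ (hle n)
  have : Φ (p, ρ) ≤ s := le_of_tendsto hlim (Eventually.of_forall (fun n => le_of_lt (hlt n)))
  linarith [hΦp]

end S4

section S5
variable {E : Type*} [NormedAddCommGroup E] [InnerProductSpace ℝ E] [CompleteSpace E]

lemma opSq_le_norm' {U : E →L[ℝ] E} (v : E) : opSq U v ≤ ‖U‖ * ‖v‖^2 := by
  calc opSq U v ≤ ‖v‖ * ‖U v‖ := real_inner_le_norm _ _
  _ ≤ ‖v‖ * (‖U‖ * ‖v‖) := mul_le_mul_of_nonneg_left (U.le_opNorm v) (norm_nonneg v)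
  _ = ‖U‖ * ‖v‖^2 := by ring

lemma cs_sq' {U : E →L[ℝ] E} (hU : IsSplusOp U) (u v : E) :
    ⟪U u, v⟫_ℝ ^ 2 ≤ opSq U u * opSq U v := by
  have hexp : ∀ a b : E, opSq U (a + b) = opSq U a + 2 * ⟪U a, b⟫_ℝ + opSq U b := by
    intro a b
    have h1 : ⟪a, U b⟫_ℝ = ⟪U a, b⟫_ℝ := (hU.1 a b).symm
    have h2 : ⟪b, U a⟫_ℝ = ⟪U a, b⟫_ℝ := real_inner_comm _ _
    simp only [opSq, map_add, inner_add_left, inner_add_right]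
    linarith
  have key : ∀ t : ℝ, 0 ≤ opSq U v * (t * t) + 2 * ⟪U u, v⟫_ℝ * t + opSq U u := by
    intro t
    have h0 : (0:ℝ) ≤ opSq U (u + t • v) := hU.2 _
    have he : opSq U (u + t • v) = opSq U u + 2 * (t * ⟪U u, v⟫_ℝ) + t^2 * opSq U v := by
      rw [hexp u (t • v), inner_smul_right]
      have : opSq U (t • v) = t^2 * opSq U v := by
        simp only [opSq, map_smul, inner_smul_left, inner_smul_right, RCLike.star_def, conj_trivial]
        ring
      rw [this]
    rw [he] at h0; nlinarith
  have hd : discrim (opSq U v) (2 * ⟪U u, v⟫_ℝ) (opSq U u) ≤ 0 := discrim_le_zero key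
  rw [discrim] at hd
  nlinarith [hd]

lemma psd_limit (M : ℕ → E →L[ℝ] E) (hM : ∀ k, IsSplusOp (M k))
    (hmono : ∀ k, opLE (M k) (M (k+1))) :
    ∃ L : E → E, ∀ d, Tendsto (fun k => M k d) atTop (nhds (L d)) := by
  have hanti : ∀ d, Antitone (fun k => opSq (M k) d) := fun d =>
    antitone_nat_of_succ_le (fun k => hmono k d)
  have hformle : ∀ m n, m ≤ n → ∀ v, opSq (M n) v ≤ opSq (M m) v := by
    intro m n hmn v
    exact hanti v hmn
  have hbdd : ∀ d, BddBelow (Set.range (fun k => opSq (M k) d)) :=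
    fun d => ⟨0, by rintro q ⟨k, rfl⟩; exact (hM k).2 d⟩
  have hqlim : ∀ d, Tendsto (fun k => opSq (M k) d) atTop (nhds (⨅ k, opSq (M k) d)) :=
    fun d => tendsto_atTop_ciInf (hanti d) (hbdd d)
  have hcauchy : ∀ d, CauchySeq (fun k => M k d) := by
    intro d
    set I := ⨅ k, opSq (M k) d with hI
    have hIle : ∀ k, I ≤ opSq (M k) d := fun k => ciInf_le (hbdd d) k
    apply cauchySeq_of_le_tendsto_0 (fun N => Real.sqrt (‖M 0‖ * (opSq (M N) d - I)))
    · intro m n N hm hn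
      -- key bound for ordered pairs
      have key : ∀ i j : ℕ, i ≤ j → ‖M i d - M j d‖^2 ≤ ‖M 0‖ * (opSq (M i) d - opSq (M j) d) := by
        intro i j hij
        set Nop := M i - M j with hNop
        have hNapp : ∀ v, Nop v = M i v - M j v := fun v => rfl
        have hNsym : ∀ a b : E, ⟪Nop a, b⟫_ℝ = ⟪a, Nop b⟫_ℝ := by
          intro a b
          rw [hNapp, hNapp, inner_sub_left, inner_sub_right, (hM i).1, (hM j).1]
        have hNpos : ∀ v, 0 ≤ ⟪v, Nop v⟫_ℝ := by
          intro v
          have := hformle i j hij v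
          simp only [opSq] at this
          rw [hNapp, inner_sub_right]
          linarith
        have hNSplus : IsSplusOp Nop := ⟨hNsym, hNpos⟩
        have hNle0 : ∀ v, opSq Nop v ≤ opSq (M 0) v := by
          intro v
          have h1 := hformle 0 i (Nat.zero_le i) v
          have h2 : 0 ≤ opSq (M j) v := (hM j).2 v
          simp only [opSq] at h1 h2 ⊢
          rw [hNapp, inner_sub_right]
          linarith
        have hcs := cs_sq' hNSplus d (Nop d)
        have h3 : opSq Nop (Nop d) ≤ ‖M 0‖ * ‖Nop d‖^2 :=
          le_trans (hNle0 (Nop d)) (opSq_le_norm' _)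
        have h4 : ⟪Nop d, Nop d⟫_ℝ = ‖Nop d‖^2 := real_inner_self_eq_norm_sq _
        have h5 : (‖Nop d‖^2)^2 ≤ opSq Nop d * (‖M 0‖ * ‖Nop d‖^2) := by
          calc (‖Nop d‖^2)^2 = ⟪Nop d, Nop d⟫_ℝ^2 := by rw [h4]
          _ ≤ opSq Nop d * opSq Nop (Nop d) := hcs
          _ ≤ opSq Nop d * (‖M 0‖ * ‖Nop d‖^2) :=
              mul_le_mul_of_nonneg_left h3 (hNpos d)
        have h6 : opSq Nop d = opSq (M i) d - opSq (M j) d := by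
          simp only [opSq]; rw [hNapp, inner_sub_right]
        have h7 : ‖Nop d‖^2 ≤ ‖M 0‖ * (opSq (M i) d - opSq (M j) d) := by
          rcases eq_or_lt_of_le (sq_nonneg ‖Nop d‖) with h | h
          · rw [← h, ← h6]
            have := hNpos d
            positivity
          · have h5' := h5
            rw [h6] at h5'
            have h9 : ‖Nop d‖^2 * ‖Nop d‖^2 ≤ (‖M 0‖ * (opSq (M i) d - opSq (M j) d)) * ‖Nop d‖^2 := by
              calc ‖Nop d‖^2 * ‖Nop d‖^2 = (‖Nop d‖^2)^2 := by ring
              _ ≤ (opSq (M i) d - opSq (M j) d) * (‖M 0‖ * ‖Nop d‖^2) := h5'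
              _ = (‖M 0‖ * (opSq (M i) d - opSq (M j) d)) * ‖Nop d‖^2 := by ring
            exact le_of_mul_le_mul_right h9 h
        exact h7
      have hend : ∀ i j : ℕ, i ≤ j → N ≤ i →
          dist (M i d) (M j d) ≤ Real.sqrt (‖M 0‖ * (opSq (M N) d - I)) := by
        intro i j hij hNi
        rw [dist_eq_norm]
        have h1 := key i j hij
        have h2 : opSq (M i) d - opSq (M j) d ≤ opSq (M N) d - I := by
          have := hformle N i hNi d
          have := hIle j
          linarith
        have h3 : ‖M i d - M j d‖^2 ≤ ‖M 0‖ * (opSq (M N) d - I) := by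
          have : ‖M 0‖ * (opSq (M i) d - opSq (M j) d) ≤ ‖M 0‖ * (opSq (M N) d - I) :=
            mul_le_mul_of_nonneg_left h2 (norm_nonneg _)
          linarith
        calc ‖M i d - M j d‖ = Real.sqrt (‖M i d - M j d‖^2) := (Real.sqrt_sq (norm_nonneg _)).symm
        _ ≤ Real.sqrt (‖M 0‖ * (opSq (M N) d - I)) := Real.sqrt_le_sqrt h3
      rcases le_total m n with h | h
      · exact hend m n h hm
      · rw [dist_comm]; exact hend n m h hn
    · have h1 : Tendsto (fun N => ‖M 0‖ * (opSq (M N) d - I)) atTop (nhds (‖M 0‖ * (I - I))) := by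
        apply Tendsto.const_mul
        exact (hqlim d).sub tendsto_const_nhds
      have h2 : ‖M 0‖ * (I - I) = 0 := by ring
      rw [h2] at h1
      have := h1.sqrt
      simpa using this
  have hex : ∀ d, ∃ ld, Tendsto (fun k => M k d) atTop (nhds ld) :=
    fun d => cauchySeq_tendsto_of_complete (hcauchy d)
  choose L hL using hex
  exact ⟨L, hL⟩

end S5


section S6
variable {E F : Type*} [NormedAddCommGroup E] [InnerProductSpace ℝ E] [CompleteSpace E]
  [NormedAddCommGroup F] [InnerProductSpace ℝ F] [CompleteSpace F]

lemma ereal_fin {f : E → EReal} (hfp : ERealProper f) {x : E} (hne : f x ≠ ⊤) :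
    ∃ r : ℝ, f x = (r : EReal) := ⟨(f x).toReal, (EReal.coe_toReal hne (hfp.1 x)).symm⟩

lemma lagr_coe {f : E → EReal} {g : F → EReal} {A : E →L[ℝ] F} {p : E} {q v : F}
    {rp rq : ℝ} (hp : f p = (rp : EReal)) (hq : g q = (rq : EReal)) :
    Lagr f g A p q v = ((rp + rq + ⟪v, A p - q⟫_ℝ : ℝ) : EReal) := by
  rw [Lagr, hp, hq, ← EReal.coe_add, ← EReal.coe_add]

lemma saddle_facts {f : E → EReal} {g : F → EReal} (hfp : ERealProper f) (hgp : ERealProper g)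
    {A : E →L[ℝ] F} {p : E} {q v : F} (hsad : IsSaddle (Lagr f g A) p q v) :
    ∃ (rp rq : ℝ), f p = (rp : EReal) ∧ g q = (rq : EReal) ∧ A p = q ∧
      (∀ u (ru : ℝ), f u = (ru : EReal) → rp ≤ ru + ⟪v, A u - A p⟫_ℝ) ∧
      (∀ w (rw : ℝ), g w = (rw : EReal) → rq ≤ rw - ⟪v, w - q⟫_ℝ) := by
  obtain ⟨p₀, hp₀⟩ := hfp.2
  obtain ⟨q₀, hq₀⟩ := hgp.2
  obtain ⟨r₀, hr₀⟩ := ereal_fin hfp hp₀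
  obtain ⟨s₀, hs₀⟩ := ereal_fin hgp hq₀
  have h2 := (hsad p₀ q₀ v).2
  rw [lagr_coe hr₀ hs₀] at h2
  have hlt : Lagr f g A p q v < ⊤ := lt_of_le_of_lt h2 (EReal.coe_lt_top _)
  have hfpne : f p ≠ ⊤ := by
    intro htop
    rw [Lagr, htop] at hlt
    rw [EReal.top_add_of_ne_bot (hgp.1 q), EReal.top_add_of_ne_bot (EReal.coe_ne_bot _)] at hlt
    exact lt_irrefl _ hlt
  have hgqne : g q ≠ ⊤ := by
    intro htop
    rw [Lagr, htop] at hlt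
    rw [EReal.add_top_of_ne_bot (hfp.1 p), EReal.top_add_of_ne_bot (EReal.coe_ne_bot _)] at hlt
    exact lt_irrefl _ hlt
  obtain ⟨rp, hrp⟩ := ereal_fin hfp hfpne
  obtain ⟨rq, hrq⟩ := ereal_fin hgp hgqne
  have hApq : A p = q := by
    have h1 := (hsad p q (v + (A p - q))).1
    rw [lagr_coe hrp hrq, lagr_coe hrp hrq, EReal.coe_le_coe_iff] at h1
    rw [inner_add_left] at h1
    have h3 : ⟪A p - q, A p - q⟫_ℝ = ‖A p - q‖^2 := real_inner_self_eq_norm_sq _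
    have h4 : ‖A p - q‖^2 ≤ 0 := by linarith
    have h5 : A p - q = 0 := by
      rw [← inner_self_eq_zero (𝕜 := ℝ) (x := A p - q), h3]
      nlinarith [sq_nonneg ‖A p - q‖]
    rwa [sub_eq_zero] at h5
  have hzero : ⟪v, A p - q⟫_ℝ = 0 := by rw [hApq, sub_self, inner_zero_right]
  refine ⟨rp, rq, hrp, hrq, hApq, ?_, ?_⟩
  · intro u ru hu
    have h1 := (hsad u q v).2
    rw [lagr_coe hrp hrq, lagr_coe hu hrq, EReal.coe_le_coe_iff] at h1
    rw [hzero] at h1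
    have h3 : A u - q = A u - A p := by rw [hApq]
    rw [h3] at h1
    linarith
  · intro w rw' hw
    have h1 := (hsad p w v).2
    rw [lagr_coe hrp hrq, lagr_coe hrp hw, EReal.coe_le_coe_iff] at h1
    rw [hzero] at h1
    have h3 : ⟪v, A p - w⟫_ℝ = -⟪v, w - q⟫_ℝ := by
      rw [hApq, inner_sub_right, inner_sub_right]; ring
    rw [h3] at h1
    linarith

lemma threept_norm (b b₀ : F) : 2 * ⟪b - b₀, b⟫_ℝ = ‖b‖^2 - ‖b₀‖^2 + ‖b - b₀‖^2 := by
  have h1 := norm_sub_sq_real b b₀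
  have h2 : ⟪b - b₀, b⟫_ℝ = ‖b‖^2 - ⟪b, b₀⟫_ℝ := by
    rw [inner_sub_left, real_inner_self_eq_norm_sq]
    have : ⟪b₀, b⟫_ℝ = ⟪b, b₀⟫_ℝ := real_inner_comm _ _
    linarith [this]
  linarith

lemma opSq_sub {U : E →L[ℝ] E} (hU : IsSplusOp U) (u p : E) :
    opSq U (u - p) = opSq U u - 2 * ⟪u, U p⟫_ℝ + opSq U p := by
  have h := opSq_expand hU u (-p)
  have h1 : opSq U (-p) = opSq U p := by
    simp [opSq, map_neg, inner_neg_left, inner_neg_right]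
  have h2 : ⟪U u, -p⟫_ℝ = -⟪u, U p⟫_ℝ := by
    rw [inner_neg_right, hU.1]
  rw [h1, h2] at h
  have h3 : u - p = u + (-p) := by abel
  rw [h3, h]
  ring

lemma opSq_diff {U : E →L[ℝ] E} (hU : IsSplusOp U) (u p₁ p₂ : E) :
    opSq U (u - p₁) - opSq U (u - p₂)
      = opSq U p₁ - opSq U p₂ - 2 * ⟪u, U (p₁ - p₂)⟫_ℝ := by
  rw [opSq_sub hU u p₁, opSq_sub hU u p₂, map_sub, inner_sub_right]
  ring

lemma norm_diff (u p₁ p₂ : E) :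
    ‖u - p₁‖^2 - ‖u - p₂‖^2 = ‖p₁‖^2 - ‖p₂‖^2 - 2 * ⟪u, p₁ - p₂⟫_ℝ := by
  rw [norm_sub_sq_real u p₁, norm_sub_sq_real u p₂, inner_sub_right]
  ring

lemma inner_weak_strong (u : ℕ → E) (B : ℝ) (hB : ∀ j, ‖u j‖ ≤ B) (p : E)
    (hu : WeakConv u p) (v : ℕ → E) (v₀ : E) (hv : Tendsto v atTop (nhds v₀)) :
    Tendsto (fun j => ⟪u j, v j⟫_ℝ) atTop (nhds ⟪p, v₀⟫_ℝ) := by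
  have h1 : ∀ j, ⟪u j, v j⟫_ℝ = ⟪u j, v j - v₀⟫_ℝ + ⟪u j, v₀⟫_ℝ := by
    intro j; rw [inner_sub_right]; ring
  have h2 : Tendsto (fun j => ⟪u j, v j - v₀⟫_ℝ) atTop (nhds 0) := by
    apply squeeze_zero_norm (a := fun j => B * ‖v j - v₀‖)
    · intro j
      calc ‖⟪u j, v j - v₀⟫_ℝ‖ ≤ ‖u j‖ * ‖v j - v₀‖ := by
            rw [Real.norm_eq_abs]; exact abs_real_inner_le_norm _ _
      _ ≤ B * ‖v j - v₀‖ := mul_le_mul_of_nonneg_right (hB j) (norm_nonneg _)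
    · have h3 : Tendsto (fun j => ‖v j - v₀‖) atTop (nhds 0) :=
        tendsto_iff_norm_sub_tendsto_zero.mp hv
      have := h3.const_mul B
      simpa using this
  have h4 := h2.add (hu v₀)
  rw [zero_add] at h4
  simp_rw [← h1] at h4
  exact h4

lemma bolzano_real (r : ℕ → ℝ) (lo hi : ℝ) (h : ∀ n, r n ∈ Set.Icc lo hi) :
    ∃ ρ, ∃ ψ : ℕ → ℕ, StrictMono ψ ∧ Tendsto (fun j => r (ψ j)) atTop (nhds ρ) := by
  obtain ⟨a, _, ψ, hψ, hconv⟩ := tendsto_subseq_of_bounded (Metric.isBounded_Icc lo hi) h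
  exact ⟨a, ψ, hψ, hconv⟩

lemma weakconv_subseq {u : ℕ → E} {p : E} (hu : WeakConv u p) {ψ : ℕ → ℕ}
    (hψ : Tendsto ψ atTop atTop) : WeakConv (fun j => u (ψ j)) p :=
  fun w => (hu w).comp hψ

end S6


end AuxADMM

theorem stmt18 {H G : Type*}
    [NormedAddCommGroup H] [InnerProductSpace ℝ H] [CompleteSpace H]
    [NormedAddCommGroup G] [InnerProductSpace ℝ G] [CompleteSpace G]
    (f : H → EReal) (g : G → EReal)
    (hfp : ERealProper f) (hfc : ERealConvex f) (hfl : LowerSemicontinuous f)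
    (hgp : ERealProper g) (hgc : ERealConvex g) (hgl : LowerSemicontinuous g)
    (A : H →L[ℝ] G) (c : ℝ) (hc : 0 < c)
    (M₁ : ℕ → (H →L[ℝ] H)) (M₂ : ℕ → (G →L[ℝ] G))
    (hM₁ : ∀ k : ℕ, IsSplusOp (M₁ k)) (hM₂ : ∀ k : ℕ, IsSplusOp (M₂ k))
    (hM₁mono : ∀ k : ℕ, opLE (M₁ k) (M₁ (k+1)))
    (x : ℕ → H) (z y : ℕ → G)
    (hx : ∀ k : ℕ, IsXUpdate f A c (M₁ k) (x k) (z k) (y k) (x (k+1)))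
    (hz : ∀ k : ℕ, IsZUpdate g c (M₂ k) (A (x (k+1))) (z k) (y k) (z (k+1)))
    (hy : ∀ k : ℕ, y (k+1) = y k + c • (A (x (k+1)) - z (k+1)))
    (hsaddle : ∃ (xs : H) (zs ys : G), IsSaddle (Lagr f g A) xs zs ys)
    (α : ℝ) (hα : 0 < α)
    (hA : IsPalphaOp α ((ContinuousLinearMap.adjoint A).comp A))
    (hM₂chain : ∀ k : ℕ, opLE ((2 : ℝ) • M₂ (k+1)) (M₂ k) ∧ opLE (M₂ k) (M₂ (k+1))) :
    ∃ (xs : H) (zs ys : G), IsSaddle (Lagr f g A) xs zs ys ∧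
      WeakConv x xs ∧ WeakConv z zs ∧ WeakConv y ys := by
  classical
  obtain ⟨xs, zs, ys, hsad⟩ := hsaddle
  have hcne : c ≠ 0 := ne_of_gt hc
  have hcinv : (0:ℝ) < c⁻¹ := inv_pos.mpr hc
  -- finiteness of iterate values
  have hfin1 : ∀ k, ∃ r : ℝ, f (x (k+1)) = (r : EReal) := by
    intro k
    exact min_finite hfp
      (Q := fun u => (c/2) * ‖A u - z k + c⁻¹ • y k‖ ^ 2 + (1/2) * opSq (M₁ k) (u - x k))
      (hx k)
  choose frv hfr using hfin1
  have hfin2 : ∀ k, ∃ r : ℝ, g (z (k+1)) = (r : EReal) := by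
    intro k
    exact min_finite hgp
      (Q := fun w => (c/2) * ‖A (x (k+1)) - w + c⁻¹ • y k‖ ^ 2 + (1/2) * opSq (M₂ k) (w - z k))
      (hz k)
  choose grv hgr using hfin2
  -- residual identity
  have hAxk : ∀ k, A (x (k+1)) = z (k+1) + c⁻¹ • (y (k+1) - y k) := by
    intro k
    rw [hy k]
    have h1 : y k + c • (A (x (k+1)) - z (k+1)) - y k = c • (A (x (k+1)) - z (k+1)) := by abel
    rw [h1, smul_smul, inv_mul_cancel₀ hcne, one_smul]
    abel
  -- subgradient inequality for f-updates
  have hIf : ∀ k (u : H) (ru : ℝ), f u = (ru : EReal) →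
      frv k ≤ ru + ⟪(ContinuousLinearMap.adjoint A) (y (k+1) + c • (z (k+1) - z k))
        + (M₁ k) (x (k+1) - x k), u - x (k+1)⟫_ℝ := by
    intro k u ru hu
    have hxk := hx k
    simp only [IsXUpdate] at hxk
    have hrw : ∀ v : H, A v - z k + c⁻¹ • y k = A v - (z k - c⁻¹ • y k) := fun v => sub_add _ _ _
    simp only [hrw] at hxk
    have hsub := min_subgrad hfc A c hc (M₁ k) (hM₁ k) (z k - c⁻¹ • y k) (x k) (x (k+1))
      hxk (hfr k) hu
    have hvec : c • (A (x (k+1)) - (z k - c⁻¹ • y k)) = y (k+1) + c • (z (k+1) - z k) := by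
      rw [hy k]
      have hcc : c • (c⁻¹ • y k) = y k := by
        rw [smul_smul, mul_inv_cancel₀ hcne, one_smul]
      rw [smul_sub, smul_sub, smul_sub, smul_sub, hcc]
      abel
    have hvec2 : c • (ContinuousLinearMap.adjoint A) (A (x (k+1)) - (z k - c⁻¹ • y k))
        = (ContinuousLinearMap.adjoint A) (y (k+1) + c • (z (k+1) - z k)) := by
      rw [← map_smul, hvec]
    rw [hvec2] at hsub
    exact hsub
  -- subgradient inequality for g-updates
  have hIg : ∀ k (w : G) (rw' : ℝ), g w = (rw' : EReal) →
      grv k ≤ rw' + ⟪-(y (k+1)) + (M₂ k) (z (k+1) - z k), w - z (k+1)⟫_ℝ := by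
    intro k w rw' hw
    have hzk := hz k
    simp only [IsZUpdate] at hzk
    have hrw : ∀ v : G, ‖A (x (k+1)) - v + c⁻¹ • y k‖
        = ‖(ContinuousLinearMap.id ℝ G) v - (A (x (k+1)) + c⁻¹ • y k)‖ := by
      intro v
      rw [ContinuousLinearMap.id_apply, ← norm_neg]
      congr 1
      abel
    simp only [hrw] at hzk
    have hsub := min_subgrad hgc (ContinuousLinearMap.id ℝ G) c hc (M₂ k) (hM₂ k)
      (A (x (k+1)) + c⁻¹ • y k) (z k) (z (k+1)) hzk (hgr k) hw
    have hvec : c • (ContinuousLinearMap.adjoint (ContinuousLinearMap.id ℝ G))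
        ((ContinuousLinearMap.id ℝ G) (z (k+1)) - (A (x (k+1)) + c⁻¹ • y k)) = -(y (k+1)) := by
      rw [ContinuousLinearMap.adjoint_id, ContinuousLinearMap.id_apply, ContinuousLinearMap.id_apply,
        hy k]
      have hcc : c • (c⁻¹ • y k) = y k := by
        rw [smul_smul, mul_inv_cancel₀ hcne, one_smul]
      rw [smul_sub, smul_add, hcc, smul_sub]
      abel
    rw [hvec] at hsub
    exact hsub
  -- the master inequality for an arbitrary saddle point
  have hMAIN : ∀ (p : H) (q v : G), IsSaddle (Lagr f g A) p q v → ∀ k,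
      c⁻¹ * ⟪y (k+1), y (k+1) - y k⟫_ℝ - c⁻¹ * ⟪v, y (k+1) - y k⟫_ℝ
        + c * ⟪z (k+1) - z k, z (k+1) - q⟫_ℝ + ⟪z (k+1) - z k, y (k+1) - y k⟫_ℝ
        + ⟪(M₁ k) (x (k+1) - x k), x (k+1) - p⟫_ℝ
        + ⟪(M₂ k) (z (k+1) - z k), z (k+1) - q⟫_ℝ ≤ 0 := by
    intro p q v hsadp k
    obtain ⟨rp, rq, hrp, hrq, hApq, hS1, hS2⟩ := saddle_facts hfp hgp hsadp
    have h1 := hIf k p rp hrp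
    have h2 := hIg k q rq hrq
    have h3 := hS1 (x (k+1)) (frv k) (hfr k)
    have h4 := hS2 (z (k+1)) (grv k) (hgr k)
    have Ex1 : ⟪(ContinuousLinearMap.adjoint A) (y (k+1) + c • (z (k+1) - z k))
          + (M₁ k) (x (k+1) - x k), p - x (k+1)⟫_ℝ
        = -⟪y (k+1), z (k+1) - q⟫_ℝ - c⁻¹ * ⟪y (k+1), y (k+1) - y k⟫_ℝ
          - c * ⟪z (k+1) - z k, z (k+1) - q⟫_ℝ - ⟪z (k+1) - z k, y (k+1) - y k⟫_ℝ
          - ⟪(M₁ k) (x (k+1) - x k), x (k+1) - p⟫_ℝ := by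
      rw [inner_add_left, ContinuousLinearMap.adjoint_inner_left, map_sub, hApq, hAxk k]
      simp only [inner_add_left, inner_add_right, inner_sub_left, inner_sub_right,
        real_inner_smul_left, real_inner_smul_right]
      field_simp
      ring
    have Ex2 : ⟪-(y (k+1)) + (M₂ k) (z (k+1) - z k), q - z (k+1)⟫_ℝ
        = ⟪y (k+1), z (k+1) - q⟫_ℝ - ⟪(M₂ k) (z (k+1) - z k), z (k+1) - q⟫_ℝ := by
      simp only [inner_add_left, inner_neg_left, inner_sub_right]
      ring
    have Ex3 : ⟪v, A (x (k+1)) - A p⟫_ℝ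
        = ⟪v, z (k+1) - q⟫_ℝ + c⁻¹ * ⟪v, y (k+1) - y k⟫_ℝ := by
      rw [hApq, hAxk k]
      simp only [inner_add_right, inner_sub_right, real_inner_smul_right]
      ring
    have Ex4 : ⟪v, z (k+1) - q⟫_ℝ + ⟪y (k+1), z (k+1) - q⟫_ℝ - ⟪y (k+1), z (k+1) - q⟫_ℝ
        = ⟪v, z (k+1) - q⟫_ℝ := by ring
    linarith [h1, h2, h3, h4, Ex1, Ex2, Ex3]
  -- cross-term bound
  have hcross : ∀ j, -(2 * ⟪z (j+1+1) - z (j+1), y (j+1+1) - y (j+1)⟫_ℝ)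
      ≤ opSq (M₂ j) (z (j+1) - z j) := by
    intro j
    have ha := hIg (j+1) (z (j+1)) (grv j) (hgr j)
    have hb := hIg j (z (j+1+1)) (grv (j+1)) (hgr (j+1))
    have Ea : ⟪-(y (j+1+1)) + (M₂ (j+1)) (z (j+1+1) - z (j+1)), z (j+1) - z (j+1+1)⟫_ℝ
        = -⟪y (j+1+1), z (j+1) - z (j+1+1)⟫_ℝ
          + ⟪(M₂ (j+1)) (z (j+1+1) - z (j+1)), z (j+1) - z (j+1+1)⟫_ℝ := by
      rw [inner_add_left, inner_neg_left]
    have Eb : ⟪-(y (j+1)) + (M₂ j) (z (j+1) - z j), z (j+1+1) - z (j+1)⟫_ℝ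
        = -⟪y (j+1), z (j+1+1) - z (j+1)⟫_ℝ
          + ⟪(M₂ j) (z (j+1) - z j), z (j+1+1) - z (j+1)⟫_ℝ := by
      rw [inner_add_left, inner_neg_left]
    have Ec : ⟪y (j+1+1), z (j+1) - z (j+1+1)⟫_ℝ = -⟪y (j+1+1), z (j+1+1) - z (j+1)⟫_ℝ := by
      rw [← inner_neg_right]; congr 1; abel
    have Ed : ⟪(M₂ (j+1)) (z (j+1+1) - z (j+1)), z (j+1) - z (j+1+1)⟫_ℝ
        = -opSq (M₂ (j+1)) (z (j+1+1) - z (j+1)) := by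
      have h1 : ⟪(M₂ (j+1)) (z (j+1+1) - z (j+1)), z (j+1) - z (j+1+1)⟫_ℝ
          = -⟪(M₂ (j+1)) (z (j+1+1) - z (j+1)), z (j+1+1) - z (j+1)⟫_ℝ := by
        rw [← inner_neg_right]; congr 1; abel
      rw [h1]
      have h2 : ⟪(M₂ (j+1)) (z (j+1+1) - z (j+1)), z (j+1+1) - z (j+1)⟫_ℝ
          = opSq (M₂ (j+1)) (z (j+1+1) - z (j+1)) := real_inner_comm _ _
      rw [h2]
    have Ecomm : ⟪z (j+1+1) - z (j+1), y (j+1+1) - y (j+1)⟫_ℝ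
        = ⟪y (j+1+1), z (j+1+1) - z (j+1)⟫_ℝ - ⟪y (j+1), z (j+1+1) - z (j+1)⟫_ℝ := by
      rw [real_inner_comm, inner_sub_left]
    have Ee := cross2 (hM₂ j) (z (j+1) - z j) (z (j+1+1) - z (j+1))
    have Ef : opSq (M₂ j) (z (j+1+1) - z (j+1))
        ≤ opSq ((2:ℝ) • M₂ (j+1)) (z (j+1+1) - z (j+1)) := (hM₂chain j).1 _
    have Eg := opSq_smul_op (2:ℝ) (M₂ (j+1)) (z (j+1+1) - z (j+1))
    linarith [ha, hb, Ea, Eb, Ec, Ed, Ecomm, Ee, Ef, Eg]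
  -- the Fejér functional
  set EF : H → G → G → ℕ → ℝ := fun p q v j =>
    opSq (M₁ (j+1)) (x (j+1) - p) + opSq (M₂ (j+1)) (z (j+1) - q) + c * ‖z (j+1) - q‖^2
      + c⁻¹ * ‖y (j+1) - v‖^2 + opSq (M₂ j) (z (j+1) - z j) with hEF
  set Dq : ℕ → ℝ := fun k => opSq (M₁ k) (x (k+1) - x k) + c * ‖z (k+1) - z k‖^2
      + c⁻¹ * ‖y (k+1) - y k‖^2 with hDq
  have hEF0 : ∀ (p : H) (q v : G), ∀ j, 0 ≤ EF p q v j := by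
    intro p q v j
    simp only [hEF]
    have n1 : (0:ℝ) ≤ opSq (M₁ (j+1)) (x (j+1) - p) := (hM₁ (j+1)).2 _
    have n2 : (0:ℝ) ≤ opSq (M₂ (j+1)) (z (j+1) - q) := (hM₂ (j+1)).2 _
    have n3 : (0:ℝ) ≤ c * ‖z (j+1) - q‖^2 := mul_nonneg hc.le (sq_nonneg _)
    have n4 : (0:ℝ) ≤ c⁻¹ * ‖y (j+1) - v‖^2 := mul_nonneg hcinv.le (sq_nonneg _)
    have n5 : (0:ℝ) ≤ opSq (M₂ j) (z (j+1) - z j) := (hM₂ j).2 _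
    linarith
  have hDq0 : ∀ k, 0 ≤ Dq k := by
    intro k
    simp only [hDq]
    have n1 : (0:ℝ) ≤ opSq (M₁ k) (x (k+1) - x k) := (hM₁ k).2 _
    have n3 : (0:ℝ) ≤ c * ‖z (k+1) - z k‖^2 := mul_nonneg hc.le (sq_nonneg _)
    have n4 : (0:ℝ) ≤ c⁻¹ * ‖y (k+1) - y k‖^2 := mul_nonneg hcinv.le (sq_nonneg _)
    linarith
  -- Fejér decrease
  have hfejer : ∀ (p : H) (q v : G), IsSaddle (Lagr f g A) p q v →
      ∀ j, EF p q v (j+1) + Dq (j+1) ≤ EF p q v j := by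
    intro p q v hsadp j
    have main := hMAIN p q v hsadp (j+1)
    have t1 := threept (hM₁ (j+1)) (x (j+1+1) - p) (x (j+1) - p)
    have e1 : x (j+1+1) - p - (x (j+1) - p) = x (j+1+1) - x (j+1) := by abel
    rw [e1] at t1
    have t2 := threept (hM₂ (j+1)) (z (j+1+1) - q) (z (j+1) - q)
    have e2 : z (j+1+1) - q - (z (j+1) - q) = z (j+1+1) - z (j+1) := by abel
    rw [e2] at t2
    have t3 := threept_norm (z (j+1+1) - q) (z (j+1) - q)
    rw [e2] at t3
    have t3' : 2 * (c * ⟪z (j+1+1) - z (j+1), z (j+1+1) - q⟫_ℝ)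
        = c * ‖z (j+1+1) - q‖^2 - c * ‖z (j+1) - q‖^2 + c * ‖z (j+1+1) - z (j+1)‖^2 := by
      linear_combination c * t3
    have t4 := threept_norm (y (j+1+1) - v) (y (j+1) - v)
    have e4 : y (j+1+1) - v - (y (j+1) - v) = y (j+1+1) - y (j+1) := by abel
    rw [e4] at t4
    have t4' : 2 * (c⁻¹ * ⟪y (j+1+1) - y (j+1), y (j+1+1) - v⟫_ℝ)
        = c⁻¹ * ‖y (j+1+1) - v‖^2 - c⁻¹ * ‖y (j+1) - v‖^2 + c⁻¹ * ‖y (j+1+1) - y (j+1)‖^2 := by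
      linear_combination c⁻¹ * t4
    have o4 : ⟪y (j+1+1) - y (j+1), y (j+1+1) - v⟫_ℝ
        = ⟪y (j+1+1), y (j+1+1) - y (j+1)⟫_ℝ - ⟪v, y (j+1+1) - y (j+1)⟫_ℝ := by
      rw [real_inner_comm, inner_sub_left]
    have o4' : c⁻¹ * ⟪y (j+1+1) - y (j+1), y (j+1+1) - v⟫_ℝ
        = c⁻¹ * ⟪y (j+1+1), y (j+1+1) - y (j+1)⟫_ℝ - c⁻¹ * ⟪v, y (j+1+1) - y (j+1)⟫_ℝ := by
      linear_combination c⁻¹ * o4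
    have hc1 := hcross j
    have hm1 : opSq (M₁ (j+1+1)) (x (j+1+1) - p) ≤ opSq (M₁ (j+1)) (x (j+1+1) - p) :=
      hM₁mono (j+1) _
    have hm2 : opSq (M₂ (j+1+1)) (z (j+1+1) - q) ≤ opSq (M₂ (j+1)) (z (j+1+1) - q) :=
      (hM₂chain (j+1)).2 _
    simp only [hEF, hDq]
    linarith [main, t1, t2, t3', t4', o4', hc1, hm1, hm2]
  -- monotone decrease at the given saddle point
  obtain ⟨frs, grs, hfrs, hgrs, hAxs, hS1s, hS2s⟩ := saddle_facts hfp hgp hsad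
  have hfejS := hfejer xs zs ys hsad
  have hanti : Antitone (EF xs zs ys) :=
    antitone_nat_of_succ_le (fun j => by have h1 := hfejS j; have h2 := hDq0 (j+1); linarith)
  have hbddEF : BddBelow (Set.range (EF xs zs ys)) :=
    ⟨0, by rintro r ⟨j, rfl⟩; exact hEF0 xs zs ys j⟩
  have hEFlim : Tendsto (EF xs zs ys) atTop (nhds (⨅ j, EF xs zs ys j)) :=
    tendsto_atTop_ciInf hanti hbddEF
  have hEFlim' : Tendsto (fun j => EF xs zs ys (j+1)) atTop (nhds (⨅ j, EF xs zs ys j)) :=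
    (tendsto_add_atTop_iff_nat 1).mpr hEFlim
  have hDle : ∀ j, Dq (j+1) ≤ EF xs zs ys j - EF xs zs ys (j+1) := by
    intro j
    have := hfejS j
    linarith
  have hDlim : Tendsto (fun j => Dq (j+1)) atTop (nhds 0) := by
    have h1 : Tendsto (fun j => EF xs zs ys j - EF xs zs ys (j+1)) atTop (nhds 0) := by
      have h2 := hEFlim.sub hEFlim'
      simpa using h2
    exact squeeze_zero (fun j => hDq0 (j+1)) hDle h1
  -- components of Dq tend to zero
  have hDcomp : ∀ j, opSq (M₁ (j+1)) (x (j+1+1) - x (j+1)) ≤ Dq (j+1)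
      ∧ c * ‖z (j+1+1) - z (j+1)‖^2 ≤ Dq (j+1) ∧ c⁻¹ * ‖y (j+1+1) - y (j+1)‖^2 ≤ Dq (j+1) := by
    intro j
    have n1 : (0:ℝ) ≤ opSq (M₁ (j+1)) (x (j+1+1) - x (j+1)) := (hM₁ (j+1)).2 _
    have n3 : (0:ℝ) ≤ c * ‖z (j+1+1) - z (j+1)‖^2 := mul_nonneg hc.le (sq_nonneg _)
    have n4 : (0:ℝ) ≤ c⁻¹ * ‖y (j+1+1) - y (j+1)‖^2 := mul_nonneg hcinv.le (sq_nonneg _)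
    refine ⟨?_, ?_, ?_⟩ <;> (simp only [hDq]; linarith)
  have hsqnorm_lim : ∀ (γ : ℝ), 0 < γ → ∀ (u : ℕ → G), (∀ j, γ * ‖u j‖^2 ≤ Dq (j+1)) →
      Tendsto (fun j => ‖u j‖) atTop (nhds 0) := by
    intro γ hγ u hu
    have h1 : Tendsto (fun j => ‖u j‖^2) atTop (nhds 0) := by
      apply squeeze_zero (fun j => sq_nonneg _) (fun j => ?_) (by simpa using hDlim.const_mul γ⁻¹)
      have h2 := hu j
      calc ‖u j‖^2 = γ⁻¹ * (γ * ‖u j‖^2) := by field_simp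
      _ ≤ γ⁻¹ * Dq (j+1) := mul_le_mul_of_nonneg_left h2 (inv_pos.mpr hγ).le
    have h3 := h1.sqrt
    simp only [Real.sqrt_zero] at h3
    have h4 : (fun j => Real.sqrt (‖u j‖^2)) = fun j => ‖u j‖ := by
      funext j; exact Real.sqrt_sq (norm_nonneg _)
    rwa [h4] at h3
  have hdznorm : Tendsto (fun j => ‖z (j+1+1) - z (j+1)‖) atTop (nhds 0) :=
    hsqnorm_lim c hc _ (fun j => (hDcomp j).2.1)
  have hdynorm : Tendsto (fun j => ‖y (j+1+1) - y (j+1)‖) atTop (nhds 0) :=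
    hsqnorm_lim c⁻¹ hcinv _ (fun j => (hDcomp j).2.2)
  have hMdx : Tendsto (fun j => opSq (M₁ (j+1)) (x (j+1+1) - x (j+1))) atTop (nhds 0) :=
    squeeze_zero (fun j => (hM₁ (j+1)).2 _) (fun j => (hDcomp j).1) hDlim
  -- metric domination by the initial metrics
  have hM₁dec : ∀ k (w : H), opSq (M₁ k) w ≤ opSq (M₁ 0) w := by
    intro k w
    induction k with
    | zero => exact le_refl _
    | succ n ih => exact le_trans (hM₁mono n w) ih
  have hM₂dec : ∀ k (w : G), opSq (M₂ k) w ≤ opSq (M₂ 0) w := by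
    intro k w
    induction k with
    | zero => exact le_refl _
    | succ n ih => exact le_trans ((hM₂chain n).2 w) ih
  -- uniform bounds
  have hEFle : ∀ j, EF xs zs ys j ≤ EF xs zs ys 0 := fun j => hanti (Nat.zero_le j)
  have hcompEF : ∀ j, c * ‖z (j+1) - zs‖^2 ≤ EF xs zs ys 0
      ∧ c⁻¹ * ‖y (j+1) - ys‖^2 ≤ EF xs zs ys 0 := by
    intro j
    have h3 := hEFle j
    have n1 : (0:ℝ) ≤ opSq (M₁ (j+1)) (x (j+1) - xs) := (hM₁ (j+1)).2 _
    have n2 : (0:ℝ) ≤ opSq (M₂ (j+1)) (z (j+1) - zs) := (hM₂ (j+1)).2 _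
    have n3 : (0:ℝ) ≤ c * ‖z (j+1) - zs‖^2 := mul_nonneg hc.le (sq_nonneg _)
    have n4 : (0:ℝ) ≤ c⁻¹ * ‖y (j+1) - ys‖^2 := mul_nonneg hcinv.le (sq_nonneg _)
    have n5 : (0:ℝ) ≤ opSq (M₂ j) (z (j+1) - z j) := (hM₂ j).2 _
    simp only [hEF] at h3 ⊢
    constructor <;> linarith
  have hzb : ∀ j, ‖z (j+1) - zs‖ ≤ Real.sqrt (c⁻¹ * EF xs zs ys 0) := by
    intro j
    have h2 := (hcompEF j).1
    have h5 : ‖z (j+1) - zs‖^2 ≤ c⁻¹ * EF xs zs ys 0 := by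
      calc ‖z (j+1) - zs‖^2 = c⁻¹ * (c * ‖z (j+1) - zs‖^2) := by field_simp
      _ ≤ c⁻¹ * EF xs zs ys 0 := mul_le_mul_of_nonneg_left h2 hcinv.le
    calc ‖z (j+1) - zs‖ = Real.sqrt (‖z (j+1) - zs‖^2) := (Real.sqrt_sq (norm_nonneg _)).symm
    _ ≤ Real.sqrt (c⁻¹ * EF xs zs ys 0) := Real.sqrt_le_sqrt h5
  have hyb : ∀ j, ‖y (j+1) - ys‖ ≤ Real.sqrt (c * EF xs zs ys 0) := by
    intro j
    have h2 := (hcompEF j).2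
    have h5 : ‖y (j+1) - ys‖^2 ≤ c * EF xs zs ys 0 := by
      calc ‖y (j+1) - ys‖^2 = c * (c⁻¹ * ‖y (j+1) - ys‖^2) := by field_simp
      _ ≤ c * EF xs zs ys 0 := mul_le_mul_of_nonneg_left h2 hc.le
    calc ‖y (j+1) - ys‖ = Real.sqrt (‖y (j+1) - ys‖^2) := (Real.sqrt_sq (norm_nonneg _)).symm
    _ ≤ Real.sqrt (c * EF xs zs ys 0) := Real.sqrt_le_sqrt h5
  have hdyb : ∀ j, ‖y (j+1+1) - y (j+1)‖ ≤ 2 * Real.sqrt (c * EF xs zs ys 0) := by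
    intro j
    have h1 : y (j+1+1) - y (j+1) = (y (j+1+1) - ys) - (y (j+1) - ys) := by abel
    rw [h1]
    calc ‖(y (j+1+1) - ys) - (y (j+1) - ys)‖ ≤ ‖y (j+1+1) - ys‖ + ‖y (j+1) - ys‖ :=
          norm_sub_le _ _
    _ ≤ 2 * Real.sqrt (c * EF xs zs ys 0) := by linarith [hyb (j+1), hyb j]
  have hresid2 : ∀ j, A (x (j+1)) - z (j+1) = c⁻¹ • (y (j+1) - y j) := by
    intro j
    rw [hAxk j]; abel
  have hAxzs : ∀ j,
      ‖A (x (j+1+1)) - zs‖ ≤ c⁻¹ * (2 * Real.sqrt (c * EF xs zs ys 0))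
        + Real.sqrt (c⁻¹ * EF xs zs ys 0) := by
    intro j
    have h1 : A (x (j+1+1)) - zs = (A (x (j+1+1)) - z (j+1+1)) + (z (j+1+1) - zs) := by abel
    rw [h1]
    have h2 : ‖A (x (j+1+1)) - z (j+1+1)‖ = c⁻¹ * ‖y (j+1+1) - y (j+1)‖ := by
      rw [hresid2 (j+1), norm_smul, Real.norm_eq_abs, abs_of_pos hcinv]
    calc ‖(A (x (j+1+1)) - z (j+1+1)) + (z (j+1+1) - zs)‖
        ≤ ‖A (x (j+1+1)) - z (j+1+1)‖ + ‖z (j+1+1) - zs‖ := norm_add_le _ _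
    _ ≤ c⁻¹ * (2 * Real.sqrt (c * EF xs zs ys 0)) + Real.sqrt (c⁻¹ * EF xs zs ys 0) := by
        rw [h2]
        have h3 := mul_le_mul_of_nonneg_left (hdyb j) hcinv.le
        linarith [hzb (j+1), h3]
  have hxb : ∀ j, ‖x (j+1+1) - xs‖
      ≤ Real.sqrt (α⁻¹ * (c⁻¹ * (2 * Real.sqrt (c * EF xs zs ys 0))
        + Real.sqrt (c⁻¹ * EF xs zs ys 0))^2) := by
    intro j
    have h2 := hA.2 (x (j+1+1) - xs)
    have h3 : ⟪x (j+1+1) - xs, ((ContinuousLinearMap.adjoint A).comp A) (x (j+1+1) - xs)⟫_ℝ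
        = ‖A (x (j+1+1) - xs)‖^2 := by
      rw [ContinuousLinearMap.comp_apply, ContinuousLinearMap.adjoint_inner_right,
        real_inner_self_eq_norm_sq]
    have h4 : A (x (j+1+1) - xs) = A (x (j+1+1)) - zs := by rw [map_sub, hAxs]
    rw [h3, h4] at h2
    have h5 : ‖A (x (j+1+1)) - zs‖^2 ≤ (c⁻¹ * (2 * Real.sqrt (c * EF xs zs ys 0))
        + Real.sqrt (c⁻¹ * EF xs zs ys 0))^2 :=
      pow_le_pow_left₀ (norm_nonneg _) (hAxzs j) 2
    have h6 : ‖x (j+1+1) - xs‖^2 ≤ α⁻¹ * (c⁻¹ * (2 * Real.sqrt (c * EF xs zs ys 0))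
        + Real.sqrt (c⁻¹ * EF xs zs ys 0))^2 := by
      have h7 : α * ‖x (j+1+1) - xs‖^2 ≤ (c⁻¹ * (2 * Real.sqrt (c * EF xs zs ys 0))
          + Real.sqrt (c⁻¹ * EF xs zs ys 0))^2 := le_trans h2 h5
      calc ‖x (j+1+1) - xs‖^2 = α⁻¹ * (α * ‖x (j+1+1) - xs‖^2) := by field_simp
      _ ≤ _ := mul_le_mul_of_nonneg_left h7 (inv_pos.mpr hα).le
    calc ‖x (j+1+1) - xs‖ = Real.sqrt (‖x (j+1+1) - xs‖^2) := (Real.sqrt_sq (norm_nonneg _)).symm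
    _ ≤ _ := Real.sqrt_le_sqrt h6
  -- abbreviate bounds
  set By := Real.sqrt (c * EF xs zs ys 0) with hBy
  set Bz := Real.sqrt (c⁻¹ * EF xs zs ys 0) with hBz
  set BA := c⁻¹ * (2 * By) + Bz with hBA
  set Bx := Real.sqrt (α⁻¹ * BA^2) with hBx
  -- key limit inequality
  have hLIM : ∀ (u : H) (ru : ℝ), f u = (ru : EReal) → ∀ (w : G) (rw' : ℝ), g w = (rw' : EReal) →
      ∃ δ : ℕ → ℝ, Tendsto δ atTop (nhds 0) ∧
        ∀ j, frv (j+1) + grv (j+1) ≤ ru + rw' + ⟪y (j+1+1), A u - w⟫_ℝ + δ j := by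
    intro u ru hu w rw' hw
    refine ⟨fun j => (-(c⁻¹ * ⟪y (j+1+1), y (j+1+1) - y (j+1)⟫_ℝ))
        + c * ⟪z (j+1+1) - z (j+1), A u - A (x (j+1+1))⟫_ℝ
        + ⟪(M₁ (j+1)) (x (j+1+1) - x (j+1)), u - x (j+1+1)⟫_ℝ
        + ⟪(M₂ (j+1)) (z (j+1+1) - z (j+1)), w - z (j+1+1)⟫_ℝ, ?_, ?_⟩
    · -- the error term tends to zero
      have t1 : Tendsto (fun j => -(c⁻¹ * ⟪y (j+1+1), y (j+1+1) - y (j+1)⟫_ℝ)) atTop (nhds 0) := by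
        apply squeeze_zero_norm (a := fun j => c⁻¹ * ((By + ‖ys‖) * ‖y (j+1+1) - y (j+1)‖))
        · intro j
          rw [norm_neg, Real.norm_eq_abs, abs_mul, abs_of_pos hcinv]
          apply mul_le_mul_of_nonneg_left _ hcinv.le
          calc |⟪y (j+1+1), y (j+1+1) - y (j+1)⟫_ℝ|
              ≤ ‖y (j+1+1)‖ * ‖y (j+1+1) - y (j+1)‖ := abs_real_inner_le_norm _ _
          _ ≤ (By + ‖ys‖) * ‖y (j+1+1) - y (j+1)‖ := by
              apply mul_le_mul_of_nonneg_right _ (norm_nonneg _)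
              calc ‖y (j+1+1)‖ = ‖(y (j+1+1) - ys) + ys‖ := by congr 1; abel
              _ ≤ ‖y (j+1+1) - ys‖ + ‖ys‖ := norm_add_le _ _
              _ ≤ By + ‖ys‖ := by linarith [hyb (j+1)]
        · have h1 := (hdynorm.const_mul (By + ‖ys‖)).const_mul c⁻¹
          simpa [mul_assoc] using h1
      have t2 : Tendsto (fun j => c * ⟪z (j+1+1) - z (j+1), A u - A (x (j+1+1))⟫_ℝ)
          atTop (nhds 0) := by
        apply squeeze_zero_norm
          (a := fun j => c * (‖z (j+1+1) - z (j+1)‖ * (‖A u‖ + (BA + ‖zs‖))))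
        · intro j
          rw [Real.norm_eq_abs, abs_mul, abs_of_pos hc]
          apply mul_le_mul_of_nonneg_left _ hc.le
          calc |⟪z (j+1+1) - z (j+1), A u - A (x (j+1+1))⟫_ℝ|
              ≤ ‖z (j+1+1) - z (j+1)‖ * ‖A u - A (x (j+1+1))‖ := abs_real_inner_le_norm _ _
          _ ≤ ‖z (j+1+1) - z (j+1)‖ * (‖A u‖ + (BA + ‖zs‖)) := by
              apply mul_le_mul_of_nonneg_left _ (norm_nonneg _)
              calc ‖A u - A (x (j+1+1))‖ ≤ ‖A u‖ + ‖A (x (j+1+1))‖ := norm_sub_le _ _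
              _ ≤ ‖A u‖ + (BA + ‖zs‖) := by
                  have h2 : ‖A (x (j+1+1))‖ = ‖(A (x (j+1+1)) - zs) + zs‖ := by congr 1; abel
                  have h3 : ‖(A (x (j+1+1)) - zs) + zs‖ ≤ ‖A (x (j+1+1)) - zs‖ + ‖zs‖ :=
                    norm_add_le _ _
                  have h4 := hAxzs j
                  rw [h2]
                  linarith
        · have h1 := (hdznorm.mul_const (‖A u‖ + (BA + ‖zs‖))).const_mul c
          simpa [mul_assoc] using h1
      have t3 : Tendsto (fun j => ⟪(M₁ (j+1)) (x (j+1+1) - x (j+1)), u - x (j+1+1)⟫_ℝ)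
          atTop (nhds 0) := by
        apply squeeze_zero_norm
          (a := fun j => Real.sqrt (opSq (M₁ (j+1)) (x (j+1+1) - x (j+1)))
            * Real.sqrt (‖M₁ 0‖ * (‖u‖ + (Bx + ‖xs‖))^2))
        · intro j
          rw [Real.norm_eq_abs]
          calc |⟪(M₁ (j+1)) (x (j+1+1) - x (j+1)), u - x (j+1+1)⟫_ℝ|
              ≤ Real.sqrt (opSq (M₁ (j+1)) (x (j+1+1) - x (j+1)))
                * Real.sqrt (opSq (M₁ (j+1)) (u - x (j+1+1))) := cs_abs (hM₁ (j+1)) _ _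
          _ ≤ _ := by
              apply mul_le_mul_of_nonneg_left _ (Real.sqrt_nonneg _)
              apply Real.sqrt_le_sqrt
              calc opSq (M₁ (j+1)) (u - x (j+1+1)) ≤ opSq (M₁ 0) (u - x (j+1+1)) := hM₁dec _ _
              _ ≤ ‖M₁ 0‖ * ‖u - x (j+1+1)‖^2 := opSq_le_norm _
              _ ≤ ‖M₁ 0‖ * (‖u‖ + (Bx + ‖xs‖))^2 := by
                  apply mul_le_mul_of_nonneg_left _ (norm_nonneg _)
                  apply pow_le_pow_left₀ (norm_nonneg _)
                  calc ‖u - x (j+1+1)‖ ≤ ‖u‖ + ‖x (j+1+1)‖ := norm_sub_le _ _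
                  _ ≤ ‖u‖ + (Bx + ‖xs‖) := by
                      have h2 : ‖x (j+1+1)‖ = ‖(x (j+1+1) - xs) + xs‖ := by congr 1; abel
                      have h3 : ‖(x (j+1+1) - xs) + xs‖ ≤ ‖x (j+1+1) - xs‖ + ‖xs‖ := norm_add_le _ _
                      have h4 := hxb j
                      rw [h2]
                      linarith
        · have h1 := hMdx.sqrt
          simp only [Real.sqrt_zero] at h1
          have h2 := h1.mul_const (Real.sqrt (‖M₁ 0‖ * (‖u‖ + (Bx + ‖xs‖))^2))
          simpa using h2
      have t4 : Tendsto (fun j => ⟪(M₂ (j+1)) (z (j+1+1) - z (j+1)), w - z (j+1+1)⟫_ℝ)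
          atTop (nhds 0) := by
        apply squeeze_zero_norm
          (a := fun j => (Real.sqrt ‖M₂ 0‖ * ‖z (j+1+1) - z (j+1)‖)
            * Real.sqrt (‖M₂ 0‖ * (‖w‖ + (Bz + ‖zs‖))^2))
        · intro j
          rw [Real.norm_eq_abs]
          calc |⟪(M₂ (j+1)) (z (j+1+1) - z (j+1)), w - z (j+1+1)⟫_ℝ|
              ≤ Real.sqrt (opSq (M₂ (j+1)) (z (j+1+1) - z (j+1)))
                * Real.sqrt (opSq (M₂ (j+1)) (w - z (j+1+1))) := cs_abs (hM₂ (j+1)) _ _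
          _ ≤ _ := by
              apply mul_le_mul
              · calc Real.sqrt (opSq (M₂ (j+1)) (z (j+1+1) - z (j+1)))
                    ≤ Real.sqrt (‖M₂ 0‖ * ‖z (j+1+1) - z (j+1)‖^2) := by
                      apply Real.sqrt_le_sqrt
                      exact le_trans (hM₂dec _ _) (opSq_le_norm _)
                _ = Real.sqrt ‖M₂ 0‖ * ‖z (j+1+1) - z (j+1)‖ := by
                      rw [Real.sqrt_mul (norm_nonneg _), Real.sqrt_sq (norm_nonneg _)]
              · apply Real.sqrt_le_sqrt
                calc opSq (M₂ (j+1)) (w - z (j+1+1)) ≤ opSq (M₂ 0) (w - z (j+1+1)) := hM₂dec _ _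
                _ ≤ ‖M₂ 0‖ * ‖w - z (j+1+1)‖^2 := opSq_le_norm _
                _ ≤ ‖M₂ 0‖ * (‖w‖ + (Bz + ‖zs‖))^2 := by
                    apply mul_le_mul_of_nonneg_left _ (norm_nonneg _)
                    apply pow_le_pow_left₀ (norm_nonneg _)
                    calc ‖w - z (j+1+1)‖ ≤ ‖w‖ + ‖z (j+1+1)‖ := norm_sub_le _ _
                    _ ≤ ‖w‖ + (Bz + ‖zs‖) := by
                        have h2 : ‖z (j+1+1)‖ = ‖(z (j+1+1) - zs) + zs‖ := by congr 1; abel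
                        have h3 : ‖(z (j+1+1) - zs) + zs‖ ≤ ‖z (j+1+1) - zs‖ + ‖zs‖ := norm_add_le _ _
                        have h4 := hzb (j+1)
                        rw [h2]
                        linarith
              · exact Real.sqrt_nonneg _
              · positivity
        · have h1 := ((hdznorm.const_mul (Real.sqrt ‖M₂ 0‖)).mul_const
            (Real.sqrt (‖M₂ 0‖ * (‖w‖ + (Bz + ‖zs‖))^2)))
          simpa using h1
      have := ((t1.add t2).add t3).add t4
      simpa using this
    · -- the inequality
      intro j
      have h1 := hIf (j+1) u ru hu
      have h2 := hIg (j+1) w rw' hw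
      have Ex1 : ⟪(ContinuousLinearMap.adjoint A) (y (j+1+1) + c • (z (j+1+1) - z (j+1)))
            + (M₁ (j+1)) (x (j+1+1) - x (j+1)), u - x (j+1+1)⟫_ℝ
          = ⟪y (j+1+1), A u - A (x (j+1+1))⟫_ℝ
            + c * ⟪z (j+1+1) - z (j+1), A u - A (x (j+1+1))⟫_ℝ
            + ⟪(M₁ (j+1)) (x (j+1+1) - x (j+1)), u - x (j+1+1)⟫_ℝ := by
        rw [inner_add_left, ContinuousLinearMap.adjoint_inner_left, map_sub, inner_add_left,
          real_inner_smul_left]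
      have Ex2 : ⟪-(y (j+1+1)) + (M₂ (j+1)) (z (j+1+1) - z (j+1)), w - z (j+1+1)⟫_ℝ
          = -⟪y (j+1+1), w - z (j+1+1)⟫_ℝ
            + ⟪(M₂ (j+1)) (z (j+1+1) - z (j+1)), w - z (j+1+1)⟫_ℝ := by
        rw [inner_add_left, inner_neg_left]
      have Ex3 : ⟪y (j+1+1), A u - A (x (j+1+1))⟫_ℝ - ⟪y (j+1+1), w - z (j+1+1)⟫_ℝ
          = ⟪y (j+1+1), A u - w⟫_ℝ - c⁻¹ * ⟪y (j+1+1), y (j+1+1) - y (j+1)⟫_ℝ := by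
        rw [hAxk (j+1)]
        simp only [inner_sub_right, inner_add_right, real_inner_smul_right]
        ring
      linarith [h1, h2, Ex1, Ex2, Ex3]
  -- residual norms tend to zero
  have hresnorm : Tendsto (fun j => ‖A (x (j+1+1)) - z (j+1+1)‖) atTop (nhds 0) := by
    have heq : ∀ j, ‖A (x (j+1+1)) - z (j+1+1)‖ = c⁻¹ * ‖y (j+1+1) - y (j+1)‖ := by
      intro j
      rw [hresid2 (j+1), norm_smul, Real.norm_eq_abs, abs_of_pos hcinv]
    simp_rw [heq]
    simpa using hdynorm.const_mul c⁻¹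
  -- every weak cluster point (along any subsequence) is a saddle point
  have hcluster : ∀ js : ℕ → ℕ, Tendsto js atTop atTop →
      ∀ (xh : H) (zh yh : G), WeakConv (fun j => x (js j + 1 + 1)) xh →
        WeakConv (fun j => z (js j + 1 + 1)) zh → WeakConv (fun j => y (js j + 1 + 1)) yh →
        IsSaddle (Lagr f g A) xh zh yh ∧ A xh = zh := by
    intro js hjs xh zh yh hwx hwz hwy
    -- A xh = zh
    have hAxz : A xh = zh := by
      have hkey : ∀ w : G, ⟪A xh - zh, w⟫_ℝ = 0 := by
        intro w
        have l2 : ∀ j, ⟪A (x (js j + 1 + 1)) - z (js j + 1 + 1), w⟫_ℝ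
            = ⟪x (js j + 1 + 1), (ContinuousLinearMap.adjoint A) w⟫_ℝ
              - ⟪z (js j + 1 + 1), w⟫_ℝ := by
          intro j
          rw [inner_sub_left]
          congr 1
          exact (ContinuousLinearMap.adjoint_inner_right _ _ _).symm
        have l3 := (hwx ((ContinuousLinearMap.adjoint A) w)).sub (hwz w)
        have l1 : Tendsto (fun j => ⟪A (x (js j + 1 + 1)) - z (js j + 1 + 1), w⟫_ℝ) atTop
            (nhds (⟪A xh - zh, w⟫_ℝ)) := by
          simp_rw [l2]
          have l4 : ⟪A xh - zh, w⟫_ℝ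
              = ⟪xh, (ContinuousLinearMap.adjoint A) w⟫_ℝ - ⟪zh, w⟫_ℝ := by
            rw [inner_sub_left]
            congr 1
            exact (ContinuousLinearMap.adjoint_inner_right _ _ _).symm
          rw [l4]
          exact l3
        have l5 : Tendsto (fun j => ⟪A (x (js j + 1 + 1)) - z (js j + 1 + 1), w⟫_ℝ) atTop
            (nhds 0) := by
          apply squeeze_zero_norm (a := fun j => ‖A (x (js j + 1 + 1)) - z (js j + 1 + 1)‖ * ‖w‖)
          · intro j
            rw [Real.norm_eq_abs]
            exact abs_real_inner_le_norm _ _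
          · have := (hresnorm.comp hjs).mul_const ‖w‖
            simpa using this
        exact tendsto_nhds_unique l1 l5
      have h6 := hkey (A xh - zh)
      rw [real_inner_self_eq_norm_sq] at h6
      have h7 : A xh - zh = 0 := by
        have := norm_eq_zero.mp (pow_eq_zero_iff (n := 2) (by norm_num) |>.mp h6)
        exact this
      rwa [sub_eq_zero] at h7
    -- lower and upper bounds for the value sequences
    have hfrlb : ∀ j, frs - ‖ys‖ * BA ≤ frv (j+1) := by
      intro j
      have h1 := hS1s (x (j+1+1)) (frv (j+1)) (hfr (j+1))
      have h2 : |⟪ys, A (x (j+1+1)) - A xs⟫_ℝ| ≤ ‖ys‖ * BA := by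
        calc |⟪ys, A (x (j+1+1)) - A xs⟫_ℝ| ≤ ‖ys‖ * ‖A (x (j+1+1)) - A xs‖ :=
              abs_real_inner_le_norm _ _
        _ ≤ ‖ys‖ * BA := by
            apply mul_le_mul_of_nonneg_left _ (norm_nonneg _)
            rw [hAxs]
            exact hAxzs j
      have h3 := (abs_le.mp h2).2
      linarith
    have hgrlb : ∀ j, grs - ‖ys‖ * Bz ≤ grv (j+1) := by
      intro j
      have h1 := hS2s (z (j+1+1)) (grv (j+1)) (hgr (j+1))
      have h2 : |⟪ys, z (j+1+1) - zs⟫_ℝ| ≤ ‖ys‖ * Bz := by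
        calc |⟪ys, z (j+1+1) - zs⟫_ℝ| ≤ ‖ys‖ * ‖z (j+1+1) - zs‖ := abs_real_inner_le_norm _ _
        _ ≤ ‖ys‖ * Bz := mul_le_mul_of_nonneg_left (hzb (j+1)) (norm_nonneg _)
      have h3 := (abs_le.mp h2).1
      linarith
    obtain ⟨δ0, hδ0, hineq0⟩ := hLIM xs frs hfrs zs grs hgrs
    obtain ⟨Cδ, hCδ⟩ := hδ0.bddAbove_range
    have hAxszs : ∀ j, ⟪y (j+1+1), A xs - zs⟫_ℝ = 0 := by
      intro j
      rw [hAxs, sub_self, inner_zero_right]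
    have hfrub : ∀ j, frv (j+1) ≤ frs + grs + Cδ - (grs - ‖ys‖ * Bz) := by
      intro j
      have h1 := hineq0 j
      rw [hAxszs j] at h1
      have h3 : δ0 j ≤ Cδ := hCδ ⟨j, rfl⟩
      have h4 := hgrlb j
      linarith
    have hgrub : ∀ j, grv (j+1) ≤ frs + grs + Cδ - (frs - ‖ys‖ * BA) := by
      intro j
      have h1 := hineq0 j
      rw [hAxszs j] at h1
      have h3 : δ0 j ≤ Cδ := hCδ ⟨j, rfl⟩
      have h4 := hfrlb j
      linarith
    -- extract convergent value subsequences
    obtain ⟨ρf, ψ₁, hψ₁, hρf⟩ := bolzano_real (fun j => frv (js j + 1))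
      (frs - ‖ys‖ * BA) (frs + grs + Cδ - (grs - ‖ys‖ * Bz))
      (fun j => ⟨hfrlb (js j), hfrub (js j)⟩)
    obtain ⟨ρg, ψ₂, hψ₂, hρg⟩ := bolzano_real (fun j => grv (js (ψ₁ j) + 1))
      (grs - ‖ys‖ * Bz) (frs + grs + Cδ - (frs - ‖ys‖ * BA))
      (fun j => ⟨hgrlb (js (ψ₁ j)), hgrub (js (ψ₁ j))⟩)
    have hψT : Tendsto (fun j => ψ₁ (ψ₂ j)) atTop atTop :=
      hψ₁.tendsto_atTop.comp hψ₂.tendsto_atTop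
    have hjs'T : Tendsto (fun j => js (ψ₁ (ψ₂ j))) atTop atTop := hjs.comp hψT
    have hwx' : WeakConv (fun j => x (js (ψ₁ (ψ₂ j)) + 1 + 1)) xh :=
      fun w => (hwx w).comp hψT
    have hwz' : WeakConv (fun j => z (js (ψ₁ (ψ₂ j)) + 1 + 1)) zh :=
      fun w => (hwz w).comp hψT
    have hwy' : WeakConv (fun j => y (js (ψ₁ (ψ₂ j)) + 1 + 1)) yh :=
      fun w => (hwy w).comp hψT
    have hρf' : Tendsto (fun j => frv (js (ψ₁ (ψ₂ j)) + 1)) atTop (nhds ρf) :=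
      hρf.comp hψ₂.tendsto_atTop
    have hρg' : Tendsto (fun j => grv (js (ψ₁ (ψ₂ j)) + 1)) atTop (nhds ρg) := hρg
    -- weak lower semicontinuity
    have hfxh : f xh ≤ (ρf : EReal) :=
      weak_lsc f hfp hfc hfl (fun j => x (js (ψ₁ (ψ₂ j)) + 1 + 1)) xh hwx'
        (fun j => frv (js (ψ₁ (ψ₂ j)) + 1)) ρf hρf'
        (fun j => le_of_eq (hfr (js (ψ₁ (ψ₂ j)) + 1)))
    have hgzh : g zh ≤ (ρg : EReal) :=
      weak_lsc g hgp hgc hgl (fun j => z (js (ψ₁ (ψ₂ j)) + 1 + 1)) zh hwz'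
        (fun j => grv (js (ψ₁ (ψ₂ j)) + 1)) ρg hρg'
        (fun j => le_of_eq (hgr (js (ψ₁ (ψ₂ j)) + 1)))
    -- the limit variational inequality
    have hlimineq : ∀ (u : H) (ru : ℝ), f u = (ru : EReal) → ∀ (w : G) (rw' : ℝ),
        g w = (rw' : EReal) → ρf + ρg ≤ ru + rw' + ⟪yh, A u - w⟫_ℝ := by
      intro u ru hu w rw' hw
      obtain ⟨δ, hδ, hineq⟩ := hLIM u ru hu w rw' hw
      have l1 : Tendsto (fun j => frv (js (ψ₁ (ψ₂ j)) + 1) + grv (js (ψ₁ (ψ₂ j)) + 1)) atTop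
          (nhds (ρf + ρg)) := hρf'.add hρg'
      have l2 : Tendsto (fun j => ru + rw' + ⟪y (js (ψ₁ (ψ₂ j)) + 1 + 1), A u - w⟫_ℝ
          + δ (js (ψ₁ (ψ₂ j)))) atTop (nhds (ru + rw' + ⟪yh, A u - w⟫_ℝ + 0)) :=
        (tendsto_const_nhds.add (hwy' (A u - w))).add (hδ.comp hjs'T)
      have l3 := le_of_tendsto_of_tendsto' l1 l2 (fun j => hineq (js (ψ₁ (ψ₂ j))))
      simpa using l3
    obtain ⟨rxh, hrxh, hrxhle⟩ := ereal_finite_of_le_coe hfp.1 hfxh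
    obtain ⟨rzh, hrzh, hrzhle⟩ := ereal_finite_of_le_coe hgp.1 hgzh
    have hinnerzero : ∀ v' : G, ⟪v', A xh - zh⟫_ℝ = 0 := by
      intro v'
      rw [hAxz, sub_self, inner_zero_right]
    refine ⟨?_, hAxz⟩
    intro p q v
    constructor
    · rw [lagr_coe hrxh hrzh, lagr_coe hrxh hrzh, hinnerzero, hinnerzero]
    · rcases eq_or_ne (f p) ⊤ with hp | hp
      · simp only [Lagr]
        rw [hp, EReal.top_add_of_ne_bot (hgp.1 q),
          EReal.top_add_of_ne_bot (EReal.coe_ne_bot _)]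
        exact le_top
      rcases eq_or_ne (g q) ⊤ with hq | hq
      · simp only [Lagr]
        rw [hq, EReal.add_top_of_ne_bot (hfp.1 p),
          EReal.top_add_of_ne_bot (EReal.coe_ne_bot _)]
        exact le_top
      obtain ⟨rp, hrp⟩ := ereal_fin hfp hp
      obtain ⟨rq, hrq⟩ := ereal_fin hgp hq
      rw [lagr_coe hrxh hrzh, lagr_coe hrp hrq, EReal.coe_le_coe_iff]
      have h1 := hlimineq p rp hrp q rq hrq
      have h2 := hinnerzero yh
      linarith
  -- norm bounds for the shifted sequences
  have hxnorm : ∀ j, ‖x (j+1+1)‖ ≤ Bx + ‖xs‖ := by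
    intro j
    calc ‖x (j+1+1)‖ = ‖(x (j+1+1) - xs) + xs‖ := by congr 1; abel
    _ ≤ ‖x (j+1+1) - xs‖ + ‖xs‖ := norm_add_le _ _
    _ ≤ Bx + ‖xs‖ := by linarith [hxb j]
  have hznorm : ∀ j, ‖z (j+1+1)‖ ≤ Bz + ‖zs‖ := by
    intro j
    calc ‖z (j+1+1)‖ = ‖(z (j+1+1) - zs) + zs‖ := by congr 1; abel
    _ ≤ ‖z (j+1+1) - zs‖ + ‖zs‖ := norm_add_le _ _
    _ ≤ Bz + ‖zs‖ := by linarith [hzb (j+1)]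
  have hynorm : ∀ j, ‖y (j+1+1)‖ ≤ By + ‖ys‖ := by
    intro j
    calc ‖y (j+1+1)‖ = ‖(y (j+1+1) - ys) + ys‖ := by congr 1; abel
    _ ≤ ‖y (j+1+1) - ys‖ + ‖ys‖ := norm_add_le _ _
    _ ≤ By + ‖ys‖ := by linarith [hyb (j+1)]
  -- extraction of weakly convergent subsequences
  have hextract : ∀ ns : ℕ → ℕ, Tendsto ns atTop atTop →
      ∃ ms : ℕ → ℕ, Tendsto (fun j => ns (ms j)) atTop atTop ∧
        ∃ (xh : H) (zh yh : G),
          WeakConv (fun j => x (ns (ms j) + 1 + 1)) xh ∧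
          WeakConv (fun j => z (ns (ms j) + 1 + 1)) zh ∧
          WeakConv (fun j => y (ns (ms j) + 1 + 1)) yh := by
    intro ns hns
    obtain ⟨xh, φ₁, hφ₁, hwx⟩ := weak_compact (fun j => x (ns j + 1 + 1)) (Bx + ‖xs‖)
      (fun j => hxnorm (ns j))
    obtain ⟨zh, φ₂, hφ₂, hwz⟩ := weak_compact (fun j => z (ns (φ₁ j) + 1 + 1)) (Bz + ‖zs‖)
      (fun j => hznorm (ns (φ₁ j)))
    obtain ⟨yh, φ₃, hφ₃, hwy⟩ := weak_compact (fun j => y (ns (φ₁ (φ₂ j)) + 1 + 1)) (By + ‖ys‖)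
      (fun j => hynorm (ns (φ₁ (φ₂ j))))
    refine ⟨fun j => φ₁ (φ₂ (φ₃ j)), ?_, xh, zh, yh, ?_, ?_, ?_⟩
    · exact hns.comp (hφ₁.tendsto_atTop.comp (hφ₂.tendsto_atTop.comp hφ₃.tendsto_atTop))
    · exact fun w => (hwx w).comp (hφ₂.tendsto_atTop.comp hφ₃.tendsto_atTop)
    · exact fun w => (hwz w).comp hφ₃.tendsto_atTop
    · exact fun w => hwy w
  -- limits of the decreasing metric operators
  obtain ⟨L₁, hL₁⟩ := psd_limit M₁ hM₁ hM₁mono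
  obtain ⟨L₂, hL₂⟩ := psd_limit M₂ hM₂ (fun k => (hM₂chain k).2)
  have hL₁q : ∀ d : H, Tendsto (fun k => opSq (M₁ k) d) atTop (nhds ⟪d, L₁ d⟫_ℝ) :=
    fun d => (tendsto_const_nhds (x := d)).inner (hL₁ d)
  have hL₂q : ∀ d : G, Tendsto (fun k => opSq (M₂ k) d) atTop (nhds ⟪d, L₂ d⟫_ℝ) :=
    fun d => (tendsto_const_nhds (x := d)).inner (hL₂ d)
  have hL₁pos : ∀ d : H, 0 ≤ ⟪d, L₁ d⟫_ℝ :=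
    fun d => ge_of_tendsto (hL₁q d) (Eventually.of_forall (fun k => (hM₁ k).2 d))
  have hL₂pos : ∀ d : G, 0 ≤ ⟪d, L₂ d⟫_ℝ :=
    fun d => ge_of_tendsto (hL₂q d) (Eventually.of_forall (fun k => (hM₂ k).2 d))
  -- convergence of the Fejér functional for any saddle point
  have hEFconv : ∀ (p : H) (q v : G), IsSaddle (Lagr f g A) p q v →
      ∃ ℓ, Tendsto (EF p q v) atTop (nhds ℓ) := by
    intro p q v hsadp
    refine ⟨_, tendsto_atTop_ciInf (antitone_nat_of_succ_le (fun j => ?_)) ⟨0, ?_⟩⟩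
    · have h1 := hfejer p q v hsadp j
      have h2 := hDq0 (j+1)
      linarith
    · rintro r ⟨j, rfl⟩
      exact hEF0 p q v j
  -- uniqueness of weak cluster points (Opial-type argument)
  have huniq : ∀ (x₁ : H) (z₁ y₁ : G), IsSaddle (Lagr f g A) x₁ z₁ y₁ → A x₁ = z₁ →
      ∀ (x₂ : H) (z₂ y₂ : G), IsSaddle (Lagr f g A) x₂ z₂ y₂ → A x₂ = z₂ →
      ∀ js₁ : ℕ → ℕ, Tendsto js₁ atTop atTop →
        WeakConv (fun j => x (js₁ j + 1 + 1)) x₁ →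
        WeakConv (fun j => z (js₁ j + 1 + 1)) z₁ →
        WeakConv (fun j => y (js₁ j + 1 + 1)) y₁ →
      ∀ js₂ : ℕ → ℕ, Tendsto js₂ atTop atTop →
        WeakConv (fun j => x (js₂ j + 1 + 1)) x₂ →
        WeakConv (fun j => z (js₂ j + 1 + 1)) z₂ →
        WeakConv (fun j => y (js₂ j + 1 + 1)) y₂ →
      x₁ = x₂ ∧ z₁ = z₂ ∧ y₁ = y₂ := by
    intro x₁ z₁ y₁ hsad₁ hAx₁ x₂ z₂ y₂ hsad₂ hAx₂ js₁ hjs₁ hwx₁ hwz₁ hwy₁ js₂ hjs₂ hwx₂ hwz₂ hwy₂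
    obtain ⟨ℓ₁, hℓ₁⟩ := hEFconv x₁ z₁ y₁ hsad₁
    obtain ⟨ℓ₂, hℓ₂⟩ := hEFconv x₂ z₂ y₂ hsad₂
    have hdiff : Tendsto (fun j => EF x₁ z₁ y₁ j - EF x₂ z₂ y₂ j) atTop (nhds (ℓ₁ - ℓ₂)) :=
      hℓ₁.sub hℓ₂
    have hdiffeq : ∀ j, EF x₁ z₁ y₁ j - EF x₂ z₂ y₂ j
        = (opSq (M₁ (j+1)) x₁ - opSq (M₁ (j+1)) x₂
            - 2 * ⟪x (j+1), (M₁ (j+1)) (x₁ - x₂)⟫_ℝ)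
          + (opSq (M₂ (j+1)) z₁ - opSq (M₂ (j+1)) z₂
            - 2 * ⟪z (j+1), (M₂ (j+1)) (z₁ - z₂)⟫_ℝ)
          + c * (‖z₁‖^2 - ‖z₂‖^2 - 2 * ⟪z (j+1), z₁ - z₂⟫_ℝ)
          + c⁻¹ * (‖y₁‖^2 - ‖y₂‖^2 - 2 * ⟪y (j+1), y₁ - y₂⟫_ℝ) := by
      intro j
      simp only [hEF]
      have d1 := opSq_diff (hM₁ (j+1)) (x (j+1)) x₁ x₂
      have d2 := opSq_diff (hM₂ (j+1)) (z (j+1)) z₁ z₂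
      have d3 := norm_diff (z (j+1)) z₁ z₂
      have d4 := norm_diff (y (j+1)) y₁ y₂
      have d3' : c * ‖z (j+1) - z₁‖^2 - c * ‖z (j+1) - z₂‖^2
          = c * (‖z₁‖^2 - ‖z₂‖^2 - 2 * ⟪z (j+1), z₁ - z₂⟫_ℝ) := by
        linear_combination c * d3
      have d4' : c⁻¹ * ‖y (j+1) - y₁‖^2 - c⁻¹ * ‖y (j+1) - y₂‖^2
          = c⁻¹ * (‖y₁‖^2 - ‖y₂‖^2 - 2 * ⟪y (j+1), y₁ - y₂⟫_ℝ) := by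
        linear_combination c⁻¹ * d4
      linarith [d1, d2, d3', d4']
    -- the limit value along each of the two subsequences
    have hval : ∀ (js : ℕ → ℕ), Tendsto js atTop atTop →
        ∀ (xh : H) (zh yh : G), WeakConv (fun j => x (js j + 1 + 1)) xh →
          WeakConv (fun j => z (js j + 1 + 1)) zh →
          WeakConv (fun j => y (js j + 1 + 1)) yh →
        ℓ₁ - ℓ₂ = (⟪x₁, L₁ x₁⟫_ℝ - ⟪x₂, L₁ x₂⟫_ℝ - 2 * ⟪xh, L₁ (x₁ - x₂)⟫_ℝ)
          + (⟪z₁, L₂ z₁⟫_ℝ - ⟪z₂, L₂ z₂⟫_ℝ - 2 * ⟪zh, L₂ (z₁ - z₂)⟫_ℝ)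
          + c * (‖z₁‖^2 - ‖z₂‖^2 - 2 * ⟪zh, z₁ - z₂⟫_ℝ)
          + c⁻¹ * (‖y₁‖^2 - ‖y₂‖^2 - 2 * ⟪yh, y₁ - y₂⟫_ℝ) := by
      intro js hjs xh zh yh hwx hwz hwy
      have T2 : Tendsto (fun j => js j + 1 + 1) atTop atTop :=
        (tendsto_add_atTop_nat 1).comp ((tendsto_add_atTop_nat 1).comp hjs)
      have T1 : Tendsto (fun j => js j + 1) atTop atTop :=
        (tendsto_add_atTop_nat 1).comp hjs
      have tq1 : Tendsto (fun j => opSq (M₁ (js j + 1 + 1)) x₁) atTop (nhds ⟪x₁, L₁ x₁⟫_ℝ) :=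
        (hL₁q x₁).comp T2
      have tq2 : Tendsto (fun j => opSq (M₁ (js j + 1 + 1)) x₂) atTop (nhds ⟪x₂, L₁ x₂⟫_ℝ) :=
        (hL₁q x₂).comp T2
      have tq3 : Tendsto (fun j => opSq (M₂ (js j + 1 + 1)) z₁) atTop (nhds ⟪z₁, L₂ z₁⟫_ℝ) :=
        (hL₂q z₁).comp T2
      have tq4 : Tendsto (fun j => opSq (M₂ (js j + 1 + 1)) z₂) atTop (nhds ⟪z₂, L₂ z₂⟫_ℝ) :=
        (hL₂q z₂).comp T2
      have tB1 : Tendsto (fun j => ⟪x (js j + 1 + 1), (M₁ (js j + 1 + 1)) (x₁ - x₂)⟫_ℝ)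
          atTop (nhds ⟪xh, L₁ (x₁ - x₂)⟫_ℝ) :=
        inner_weak_strong (fun j => x (js j + 1 + 1)) (Bx + ‖xs‖) (fun j => hxnorm (js j))
          xh hwx (fun j => (M₁ (js j + 1 + 1)) (x₁ - x₂)) (L₁ (x₁ - x₂))
          ((hL₁ (x₁ - x₂)).comp T2)
      have tB2 : Tendsto (fun j => ⟪z (js j + 1 + 1), (M₂ (js j + 1 + 1)) (z₁ - z₂)⟫_ℝ)
          atTop (nhds ⟪zh, L₂ (z₁ - z₂)⟫_ℝ) :=
        inner_weak_strong (fun j => z (js j + 1 + 1)) (Bz + ‖zs‖) (fun j => hznorm (js j))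
          zh hwz (fun j => (M₂ (js j + 1 + 1)) (z₁ - z₂)) (L₂ (z₁ - z₂))
          ((hL₂ (z₁ - z₂)).comp T2)
      have piece1 := (tq1.sub tq2).sub (tB1.const_mul 2)
      have piece2 := (tq3.sub tq4).sub (tB2.const_mul 2)
      have piece3 := ((tendsto_const_nhds (x := ‖z₁‖^2 - ‖z₂‖^2)).sub
        ((hwz (z₁ - z₂)).const_mul 2)).const_mul c
      have piece4 := ((tendsto_const_nhds (x := ‖y₁‖^2 - ‖y₂‖^2)).sub
        ((hwy (y₁ - y₂)).const_mul 2)).const_mul c⁻¹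
      have total := ((piece1.add piece2).add piece3).add piece4
      have hfun : (fun j => EF x₁ z₁ y₁ (js j + 1) - EF x₂ z₂ y₂ (js j + 1))
          = fun j => (opSq (M₁ (js j + 1 + 1)) x₁ - opSq (M₁ (js j + 1 + 1)) x₂
              - 2 * ⟪x (js j + 1 + 1), (M₁ (js j + 1 + 1)) (x₁ - x₂)⟫_ℝ)
            + (opSq (M₂ (js j + 1 + 1)) z₁ - opSq (M₂ (js j + 1 + 1)) z₂
              - 2 * ⟪z (js j + 1 + 1), (M₂ (js j + 1 + 1)) (z₁ - z₂)⟫_ℝ)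
            + c * (‖z₁‖^2 - ‖z₂‖^2 - 2 * ⟪z (js j + 1 + 1), z₁ - z₂⟫_ℝ)
            + c⁻¹ * (‖y₁‖^2 - ‖y₂‖^2 - 2 * ⟪y (js j + 1 + 1), y₁ - y₂⟫_ℝ) :=
        funext (fun j => hdiffeq (js j + 1))
      have hsub : Tendsto (fun j => EF x₁ z₁ y₁ (js j + 1) - EF x₂ z₂ y₂ (js j + 1)) atTop
          (nhds (ℓ₁ - ℓ₂)) := hdiff.comp T1
      rw [hfun] at hsub
      exact tendsto_nhds_unique hsub total
    have hv₁ := hval js₁ hjs₁ x₁ z₁ y₁ hwx₁ hwz₁ hwy₁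
    have hv₂ := hval js₂ hjs₂ x₂ z₂ y₂ hwx₂ hwz₂ hwy₂
    have veq := hv₁.symm.trans hv₂
    have e1 : ⟪x₁, L₁ (x₁ - x₂)⟫_ℝ - ⟪x₂, L₁ (x₁ - x₂)⟫_ℝ = ⟪x₁ - x₂, L₁ (x₁ - x₂)⟫_ℝ :=
      (inner_sub_left _ _ _).symm
    have e2 : ⟪z₁, L₂ (z₁ - z₂)⟫_ℝ - ⟪z₂, L₂ (z₁ - z₂)⟫_ℝ = ⟪z₁ - z₂, L₂ (z₁ - z₂)⟫_ℝ :=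
      (inner_sub_left _ _ _).symm
    have e3 : ⟪z₁, z₁ - z₂⟫_ℝ - ⟪z₂, z₁ - z₂⟫_ℝ = ⟪z₁ - z₂, z₁ - z₂⟫_ℝ :=
      (inner_sub_left _ _ _).symm
    have e4 : ⟪y₁, y₁ - y₂⟫_ℝ - ⟪y₂, y₁ - y₂⟫_ℝ = ⟪y₁ - y₂, y₁ - y₂⟫_ℝ :=
      (inner_sub_left _ _ _).symm
    have hzero : ⟪x₁ - x₂, L₁ (x₁ - x₂)⟫_ℝ + ⟪z₁ - z₂, L₂ (z₁ - z₂)⟫_ℝ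
        + c * ⟪z₁ - z₂, z₁ - z₂⟫_ℝ + c⁻¹ * ⟪y₁ - y₂, y₁ - y₂⟫_ℝ = 0 := by
      linear_combination (-(1:ℝ)/2) * veq - e1 - e2 - c * e3 - c⁻¹ * e4
    have n1 := hL₁pos (x₁ - x₂)
    have n2 := hL₂pos (z₁ - z₂)
    have n3 : ⟪z₁ - z₂, z₁ - z₂⟫_ℝ = ‖z₁ - z₂‖^2 := real_inner_self_eq_norm_sq _
    have n4 : ⟪y₁ - y₂, y₁ - y₂⟫_ℝ = ‖y₁ - y₂‖^2 := real_inner_self_eq_norm_sq _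
    have hz0 : z₁ = z₂ := by
      have h1 : c * ‖z₁ - z₂‖^2 ≤ 0 := by
        have h2 : (0:ℝ) ≤ c⁻¹ * ‖y₁ - y₂‖^2 := mul_nonneg hcinv.le (sq_nonneg _)
        rw [n3, n4] at hzero
        linarith
      have h3 : ‖z₁ - z₂‖^2 ≤ 0 := by
        by_contra h4
        push_neg at h4
        nlinarith
      have h5 : ‖z₁ - z₂‖ = 0 := by
        have := sq_nonneg ‖z₁ - z₂‖
        have h6 : ‖z₁ - z₂‖^2 = 0 := le_antisymm h3 this
        exact pow_eq_zero_iff (n := 2) (by norm_num) |>.mp h6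
      have := norm_eq_zero.mp h5
      rwa [sub_eq_zero] at this
    have hy0 : y₁ = y₂ := by
      have h1 : c⁻¹ * ‖y₁ - y₂‖^2 ≤ 0 := by
        have h2 : (0:ℝ) ≤ c * ‖z₁ - z₂‖^2 := mul_nonneg hc.le (sq_nonneg _)
        rw [n3, n4] at hzero
        linarith
      have h3 : ‖y₁ - y₂‖^2 ≤ 0 := by
        by_contra h4
        push_neg at h4
        nlinarith
      have h5 : ‖y₁ - y₂‖ = 0 := by
        have := sq_nonneg ‖y₁ - y₂‖
        have h6 : ‖y₁ - y₂‖^2 = 0 := le_antisymm h3 this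
        exact pow_eq_zero_iff (n := 2) (by norm_num) |>.mp h6
      have := norm_eq_zero.mp h5
      rwa [sub_eq_zero] at this
    have hx0 : x₁ = x₂ := by
      have h1 : A (x₁ - x₂) = 0 := by
        rw [map_sub, hAx₁, hAx₂, hz0, sub_self]
      have h2 := hA.2 (x₁ - x₂)
      have h3 : ⟪x₁ - x₂, ((ContinuousLinearMap.adjoint A).comp A) (x₁ - x₂)⟫_ℝ
          = ‖A (x₁ - x₂)‖^2 := by
        rw [ContinuousLinearMap.comp_apply, ContinuousLinearMap.adjoint_inner_right,
          real_inner_self_eq_norm_sq]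
      rw [h3, h1] at h2
      simp only [norm_zero] at h2
      have h4 : ‖x₁ - x₂‖^2 ≤ 0 := by
        by_contra h5
        push_neg at h5
        nlinarith
      have h6 : ‖x₁ - x₂‖ = 0 := by
        have := sq_nonneg ‖x₁ - x₂‖
        have h7 : ‖x₁ - x₂‖^2 = 0 := le_antisymm h4 this
        exact pow_eq_zero_iff (n := 2) (by norm_num) |>.mp h7
      have := norm_eq_zero.mp h6
      rwa [sub_eq_zero] at this
    exact ⟨hx0, hz0, hy0⟩
  -- base cluster point
  obtain ⟨ms₀, hms₀T, xh, zh, yh, hwx0, hwz0, hwy0⟩ := hextract (fun n => n) tendsto_id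
  obtain ⟨hsadh, hAxzh⟩ := hcluster (fun j => ms₀ j) hms₀T xh zh yh hwx0 hwz0 hwy0
  refine ⟨xh, zh, yh, hsadh, ?_, ?_, ?_⟩
  · intro w
    have hshift : Tendsto (fun j => ⟪x (j+1+1), w⟫_ℝ) atTop (nhds ⟪xh, w⟫_ℝ) := by
      apply Filter.tendsto_of_subseq_tendsto
      intro ns hns
      obtain ⟨ms, hmsT, xh', zh', yh', hwx', hwz', hwy'⟩ := hextract ns hns
      obtain ⟨hsad', hAxz'⟩ := hcluster (fun j => ns (ms j)) hmsT xh' zh' yh' hwx' hwz' hwy'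
      obtain ⟨hxeq, hzeq, hyeq⟩ := huniq xh' zh' yh' hsad' hAxz' xh zh yh hsadh hAxzh
        (fun j => ns (ms j)) hmsT hwx' hwz' hwy' ms₀ hms₀T hwx0 hwz0 hwy0
      refine ⟨ms, ?_⟩
      have h1 := hwx' w
      rw [hxeq] at h1
      exact h1
    exact (tendsto_add_atTop_iff_nat 2).mp hshift
  · intro w
    have hshift : Tendsto (fun j => ⟪z (j+1+1), w⟫_ℝ) atTop (nhds ⟪zh, w⟫_ℝ) := by
      apply Filter.tendsto_of_subseq_tendsto
      intro ns hns
      obtain ⟨ms, hmsT, xh', zh', yh', hwx', hwz', hwy'⟩ := hextract ns hns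
      obtain ⟨hsad', hAxz'⟩ := hcluster (fun j => ns (ms j)) hmsT xh' zh' yh' hwx' hwz' hwy'
      obtain ⟨hxeq, hzeq, hyeq⟩ := huniq xh' zh' yh' hsad' hAxz' xh zh yh hsadh hAxzh
        (fun j => ns (ms j)) hmsT hwx' hwz' hwy' ms₀ hms₀T hwx0 hwz0 hwy0
      refine ⟨ms, ?_⟩
      have h1 := hwz' w
      rw [hzeq] at h1
      exact h1
    exact (tendsto_add_atTop_iff_nat 2).mp hshift
  · intro w
    have hshift : Tendsto (fun j => ⟪y (j+1+1), w⟫_ℝ) atTop (nhds ⟪yh, w⟫_ℝ) := by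
      apply Filter.tendsto_of_subseq_tendsto
      intro ns hns
      obtain ⟨ms, hmsT, xh', zh', yh', hwx', hwz', hwy'⟩ := hextract ns hns
      obtain ⟨hsad', hAxz'⟩ := hcluster (fun j => ns (ms j)) hmsT xh' zh' yh' hwx' hwz' hwy'
      obtain ⟨hxeq, hzeq, hyeq⟩ := huniq xh' zh' yh' hsad' hAxz' xh zh yh hsadh hAxzh
        (fun j => ns (ms j)) hmsT hwx' hwz' hwy' ms₀ hms₀T hwx0 hwz0 hwy0
      refine ⟨ms, ?_⟩
      have h1 := hwy' w
      rw [hyeq] at h1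
      exact h1
    exact (tendsto_add_atTop_iff_nat 2).mp hshift
end
end

section
/- Assume h = 0, M₁ᵏ ∈ S₊(H), M₁ᵏ ⪰ M₁^{k+1}, M₂ᵏ ∈ S₊(G), 2M₂^{k+1} ⪰ M₂ᵏ ⪰ M₂^{k+1} for all k ≥ 0, let (xᵏ, zᵏ, yᵏ)_{k≥0} be the sequence generated by the variable-metric ADMM algorithm, and let (x*, z*, y*) be a saddle point of the Lagrangian l. Then for all k ≥ 1: (1/2)‖x^{k+1} − x*‖²_{M₁^{k+1}} + (1/2)‖z^{k+1} − Ax*‖²_{M₂^{k+1} + c·Id} + (1/(2c))‖y^{k+1} − y*‖² + (1/2)‖z^{k+1} − zᵏ‖²_{M₂ᵏ} ≤ (1/2)‖xᵏ − x*‖²_{M₁ᵏ} + (1/2)‖zᵏ − Ax*‖²_{M₂ᵏ + c·Id} + (1/(2c))‖yᵏ − y*‖² + (1/2)‖zᵏ − z^{k−1}‖²_{M₂^{k−1}} − (1/2)‖x^{k+1} − xᵏ‖²_{M₁ᵏ} − (c/2)‖z^{k+1} − zᵏ‖² − (1/(2c))‖y^{k+1} − yᵏ‖². -/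
open scoped InnerProductSpace
open Filter

noncomputable section

section AuxADMM

variable {E F : Type*} [NormedAddCommGroup E] [InnerProductSpace ℝ E]
  [NormedAddCommGroup F] [InnerProductSpace ℝ F]

private lemma aux_t' (a b : ℝ) (h : ∀ t : ℝ, 0 < t → t ≤ 1 → 0 ≤ a + t * b) : 0 ≤ a := by
  by_contra hn
  push_neg at hn
  rcases le_or_gt b 0 with hb | hb
  · have := h 1 one_pos le_rfl; linarith
  · have ht0 : 0 < -a / (2 * b) := div_pos (by linarith) (by linarith)
    have h1 : 0 < min 1 (-a / (2 * b)) := lt_min one_pos ht0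
    have h3 := h _ h1 (min_le_left _ _)
    have h4 : min 1 (-a / (2 * b)) ≤ -a / (2 * b) := min_le_right _ _
    have h5 : min 1 (-a / (2 * b)) * b ≤ (-a / (2 * b)) * b := by nlinarith
    have h6 : (-a / (2 * b)) * b = -a / 2 := by field_simp
    linarith

private lemma tp (U : E →L[ℝ] E) (hU : ∀ x y : E, ⟪U x, y⟫_ℝ = ⟪x, U y⟫_ℝ) (s b d : E) :
    2 * ⟪s - b, U (b - d)⟫_ℝ
      = ⟪d - s, U (d - s)⟫_ℝ - ⟪b - s, U (b - s)⟫_ℝ - ⟪b - d, U (b - d)⟫_ℝ := by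
  have hsym : ∀ p q : E, ⟪p, U q⟫_ℝ = ⟪q, U p⟫_ℝ := fun p q => by
    rw [← hU]; exact real_inner_comm _ _
  simp only [map_sub, inner_sub_left, inner_sub_right]
  linarith [hsym s b, hsym s d, hsym b d]

private lemma tpn (s b d : F) :
    2 * ⟪s - b, b - d⟫_ℝ = ‖d - s‖ ^ 2 - ‖b - s‖ ^ 2 - ‖b - d‖ ^ 2 := by
  simp only [← real_inner_self_eq_norm_sq, inner_sub_left, inner_sub_right]
  linarith [real_inner_comm s b, real_inner_comm s d, real_inner_comm b d]

private lemma sq_expand' (U : E →L[ℝ] E) (hU : ∀ x y : E, ⟪U x, y⟫_ℝ = ⟪x, U y⟫_ℝ)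
    (p d : E) (t : ℝ) :
    ⟪p + t • d, U (p + t • d)⟫_ℝ
      = ⟪p, U p⟫_ℝ + t * (2 * ⟪d, U p⟫_ℝ) + t ^ 2 * ⟪d, U d⟫_ℝ := by
  have hsym : ∀ x y : E, ⟪x, U y⟫_ℝ = ⟪y, U x⟫_ℝ := fun x y => by
    rw [← hU]; exact real_inner_comm _ _
  simp only [map_add, map_smul, inner_add_left, inner_add_right,
    real_inner_smul_left, real_inner_smul_right]
  linear_combination t * hsym p d

private lemma norm_expand' (v w : F) (t : ℝ) :
    ‖v + t • w‖ ^ 2 = ‖v‖ ^ 2 + t * (2 * ⟪w, v⟫_ℝ) + t ^ 2 * ‖w‖ ^ 2 := by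
  rw [norm_add_sq_real, real_inner_smul_right, norm_smul, real_inner_comm v w]
  simp [mul_pow, sq_abs]; ring

private lemma psd_cs (U : E →L[ℝ] E) (hU : IsSplusOp U) (a b : E) :
    2 * ⟪a, U b⟫_ℝ ≤ ⟪a, U a⟫_ℝ + ⟪b, U b⟫_ℝ := by
  have hsym : ∀ p q : E, ⟪p, U q⟫_ℝ = ⟪q, U p⟫_ℝ := fun p q => by
    rw [← hU.1]; exact real_inner_comm _ _
  have h := hU.2 (a - b)
  simp only [map_sub, inner_sub_left, inner_sub_right] at h
  linarith [hsym a b]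

private lemma real_of_add_le {a : EReal} (hb : a ≠ ⊥) {q R : ℝ}
    (h : a + (q : EReal) ≤ (R : EReal)) : ∃ s : ℝ, a = (s : EReal) := by
  have ht : a ≠ ⊤ := by
    rintro rfl
    rw [EReal.top_add_coe] at h
    exact absurd h (EReal.coe_lt_top R).not_ge
  exact ⟨a.toReal, (EReal.coe_toReal ht hb).symm⟩

private lemma sum3_real {a b : EReal} (hab : a ≠ ⊥) (hbb : b ≠ ⊥) (r R : ℝ)
    (h : a + b + (r : EReal) ≤ (R : EReal)) :
    ∃ p q : ℝ, a = (p : EReal) ∧ b = (q : EReal) := by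
  have habne : a + b ≠ ⊥ := by
    intro hT
    rcases EReal.add_eq_bot_iff.mp hT with h' | h' <;> [exact hab h'; exact hbb h']
  obtain ⟨s, hs⟩ := real_of_add_le habne h
  have ha : a ≠ ⊤ := by
    rintro rfl
    rw [EReal.top_add_of_ne_bot hbb] at hs
    exact absurd hs.symm (by simp)
  have hb : b ≠ ⊤ := by
    rintro rfl
    rw [EReal.add_top_of_ne_bot hab] at hs
    exact absurd hs.symm (by simp)
  exact ⟨a.toReal, b.toReal, (EReal.coe_toReal ha hab).symm, (EReal.coe_toReal hb hbb).symm⟩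

private lemma subgrad (f : E → EReal) (hfc : ERealConvex f) (m u : E) (fm fu : ℝ)
    (hm : f m = (fm : EReal)) (hu : f u = (fu : EReal))
    (Q : E → ℝ) (L B : ℝ)
    (hQ : ∀ t : ℝ, 0 < t → t ≤ 1 → Q (m + t • (u - m)) = Q m + t * L + t ^ 2 * B)
    (hmin : ∀ v : E, f m + ((Q m : ℝ) : EReal) ≤ f v + ((Q v : ℝ) : EReal)) :
    0 ≤ (fu - fm) + L := by
  apply aux_t' _ B
  intro t ht0 ht1
  have hconv := hfc m u (1 - t) t (by linarith) ht0.le (by ring)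
  rw [hm, hu] at hconv
  have hpt : (1 - t) • m + t • u = m + t • (u - m) := by module
  rw [hpt] at hconv
  have hconv' : f (m + t • (u - m)) ≤ (((1 - t) * fm + t * fu : ℝ) : EReal) := by
    refine hconv.trans_eq ?_
    rw [EReal.coe_add, EReal.coe_mul, EReal.coe_mul]
  have h2 := hmin (m + t • (u - m))
  rw [hm] at h2
  have h3 : ((fm + Q m : ℝ) : EReal)
      ≤ (((1 - t) * fm + t * fu + Q (m + t • (u - m)) : ℝ) : EReal) := by
    calc ((fm + Q m : ℝ) : EReal) = (fm : EReal) + ((Q m : ℝ) : EReal) := EReal.coe_add _ _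
      _ ≤ f (m + t • (u - m)) + ((Q (m + t • (u - m)) : ℝ) : EReal) := h2
      _ ≤ (((1 - t) * fm + t * fu : ℝ) : EReal) + ((Q (m + t • (u - m)) : ℝ) : EReal) :=
          add_le_add_left hconv' _
      _ = _ := (EReal.coe_add _ _).symm
  have h4 : fm + Q m ≤ (1 - t) * fm + t * fu + Q (m + t • (u - m)) :=
    EReal.coe_le_coe_iff.mp h3
  rw [hQ t ht0 ht1] at h4
  have h5 : 0 ≤ t * ((fu - fm + L) + t * B) := by nlinarith
  nlinarith

private lemma xopt {f : E → EReal} (hfc : ERealConvex f) (A : E →L[ℝ] F) {c : ℝ}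
    {M : E →L[ℝ] E} (hM : IsSplusOp M) {xk m : E} {zk yk : F}
    (hmin : IsXUpdate f A c M xk zk yk m) {u : E} {fm fu : ℝ}
    (hm : f m = (fm : EReal)) (hu : f u = (fu : EReal)) :
    0 ≤ (fu - fm) +
      (c * ⟪A (u - m), A m - zk + c⁻¹ • yk⟫_ℝ + ⟪u - m, M (m - xk)⟫_ℝ) := by
  apply subgrad f hfc m u fm fu hm hu
    (fun u' => (c/2) * ‖A u' - zk + c⁻¹ • yk‖ ^ 2 + (1/2) * opSq M (u' - xk))
    _ ((c/2) * ‖A (u - m)‖ ^ 2 + (1/2) * ⟪u - m, M (u - m)⟫_ℝ)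
  · intro t ht0 ht1
    have e1 : A (m + t • (u - m)) - zk + c⁻¹ • yk
        = (A m - zk + c⁻¹ • yk) + t • (A (u - m)) := by
      rw [map_add, map_smul]; abel
    have e2 : (m + t • (u - m)) - xk = (m - xk) + t • (u - m) := by abel
    simp only [e1, e2, norm_expand', sq_expand' M hM.1, opSq]
    ring
  · exact hmin

private lemma zopt {g : F → EReal} (hgc : ERealConvex g) {c : ℝ}
    {M : F →L[ℝ] F} (hM : IsSplusOp M) {Ax zk yk m : F}
    (hmin : IsZUpdate g c M Ax zk yk m) {u : F} {gm gu : ℝ}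
    (hm : g m = (gm : EReal)) (hu : g u = (gu : EReal)) :
    0 ≤ (gu - gm) +
      (-(c * ⟪u - m, Ax - m + c⁻¹ • yk⟫_ℝ) + ⟪u - m, M (m - zk)⟫_ℝ) := by
  apply subgrad g hgc m u gm gu hm hu
    (fun w => (c/2) * ‖Ax - w + c⁻¹ • yk‖ ^ 2 + (1/2) * opSq M (w - zk))
    _ ((c/2) * ‖u - m‖ ^ 2 + (1/2) * ⟪u - m, M (u - m)⟫_ℝ)
  · intro t ht0 ht1
    have e1 : Ax - (m + t • (u - m)) + c⁻¹ • yk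
        = (Ax - m + c⁻¹ • yk) + t • (-(u - m)) := by
      rw [smul_neg]; abel
    have e2 : (m + t • (u - m)) - zk = (m - zk) + t • (u - m) := by abel
    simp only [e1, e2, norm_expand', sq_expand' M hM.1, opSq, inner_neg_left, norm_neg]
    ring
  · exact hmin

end AuxADMM

theorem stmt19 {H G : Type*}
    [NormedAddCommGroup H] [InnerProductSpace ℝ H] [CompleteSpace H]
    [NormedAddCommGroup G] [InnerProductSpace ℝ G] [CompleteSpace G]
    (f : H → EReal) (g : G → EReal)
    (hfp : ERealProper f) (hfc : ERealConvex f) (hfl : LowerSemicontinuous f)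
    (hgp : ERealProper g) (hgc : ERealConvex g) (hgl : LowerSemicontinuous g)
    (A : H →L[ℝ] G) (c : ℝ) (hc : 0 < c)
    (M₁ : ℕ → (H →L[ℝ] H)) (M₂ : ℕ → (G →L[ℝ] G))
    (hM₁ : ∀ k : ℕ, IsSplusOp (M₁ k)) (hM₂ : ∀ k : ℕ, IsSplusOp (M₂ k))
    (hM₁mono : ∀ k : ℕ, opLE (M₁ k) (M₁ (k+1)))
    (x : ℕ → H) (z y : ℕ → G)
    (hx : ∀ k : ℕ, IsXUpdate f A c (M₁ k) (x k) (z k) (y k) (x (k+1)))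
    (hz : ∀ k : ℕ, IsZUpdate g c (M₂ k) (A (x (k+1))) (z k) (y k) (z (k+1)))
    (hy : ∀ k : ℕ, y (k+1) = y k + c • (A (x (k+1)) - z (k+1)))
    (hM₂chain : ∀ k : ℕ, opLE ((2 : ℝ) • M₂ (k+1)) (M₂ k) ∧ opLE (M₂ k) (M₂ (k+1)))
    (xs : H) (zs ys : G)
    (hsp : IsSaddle (Lagr f g A) xs zs ys) :
    ∀ k : ℕ, 1 ≤ k →
      (1/2) * opSq (M₁ (k+1)) (x (k+1) - xs)
        + (1/2) * opSq (M₂ (k+1) + c • ContinuousLinearMap.id ℝ G) (z (k+1) - A xs)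
        + (1/(2*c)) * ‖y (k+1) - ys‖ ^ 2
        + (1/2) * opSq (M₂ k) (z (k+1) - z k) ≤
      (1/2) * opSq (M₁ k) (x k - xs)
        + (1/2) * opSq (M₂ k + c • ContinuousLinearMap.id ℝ G) (z k - A xs)
        + (1/(2*c)) * ‖y k - ys‖ ^ 2
        + (1/2) * opSq (M₂ (k-1)) (z k - z (k-1))
        - (1/2) * opSq (M₁ k) (x (k+1) - x k)
        - (c/2) * ‖z (k+1) - z k‖ ^ 2
        - (1/(2*c)) * ‖y (k+1) - y k‖ ^ 2 := by
  intro k hk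
  obtain ⟨j, rfl⟩ : ∃ j, k = j + 1 := ⟨k - 1, (Nat.succ_pred_eq_of_pos hk).symm⟩
  simp only [Nat.add_sub_cancel]
  have hcne : c ≠ 0 := hc.ne'
  -- seeds of realness
  obtain ⟨x₀, hx₀⟩ := hfp.2
  obtain ⟨r₀, hr₀⟩ : ∃ r : ℝ, f x₀ = (r : EReal) :=
    ⟨(f x₀).toReal, (EReal.coe_toReal hx₀ (hfp.1 x₀)).symm⟩
  obtain ⟨z₀, hz₀⟩ := hgp.2
  obtain ⟨s₀, hs₀⟩ : ∃ s : ℝ, g z₀ = (s : EReal) :=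
    ⟨(g z₀).toReal, (EReal.coe_toReal hz₀ (hgp.1 z₀)).symm⟩
  -- realness of iterates
  obtain ⟨fx1, hfx1⟩ : ∃ r : ℝ, f (x (j+1+1)) = (r : EReal) := by
    have h := hx (j+1) x₀
    rw [hr₀, ← EReal.coe_add] at h
    exact real_of_add_le (hfp.1 _) h
  obtain ⟨gz1, hgz1⟩ : ∃ r : ℝ, g (z (j+1+1)) = (r : EReal) := by
    have h := hz (j+1) z₀
    rw [hs₀, ← EReal.coe_add] at h
    exact real_of_add_le (hgp.1 _) h
  obtain ⟨gzk, hgzk⟩ : ∃ r : ℝ, g (z (j+1)) = (r : EReal) := by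
    have h := hz j z₀
    rw [hs₀, ← EReal.coe_add] at h
    exact real_of_add_le (hgp.1 _) h
  -- saddle point: realness at (xs, zs)
  obtain ⟨fxs, gzs, hfxs, hgzs⟩ :
      ∃ p q : ℝ, f xs = (p : EReal) ∧ g zs = (q : EReal) := by
    have h2 := (hsp x₀ z₀ ys).2
    simp only [Lagr] at h2
    rw [hr₀, hs₀, ← EReal.coe_add, ← EReal.coe_add] at h2
    exact sum3_real (hfp.1 xs) (hgp.1 zs) _ _ h2
  -- A xs = zs
  have hAzs : A xs = zs := by
    have h1 := (hsp x₀ z₀ (ys + (A xs - zs))).1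
    simp only [Lagr] at h1
    rw [hfxs, hgzs] at h1
    norm_cast at h1
    rw [inner_add_left] at h1
    have h1' := h1
    have h2' : ⟪A xs - zs, A xs - zs⟫_ℝ ≤ 0 := by linarith
    exact sub_eq_zero.mp (real_inner_self_nonpos.mp h2')
  subst hAzs
  -- key saddle inequality at the iterates
  have hF3 : fxs + gzs ≤ fx1 + gz1 + ⟪ys, A (x (j+1+1)) - z (j+1+1)⟫_ℝ := by
    have h := (hsp (x (j+1+1)) (z (j+1+1)) ys).2
    simp only [Lagr] at h
    rw [hfxs, hgzs, hfx1, hgz1, sub_self, inner_zero_right] at h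
    norm_cast at h
    linarith
  -- vector identities from the multiplier update
  have hyrec := hy (j+1)
  have hdyz : A (x (j+1+1)) - z (j+1+1) = c⁻¹ • (y (j+1+1) - y (j+1)) := by
    rw [hyrec, add_sub_cancel_left, smul_smul, inv_mul_cancel₀ hcne, one_smul]
  have hcv1 : c • (A (x (j+1+1)) - z (j+1+1) + c⁻¹ • y (j+1)) = y (j+1+1) := by
    rw [smul_add, smul_smul, mul_inv_cancel₀ hcne, one_smul, hyrec]; module
  have hcv1j : c • (A (x (j+1)) - z (j+1) + c⁻¹ • y j) = y (j+1) := by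
    rw [smul_add, smul_smul, mul_inv_cancel₀ hcne, one_smul, hy j]; module
  have hcv2 : c • (A (x (j+1+1)) - z (j+1) + c⁻¹ • y (j+1))
      = y (j+1+1) + c • (z (j+1+1) - z (j+1)) := by
    rw [smul_add, smul_smul, mul_inv_cancel₀ hcne, one_smul, hyrec]; module
  -- optimality inequalities
  have hF1 := xopt hfc A (hM₁ (j+1)) (hx (j+1)) hfx1 hfxs
  have hF2 := zopt hgc (hM₂ (j+1)) (hz (j+1)) hgz1 hgzs
  have hF4 := zopt hgc (hM₂ (j+1)) (hz (j+1)) hgz1 hgzk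
  have hF5 := zopt hgc (hM₂ j) (hz j) hgzk hgz1
  -- rewriting identities
  have E1 : c * ⟪A (xs - x (j+1+1)), A (x (j+1+1)) - z (j+1) + c⁻¹ • y (j+1)⟫_ℝ
      = ⟪A xs - z (j+1+1), y (j+1+1)⟫_ℝ
        - (1/c) * ⟪y (j+1+1) - y (j+1), y (j+1+1)⟫_ℝ
        + c * ⟪A xs - z (j+1+1), z (j+1+1) - z (j+1)⟫_ℝ
        - ⟪z (j+1+1) - z (j+1), y (j+1+1) - y (j+1)⟫_ℝ := by
    have hd : A xs - A (x (j+1+1))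
        = (A xs - z (j+1+1)) - c⁻¹ • (y (j+1+1) - y (j+1)) := by
      rw [← hdyz]; abel
    rw [map_sub, ← real_inner_smul_right, hcv2, hd, inner_sub_left, inner_add_right,
      inner_add_right]
    simp only [real_inner_smul_left, real_inner_smul_right]
    rw [real_inner_comm (z (j+1+1) - z (j+1)) (y (j+1+1) - y (j+1))]
    field_simp
    ring
  have E2 : c * ⟪A xs - z (j+1+1), A (x (j+1+1)) - z (j+1+1) + c⁻¹ • y (j+1)⟫_ℝ
      = ⟪A xs - z (j+1+1), y (j+1+1)⟫_ℝ := by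
    rw [← real_inner_smul_right, hcv1]
  have E3 : ⟪ys, A (x (j+1+1)) - z (j+1+1)⟫_ℝ
      = (1/c) * ⟪y (j+1+1) - y (j+1), ys⟫_ℝ := by
    rw [hdyz, real_inner_smul_right, real_inner_comm (y (j+1+1) - y (j+1)) ys, one_div]
  have E4 : c * ⟪z (j+1) - z (j+1+1), A (x (j+1+1)) - z (j+1+1) + c⁻¹ • y (j+1)⟫_ℝ
      = -⟪z (j+1+1) - z (j+1), y (j+1+1)⟫_ℝ := by
    rw [← real_inner_smul_right, hcv1, ← neg_sub (z (j+1+1)) (z (j+1)), inner_neg_left]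
  have E4b : ⟪z (j+1) - z (j+1+1), (M₂ (j+1)) (z (j+1+1) - z (j+1))⟫_ℝ
      = -⟪z (j+1+1) - z (j+1), (M₂ (j+1)) (z (j+1+1) - z (j+1))⟫_ℝ := by
    rw [← neg_sub (z (j+1+1)) (z (j+1)), inner_neg_left]
  have E5 : c * ⟪z (j+1+1) - z (j+1), A (x (j+1)) - z (j+1) + c⁻¹ • y j⟫_ℝ
      = ⟪z (j+1+1) - z (j+1), y (j+1)⟫_ℝ := by
    rw [← real_inner_smul_right, hcv1j]
  have Z1 : ⟪z (j+1+1) - z (j+1), y (j+1+1) - y (j+1)⟫_ℝ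
      = ⟪z (j+1+1) - z (j+1), y (j+1+1)⟫_ℝ - ⟪z (j+1+1) - z (j+1), y (j+1)⟫_ℝ :=
    inner_sub_right _ _ _
  have Y2 : (1/c) * ⟪y (j+1+1) - y (j+1), ys - y (j+1+1)⟫_ℝ
      = (1/c) * ⟪y (j+1+1) - y (j+1), ys⟫_ℝ
        - (1/c) * ⟪y (j+1+1) - y (j+1), y (j+1+1)⟫_ℝ := by
    rw [inner_sub_right]; ring
  have TY : (1/c) * ⟪y (j+1+1) - y (j+1), ys - y (j+1+1)⟫_ℝ
      = (1/(2*c)) * ‖y (j+1) - ys‖ ^ 2 - (1/(2*c)) * ‖y (j+1+1) - ys‖ ^ 2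
        - (1/(2*c)) * ‖y (j+1+1) - y (j+1)‖ ^ 2 := by
    have h := tpn ys (y (j+1+1)) (y (j+1))
    have h2 := real_inner_comm (ys - y (j+1+1)) (y (j+1+1) - y (j+1))
    linear_combination (1/(2*c)) * h + (1/c) * h2
  have TZ : c * ⟪A xs - z (j+1+1), z (j+1+1) - z (j+1)⟫_ℝ
      = (c/2) * ‖z (j+1) - A xs‖ ^ 2 - (c/2) * ‖z (j+1+1) - A xs‖ ^ 2
        - (c/2) * ‖z (j+1+1) - z (j+1)‖ ^ 2 := by
    linear_combination (c/2) * tpn (A xs) (z (j+1+1)) (z (j+1))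
  have T1 := tp (M₁ (j+1)) (hM₁ (j+1)).1 xs (x (j+1+1)) (x (j+1))
  have T2 := tp (M₂ (j+1)) (hM₂ (j+1)).1 (A xs) (z (j+1+1)) (z (j+1))
  have C1 := psd_cs (M₂ j) (hM₂ j) (z (j+1+1) - z (j+1)) (z (j+1) - z j)
  have C2 : ⟪z (j+1+1) - z (j+1), (M₂ j) (z (j+1+1) - z (j+1))⟫_ℝ
      ≤ 2 * ⟪z (j+1+1) - z (j+1), (M₂ (j+1)) (z (j+1+1) - z (j+1))⟫_ℝ := by
    have h := (hM₂chain j).1 (z (j+1+1) - z (j+1))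
    simpa [ContinuousLinearMap.smul_apply, real_inner_smul_right] using h
  have C3 := hM₁mono (j+1) (x (j+1+1) - xs)
  have C4 := (hM₂chain (j+1)).2 (z (j+1+1) - A xs)
  simp only [opSq, ContinuousLinearMap.add_apply, ContinuousLinearMap.smul_apply,
    ContinuousLinearMap.id_apply, inner_add_right, real_inner_smul_right,
    real_inner_self_eq_norm_sq]
  set aX1 := ⟪A (xs - x (j+1+1)), A (x (j+1+1)) - z (j+1) + c⁻¹ • y (j+1)⟫_ℝ with haX1
  set aX2 := ⟪A xs - z (j+1+1), A (x (j+1+1)) - z (j+1+1) + c⁻¹ • y (j+1)⟫_ℝ with haX2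
  set aX4 := ⟪z (j+1) - z (j+1+1), A (x (j+1+1)) - z (j+1+1) + c⁻¹ • y (j+1)⟫_ℝ with haX4
  set aX5 := ⟪z (j+1+1) - z (j+1), A (x (j+1)) - z (j+1) + c⁻¹ • y j⟫_ℝ with haX5
  set aW1 := ⟪A xs - z (j+1+1), y (j+1+1)⟫_ℝ with haW1
  set aQ1 := ⟪y (j+1+1) - y (j+1), y (j+1+1)⟫_ℝ with haQ1
  set aQ2 := ⟪y (j+1+1) - y (j+1), ys⟫_ℝ with haQ2
  set aW2 := ⟪A xs - z (j+1+1), z (j+1+1) - z (j+1)⟫_ℝ with haW2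
  set aZc := ⟪z (j+1+1) - z (j+1), y (j+1+1) - y (j+1)⟫_ℝ with haZc
  set aP1 := ⟪xs - x (j+1+1), (M₁ (j+1)) (x (j+1+1) - x (j+1))⟫_ℝ with haP1
  set aP2 := ⟪A xs - z (j+1+1), (M₂ (j+1)) (z (j+1+1) - z (j+1))⟫_ℝ with haP2
  set aP4 := ⟪z (j+1) - z (j+1+1), (M₂ (j+1)) (z (j+1+1) - z (j+1))⟫_ℝ with haP4
  set aV1 := ⟪z (j+1+1) - z (j+1), y (j+1+1)⟫_ℝ with haV1
  set aV2 := ⟪z (j+1+1) - z (j+1), y (j+1)⟫_ℝ with haV2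
  set aD2 := ⟪z (j+1+1) - z (j+1), (M₂ (j+1)) (z (j+1+1) - z (j+1))⟫_ℝ with haD2
  set aD2j := ⟪z (j+1+1) - z (j+1), (M₂ j) (z (j+1+1) - z (j+1))⟫_ℝ with haD2j
  set aD0j := ⟪z (j+1) - z j, (M₂ j) (z (j+1) - z j)⟫_ℝ with haD0j
  set aP5 := ⟪z (j+1+1) - z (j+1), (M₂ j) (z (j+1) - z j)⟫_ℝ with haP5
  set aYm := ⟪y (j+1+1) - y (j+1), ys - y (j+1+1)⟫_ℝ with haYm
  set aS3 := ⟪ys, A (x (j+1+1)) - z (j+1+1)⟫_ℝ with haS3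
  set aA1p := ⟪x (j+1+1) - xs, (M₁ (j+1+1)) (x (j+1+1) - xs)⟫_ℝ with haA1p
  set aA1 := ⟪x (j+1+1) - xs, (M₁ (j+1)) (x (j+1+1) - xs)⟫_ℝ with haA1
  set aA0 := ⟪x (j+1) - xs, (M₁ (j+1)) (x (j+1) - xs)⟫_ℝ with haA0
  set aAdx := ⟪x (j+1+1) - x (j+1), (M₁ (j+1)) (x (j+1+1) - x (j+1))⟫_ℝ with haAdx
  set aB1p := ⟪z (j+1+1) - A xs, (M₂ (j+1+1)) (z (j+1+1) - A xs)⟫_ℝ with haB1p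
  set aB1m := ⟪z (j+1+1) - A xs, (M₂ (j+1)) (z (j+1+1) - A xs)⟫_ℝ with haB1m
  set aB0m := ⟪z (j+1) - A xs, (M₂ (j+1)) (z (j+1) - A xs)⟫_ℝ with haB0m
  set aB1 := ‖z (j+1+1) - A xs‖^2 with haB1
  set aB0 := ‖z (j+1) - A xs‖^2 with haB0
  set aBdz := ‖z (j+1+1) - z (j+1)‖^2 with haBdz
  set aEk1 := ‖y (j+1+1) - ys‖^2 with haEk1
  set aEk0 := ‖y (j+1) - ys‖^2 with haEk0
  set aEdy := ‖y (j+1+1) - y (j+1)‖^2 with haEdy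
  linarith [hF1, hF2, hF3, hF4, hF5, E1, E2, E3, E4, E4b, E5, Z1, Y2, TY, TZ, T1, T2, C1, C2, C3, C4]
end
end
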